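/- arXiv:2411.02705 — 8 statements merged into one kernel-verified Lean document; each statement's English description precedes it below -/
import Mathlib

section
/- Let d ≥ 0 be an integer, let X be a finite graph with maximum degree at most d, let D = d·|V(X)| − Σ_{x ∈ V(X)} deg_X(x), and let Y be a D-regular finite graph. Then there exists a d-regular graph Z on the vertex set V(X) × V(Y) such that: (1) the projection φ(x,y) = y is a graph homomorphism that may collapse edges (adjacent vertices map to adjacent or equal vertices); (2) for every y ∈ V(Y), the subgraph induced on φ^{-1}(y) is isomorphic to X; (3) for every edge y₁y₂ of Y, there is exactly one edge of Z mapping onto {y₁, y₂} under φ. -/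
private def fiberEquiv {α : Type*} {n : α → ℕ} (a : α) :
    {p : (Σ x, Fin (n x)) // p.1 = a} ≃ Fin (n a) where
  toFun p := Fin.cast (by rw [p.2]) p.1.2
  invFun i := ⟨⟨a, i⟩, rfl⟩
  left_inv := by rintro ⟨⟨x, i⟩, rfl⟩; rfl
  right_inv i := rfl

/-- Extension Lemma: any graph `X` of maximum degree at most `d` extends to a
`d`-regular graph `Z = X ⋊ Y`, where `Y` is any `D`-regular graph and
`D = d|X| - Σ deg_X(x)` is the defect. -/
theorem stmt_4 (d : ℕ) {α β : Type*} [Fintype α] [Fintype β]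
    (X : SimpleGraph α) (Y : SimpleGraph β)
    (hX : ∀ x, (X.neighborSet x).ncard ≤ d)
    (D : ℕ) (hD : D = d * Fintype.card α - ∑ x : α, (X.neighborSet x).ncard)
    (hY : ∀ y, (Y.neighborSet y).ncard = D) :
    ∃ Z : SimpleGraph (α × β),
      (∀ v, (Z.neighborSet v).ncard = d) ∧
      (∀ z z' : α × β, Z.Adj z z' → Y.Adj z.2 z'.2 ∨ z.2 = z'.2) ∧
      (∀ y : β, Nonempty ((Z.induce {z : α × β | z.2 = y}) ≃g X)) ∧
      (∀ y₁ y₂ : β, Y.Adj y₁ y₂ →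
        ∃! e : Sym2 (α × β), e ∈ Z.edgeSet ∧ Sym2.map Prod.snd e = s(y₁, y₂)) := by
  classical
  set deg : α → ℕ := fun x => (X.neighborSet x).ncard with hdeg
  have hsum : ∑ x : α, (d - deg x) = D := by
    rw [hD, Finset.sum_tsub_distrib _ (fun x _ => hX x)]
    simp [mul_comm]
    rfl
  have hcard : ∀ y : β,
      Fintype.card (Y.neighborSet y) = Fintype.card (Σ x : α, Fin (d - deg x)) := by
    intro y
    rw [Fintype.card_sigma]
    simp only [Fintype.card_fin]
    rw [hsum, ← hY y, Set.ncard_eq_toFinset_card', Set.toFinset_card]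
  let e : ∀ y : β, (Y.neighborSet y) ≃ (Σ x : α, Fin (d - deg x)) :=
    fun y => Fintype.equivOfCardEq (hcard y)
  let f : ∀ y y' : β, Y.Adj y y' → α := fun y y' h => (e y ⟨y', h⟩).1
  -- counting the slots
  have hS : ∀ (y : β) (x : α),
      {y' : β | ∃ h : Y.Adj y y', f y y' h = x}.ncard = d - deg x := by
    intro y x
    have h1 : {y' : β | ∃ h : Y.Adj y y', f y y' h = x}
        = Subtype.val '' {p : Y.neighborSet y | (e y p).1 = x} := by
      ext y'
      simp only [Set.mem_image, Set.mem_setOf_eq]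
      constructor
      · rintro ⟨h, hf⟩; exact ⟨⟨y', h⟩, hf, rfl⟩
      · rintro ⟨⟨z, hz⟩, hf, rfl⟩; exact ⟨hz, hf⟩
    rw [h1, Set.ncard_image_of_injective _ Subtype.val_injective,
      ← Nat.card_coe_set_eq]
    have e2 : {p : Y.neighborSet y | (e y p).1 = x} ≃ Fin (d - deg x) :=
      ((e y).subtypeEquiv (fun p => Iff.rfl)).trans (fiberEquiv x)
    rw [Nat.card_congr e2]
    simp
  let Zadj : α × β → α × β → Prop := fun z z' =>
    (z.2 = z'.2 ∧ X.Adj z.1 z'.1) ∨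
      ∃ h : Y.Adj z.2 z'.2, z.1 = f z.2 z'.2 h ∧ z'.1 = f z'.2 z.2 h.symm
  have hsymm : Symmetric Zadj := by
    rintro ⟨x₁, y₁⟩ ⟨x₂, y₂⟩ (⟨h1, h2⟩ | ⟨h, h1, h2⟩)
    · exact Or.inl ⟨h1.symm, h2.symm⟩
    · exact Or.inr ⟨h.symm, h2, h1⟩
  have hirr : Irreflexive Zadj := by
    rintro ⟨x, y⟩ (⟨_, h⟩ | ⟨h, _⟩)
    · exact X.irrefl h
    · exact Y.irrefl h
  refine ⟨⟨Zadj, ⟨fun _ _ h => hsymm h⟩, ⟨fun z => hirr z⟩⟩, ?_, ?_, ?_, ?_⟩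
  · -- regularity
    rintro ⟨x, y⟩
    have hset : (SimpleGraph.mk Zadj ⟨fun _ _ h => hsymm h⟩ ⟨fun z => hirr z⟩).neighborSet (x, y) =
        ((fun x' => (x', y)) '' X.neighborSet x) ∪
        {z : α × β | ∃ h : Y.Adj y z.2, x = f y z.2 h ∧ z.1 = f z.2 y h.symm} := by
      ext ⟨x', y'⟩
      simp only [SimpleGraph.mem_neighborSet, Set.mem_union, Set.mem_image,
        Set.mem_setOf_eq, SimpleGraph.mem_neighborSet]
      constructor
      · rintro (⟨h1, h2⟩ | ⟨h, h1, h2⟩)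
        · exact Or.inl ⟨x', h2, congrArg (fun t => (x', t)) h1⟩
        · exact Or.inr ⟨h, h1, h2⟩
      · rintro (⟨a, ha, hae⟩ | ⟨h, h1, h2⟩)
        · obtain ⟨rfl, rfl⟩ := Prod.mk.injEq .. ▸ hae
          exact Or.inl ⟨rfl, ha⟩
        · exact Or.inr ⟨h, h1, h2⟩
    rw [hset]
    have hdisj : Disjoint ((fun x' => (x', y)) '' X.neighborSet x)
        {z : α × β | ∃ h : Y.Adj y z.2, x = f y z.2 h ∧ z.1 = f z.2 y h.symm} := by
      rw [Set.disjoint_left]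
      rintro ⟨x', y'⟩ ⟨a, _, hae⟩ ⟨h, _, _⟩
      obtain ⟨rfl, rfl⟩ := Prod.mk.injEq .. ▸ hae
      exact Y.irrefl h
    rw [Set.ncard_union_eq hdisj (Set.toFinite _) (Set.toFinite _)]
    have hcA : ((fun x' => (x', y)) '' X.neighborSet x).ncard = deg x := by
      rw [Set.ncard_image_of_injective]
      intro a b hab
      exact (Prod.mk.injEq .. ▸ hab).1
    have hcB : {z : α × β | ∃ h : Y.Adj y z.2, x = f y z.2 h ∧ z.1 = f z.2 y h.symm}.ncard
        = d - deg x := by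
      set B : Set (α × β) :=
        {z : α × β | ∃ h : Y.Adj y z.2, x = f y z.2 h ∧ z.1 = f z.2 y h.symm} with hB
      have himg : Prod.snd '' B = {y' : β | ∃ h : Y.Adj y y', f y y' h = x} := by
        ext y'
        simp only [Set.mem_image, Set.mem_setOf_eq, hB]
        constructor
        · rintro ⟨⟨x', y''⟩, ⟨h, h1, h2⟩, rfl⟩
          exact ⟨h, h1.symm⟩
        · rintro ⟨h, h1⟩
          exact ⟨(f y' y h.symm, y'), ⟨h, h1.symm, rfl⟩, rfl⟩
      have hinj : Set.InjOn Prod.snd B := by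
        rintro ⟨x₁, y₁⟩ ⟨h₁, hx₁, hx₁'⟩ ⟨x₂, y₂⟩ ⟨h₂, hx₂, hx₂'⟩ hyy
        simp only at hyy
        subst hyy
        exact Prod.ext (hx₁'.trans hx₂'.symm) rfl
      rw [← Set.ncard_image_of_injOn hinj, himg, hS]
    rw [hcA, hcB]
    have hxd : deg x ≤ d := hX x
    omega
  · -- weak morphism
    rintro ⟨x, y⟩ ⟨x', y'⟩ (⟨h, _⟩ | ⟨h, _⟩)
    · exact Or.inr h
    · exact Or.inl h
  · -- fibers
    intro y
    let eq1 : {z : α × β // z ∈ {z : α × β | z.2 = y}} ≃ α :=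
      { toFun := fun z => z.1.1
        invFun := fun x => ⟨(x, y), rfl⟩
        left_inv := by
          rintro ⟨⟨a, b⟩, hb⟩
          have : b = y := hb
          subst this
          rfl
        right_inv := fun x => rfl }
    refine ⟨⟨eq1, ?_⟩⟩
    rintro ⟨⟨x₁, y₁⟩, h₁⟩ ⟨⟨x₂, y₂⟩, h₂⟩
    have hy : y₁ = y₂ := (h₁ : y₁ = y).trans (h₂ : y₂ = y).symm
    show X.Adj x₁ x₂ ↔ Zadj (x₁, y₁) (x₂, y₂)
    constructor
    · intro hxx
      exact Or.inl ⟨hy, hxx⟩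
    · rintro (⟨_, hxx⟩ | ⟨hadj, _⟩)
      · exact hxx
      · exact absurd (hy ▸ hadj) Y.irrefl
  · -- unique edge over each Y-edge
    intro y₁ y₂ h
    refine ⟨s((f y₁ y₂ h, y₁), (f y₂ y₁ h.symm, y₂)), ⟨?_, ?_⟩, ?_⟩
    · exact Or.inr ⟨h, rfl, rfl⟩
    · rfl
    · rintro e' ⟨he, hm⟩
      induction e' using Sym2.ind with
      | _ z z' =>
        obtain ⟨x₁, b₁⟩ := z
        obtain ⟨x₂, b₂⟩ := z'
        rw [SimpleGraph.mem_edgeSet] at he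
        rw [Sym2.map_pair_eq, Sym2.eq_iff] at hm
        have hne : y₁ ≠ y₂ := h.ne
        rcases hm with ⟨hb₁, hb₂⟩ | ⟨hb₁, hb₂⟩
        · simp only at hb₁ hb₂
          subst hb₁; subst hb₂
          rcases he with ⟨h1, _⟩ | ⟨hadj, hx₁, hx₂⟩
          · exact absurd h1 hne
          · have e1 : x₁ = f b₁ b₂ hadj := hx₁
            have e2 : x₂ = f b₂ b₁ hadj.symm := hx₂
            rw [e1, e2]
        · simp only at hb₁ hb₂
          subst hb₁; subst hb₂
          rcases he with ⟨h1, _⟩ | ⟨hadj, hx₁, hx₂⟩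
          · exact absurd h1.symm hne
          · have e1 : x₁ = f b₁ b₂ hadj := hx₁
            have e2 : x₂ = f b₂ b₁ hadj.symm := hx₂
            rw [e1, e2, Sym2.eq_swap]
end

section
/- Let a, b ≥ 0 and g ≥ 3 be integers. There exists a weighted cycle of total weight g in which every vertex is incident to at most a light edges (weight 1) and at most b heavy edges (weight 2) if and only if one of the following holds: (1) a ≥ 2; (2) a = 1, b ≥ 2, and g ≥ 5; (3) a = 1, b = 1, g ≥ 6, and g ≡ 0 mod 3; (4) a = 0, b ≥ 2, g ≥ 6, and g ≡ 0 mod 2. -/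
/-- An `(a,b,g)`-wcycle: graphs `L` (light) and `H` (heavy) with disjoint edge
sets whose union is a cycle (connected and 2-regular), of total weight `g`,
in which every vertex is incident to at most `a` light and at most `b` heavy
edges. -/
def IsWCycle (n : ℕ) (L H : SimpleGraph (Fin n)) (a b g : ℕ) : Prop :=
  Disjoint L H ∧ (L ⊔ H).Connected ∧
  (∀ v, ((L ⊔ H).neighborSet v).ncard = 2) ∧
  (∀ v, (L.neighborSet v).ncard ≤ a) ∧
  (∀ v, (H.neighborSet v).ncard ≤ b) ∧
  L.edgeSet.ncard + 2 * H.edgeSet.ncard = g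

open SimpleGraph Finset

section Helpers

lemma ncard_ns {n : ℕ} (G : SimpleGraph (Fin n)) [DecidableRel G.Adj] (v : Fin n) :
    (G.neighborSet v).ncard = G.degree v := by
  rw [← card_neighborFinset_eq_degree, neighborFinset_def, Set.ncard_eq_toFinset_card']

lemma handshake {n : ℕ} (G : SimpleGraph (Fin n)) [DecidableRel G.Adj] :
    2 * G.edgeSet.ncard = ∑ v, (G.neighborSet v).ncard := by
  simp_rw [ncard_ns, sum_degrees_eq_twice_card_edges, Set.ncard_eq_toFinset_card']
  rfl

end Helpers

section Forward

lemma myForward {n a b g : ℕ} {L H : SimpleGraph (Fin n)} (h : IsWCycle n L H a b g) :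
    (2 ≤ a ∨
       (a = 1 ∧ 2 ≤ b ∧ 5 ≤ g) ∨
       (a = 1 ∧ b = 1 ∧ 6 ≤ g ∧ g % 3 = 0) ∨
       (a = 0 ∧ 2 ≤ b ∧ 6 ≤ g ∧ g % 2 = 0)) := by
  classical
  obtain ⟨hdisj, hconn, hdeg, hLa, hHb, hw⟩ := h
  -- disjointness of neighbor sets
  have hdisjnb : ∀ v, Disjoint (L.neighborSet v) (H.neighborSet v) := by
    intro v
    rw [Set.disjoint_left]
    intro w hwL hwH
    have : (L ⊓ H).Adj v w := ⟨hwL, hwH⟩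
    rw [disjoint_iff.mp hdisj] at this
    exact this
  have hadd : ∀ v, (L.neighborSet v).ncard + (H.neighborSet v).ncard = 2 := by
    intro v
    rw [← hdeg v]
    have : (L ⊔ H).neighborSet v = L.neighborSet v ∪ H.neighborSet v := by
      ext w; simp [SimpleGraph.mem_neighborSet, SimpleGraph.sup_adj]
    rw [this, Set.ncard_union_eq (hdisjnb v) (Set.toFinite _) (Set.toFinite _)]
  -- n ≥ 3
  have hn3 : 3 ≤ n := by
    obtain ⟨v⟩ := hconn.nonempty
    obtain ⟨x, y, hxy, hset⟩ := Set.ncard_eq_two.mp (hdeg v)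
    have hx : (L ⊔ H).Adj v x := by
      have : x ∈ (L ⊔ H).neighborSet v := by rw [hset]; simp
      exact this
    have hy : (L ⊔ H).Adj v y := by
      have : y ∈ (L ⊔ H).neighborSet v := by rw [hset]; simp
      exact this
    have := Fintype.two_lt_card_iff.mpr ⟨v, x, y, hx.ne, hy.ne, hxy⟩
    exact (by simpa using this : 2 < n)
  -- handshakes
  have hsL := handshake L
  have hsH := handshake H
  have hsumLH : 2 * L.edgeSet.ncard + 2 * H.edgeSet.ncard = 2 * n := by
    rw [hsL, hsH, ← Finset.sum_add_distrib]
    simp [hadd, Nat.mul_comm]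
  -- case analysis
  rcases Nat.lt_or_ge a 2 with ha2 | ha2
  · interval_cases a
    · -- a = 0
      have hL0 : ∀ v, (L.neighborSet v).ncard = 0 := fun v => Nat.le_zero.mp (hLa v)
      have hH2 : ∀ v, (H.neighborSet v).ncard = 2 := by
        intro v; have := hadd v; rw [hL0 v] at this; omega
      have hb2 : 2 ≤ b := by rw [← hH2 (Fin.mk 0 (by omega))]; exact hHb _
      have heL : 2 * L.edgeSet.ncard = 0 := by rw [hsL]; simp [hL0]
      refine Or.inr (Or.inr (Or.inr ⟨rfl, hb2, by omega, by omega⟩))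
    · -- a = 1
      rcases Nat.lt_or_ge b 2 with hb2 | hb2
      · interval_cases b
        · -- b = 0 : contradiction
          exfalso
          have v : Fin n := Fin.mk 0 (by omega)
          have := hadd v
          have h1 := hLa v
          have h2 := Nat.le_zero.mp (hHb v)
          omega
        · -- a = 1, b = 1
          have hexact : ∀ v, (L.neighborSet v).ncard = 1 ∧ (H.neighborSet v).ncard = 1 := by
            intro v
            have := hadd v; have h1 := hLa v; have h2 := hHb v; omega
          have heL : 2 * L.edgeSet.ncard = n := by
            rw [hsL]; simp [fun v => (hexact v).1]
          have heH : 2 * H.edgeSet.ncard = n := by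
            rw [hsH]; simp [fun v => (hexact v).2]
          refine Or.inr (Or.inr (Or.inl ⟨rfl, rfl, by omega, by omega⟩))
      · -- a = 1, b ≥ 2
        have hsLle : ∑ v, (L.neighborSet v).ncard ≤ n := by
          calc ∑ v, (L.neighborSet v).ncard ≤ ∑ _v : Fin n, 1 :=
                Finset.sum_le_sum (fun v _ => hLa v)
            _ = n := by simp
        have h2eL : 2 * L.edgeSet.ncard ≤ n := by rw [hsL]; exact hsLle
        exact Or.inr (Or.inl ⟨rfl, hb2, by omega⟩)
  · exact Or.inl ha2

end Forward

section Construct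

def subCycle (m : ℕ) (p : Fin (m+3) → Prop) : SimpleGraph (Fin (m+3)) where
  Adj u v := (SimpleGraph.cycleGraph (m+3)).Adj u v ∧ ((v = u + 1 ∧ p u) ∨ (u = v + 1 ∧ p v))
  symm := ⟨by intro u v ⟨h1, h2⟩; exact ⟨h1.symm, h2.symm⟩⟩
  loopless := ⟨by intro u ⟨h1, _⟩; exact (SimpleGraph.cycleGraph (m+3)).loopless.irrefl u h1⟩

variable {m : ℕ} (p : Fin (m+3) → Prop)

lemma fin_two_ne_zero : (2 : Fin (m+3)) ≠ 0 := by
  simp [Fin.ext_iff]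
  rw [Nat.mod_eq_of_lt (by omega)]; omega

lemma cyc_adj_or {u v : Fin (m+3)} (h : (SimpleGraph.cycleGraph (m+3)).Adj u v) :
    v = u + 1 ∨ u = v + 1 := by
  have h' := (SimpleGraph.cycleGraph_adj (n := m+1) (u := u) (v := v)).mp h
  rcases h' with h' | h'
  · right; open Fin.CommRing in linear_combination h'
  · left; open Fin.CommRing in linear_combination h'

lemma cyc_adj_of {u v : Fin (m+3)} (h : v = u + 1 ∨ u = v + 1) :
    (SimpleGraph.cycleGraph (m+3)).Adj u v := by
  rw [SimpleGraph.cycleGraph_adj (n := m+1)]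
  rcases h with rfl | rfl
  · right; open Fin.CommRing in ring
  · left; open Fin.CommRing in ring

lemma subCycle_adj_iff (u v : Fin (m+3)) :
    (subCycle m p).Adj u v ↔ ((v = u + 1 ∧ p u) ∨ (u = v + 1 ∧ p v)) := by
  constructor
  · exact fun h => h.2
  · intro h
    exact ⟨cyc_adj_of (by tauto), h⟩

instance [DecidablePred p] : DecidableRel (subCycle m p).Adj :=
  fun u v => decidable_of_iff _ (subCycle_adj_iff p u v).symm

lemma subCycle_disjoint : Disjoint (subCycle m p) (subCycle m (fun i => ¬ p i)) := by
  rw [disjoint_iff]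
  ext u v
  simp only [SimpleGraph.inf_adj, SimpleGraph.bot_adj, iff_false]
  rintro ⟨h1, h2⟩
  rw [subCycle_adj_iff] at h1 h2
  rcases h1 with ⟨rfl, hp⟩ | ⟨rfl, hp⟩ <;> rcases h2 with ⟨h, hq⟩ | ⟨h, hq⟩
  · exact hq hp
  · exact fin_two_ne_zero (by open Fin.CommRing in linear_combination -h)
  · exact fin_two_ne_zero (by open Fin.CommRing in linear_combination -h)
  · exact hq hp

lemma subCycle_sup : subCycle m p ⊔ subCycle m (fun i => ¬ p i) = SimpleGraph.cycleGraph (m+3) := by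
  ext u v
  simp only [SimpleGraph.sup_adj, subCycle_adj_iff]
  constructor
  · rintro (h | h)
    · exact ((subCycle_adj_iff p u v).mpr h).1
    · exact ((subCycle_adj_iff (fun i => ¬ p i) u v).mpr h).1
  · intro h
    have hor := cyc_adj_or h
    by_cases hp : p u <;> by_cases hq : p v <;> tauto

lemma subCycle_neighborSet [DecidablePred p] (v : Fin (m+3)) :
    (subCycle m p).neighborSet v =
      (if p v then {v + 1} else ∅) ∪ (if p (v-1) then {v - 1} else (∅ : Set (Fin (m+3)))) := by
  ext w
  simp only [SimpleGraph.mem_neighborSet, subCycle_adj_iff]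
  constructor
  · rintro (⟨rfl, hp⟩ | ⟨h, hq⟩)
    · simp [hp]
    · have hw : w = v - 1 := by open Fin.CommRing in linear_combination -h
      subst hw
      simp [hq]
  · intro hw
    by_cases hp : p v <;> by_cases hq : p (v-1) <;> simp [hp, hq] at hw
    · rcases hw with rfl | rfl <;>
        first
          | exact Or.inl ⟨rfl, hp⟩
          | exact Or.inr ⟨by open Fin.CommRing in ring, hq⟩
    · subst hw
      first
        | exact Or.inl ⟨rfl, hp⟩
        | exact Or.inr ⟨by open Fin.CommRing in ring, hq⟩
    · subst hw
      first
        | exact Or.inl ⟨rfl, hp⟩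
        | exact Or.inr ⟨by open Fin.CommRing in ring, hq⟩

lemma subCycle_ncard [DecidablePred p] (v : Fin (m+3)) :
    ((subCycle m p).neighborSet v).ncard =
      (if p v then 1 else 0) + (if p (v-1) then 1 else 0) := by
  rw [subCycle_neighborSet]
  have hne : v + 1 ≠ v - 1 := fun h => fin_two_ne_zero (m := m) (by open Fin.CommRing in linear_combination h)
  by_cases hp : p v <;> by_cases hq : p (v-1) <;> simp [hp, hq]
  exact Set.ncard_pair (Ne.symm hne)

lemma myConstruct {a b g : ℕ} [DecidablePred p]
    (ha : ∀ v : Fin (m+3), (if p v then 1 else 0) + (if p (v-1) then 1 else 0) ≤ a)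
    (hb : ∀ v : Fin (m+3), (if ¬ p v then 1 else 0) + (if ¬ p (v-1) then 1 else 0) ≤ b)
    (hS : (∑ v : Fin (m+3), ((if p v then 1 else 0) + (if p (v-1) then 1 else 0))) + 2 * g
        = 4 * (m+3)) :
    IsWCycle (m+3) (subCycle m p) (subCycle m (fun i => ¬ p i)) a b g := by
  refine ⟨subCycle_disjoint p, ?_, ?_, ?_, ?_, ?_⟩
  · rw [subCycle_sup]
    exact SimpleGraph.cycleGraph_connected (n := m+2)
  · intro v
    rw [subCycle_sup, SimpleGraph.cycleGraph_neighborSet (n := m+1)]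
    exact Set.ncard_pair (fun h => fin_two_ne_zero (m := m) (by open Fin.CommRing in linear_combination -h))
  · intro v; rw [subCycle_ncard]; exact ha v
  · intro v; rw [subCycle_ncard]; exact hb v
  · have h1 := handshake (subCycle m p)
    have h2 := handshake (subCycle m (fun i => ¬ p i))
    simp_rw [subCycle_ncard] at h1 h2
    have htot : (∑ v : Fin (m+3), ((if p v then 1 else 0) + (if p (v-1) then 1 else 0)))
        + (∑ v : Fin (m+3), ((if ¬ p v then 1 else 0) + (if ¬ p (v-1) then 1 else 0)))
        = 2 * (m+3) := by
      rw [← Finset.sum_add_distrib]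
      have key : ∀ v : Fin (m+3), ((if p v then 1 else 0) + (if p (v-1) then 1 else 0))
          + ((if ¬ p v then 1 else 0) + (if ¬ p (v-1) then 1 else 0)) = 2 := by
        intro v; by_cases h1 : p v <;> by_cases h2 : p (v-1) <;> simp [h1, h2]
      rw [Finset.sum_congr rfl (fun v _ => key v)]
      simp [Nat.mul_comm]
    omega

end Construct

section Main

lemma exists_allLight {a b g : ℕ} (hg : 3 ≤ g) (ha : 2 ≤ a) :
    ∃ (n : ℕ) (L H : SimpleGraph (Fin n)), IsWCycle n L H a b g := by
  refine ⟨g - 3 + 3, subCycle (g-3) (fun _ => True),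
    subCycle (g-3) (fun _ => ¬ True), myConstruct _ ?_ ?_ ?_⟩
  · intro v; simp; omega
  · intro v; simp
  · have : (∑ _v : Fin (g-3+3), (((1:ℕ)) + 1)) = 2 * (g-3+3) := by
      simp; ring
    simp only [if_pos trivial]
    omega

lemma exists_allHeavy {a b t : ℕ} (ht : 3 ≤ t) (hb : 2 ≤ b) :
    ∃ (n : ℕ) (L H : SimpleGraph (Fin n)), IsWCycle n L H a b (2*t) := by
  refine ⟨t - 3 + 3, subCycle (t-3) (fun _ => False),
    subCycle (t-3) (fun _ => ¬ False), myConstruct _ ?_ ?_ ?_⟩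
  · intro v; simp
  · intro v; simp; omega
  · simp; omega

lemma exists_oneLight {a b t : ℕ} (ht : 2 ≤ t) (ha : 1 ≤ a) (hb : 2 ≤ b) :
    ∃ (n : ℕ) (L H : SimpleGraph (Fin n)), IsWCycle n L H a b (2*t+1) := by
  refine ⟨t - 2 + 3, subCycle (t-2) (fun v => v = 0),
    subCycle (t-2) (fun v => ¬ (v = 0)), myConstruct _ ?_ ?_ ?_⟩
  · intro v
    have h01 : ¬ ((0:Fin (t-2+3)) - 1 = 0) := by
      rw [sub_eq_zero]
      intro h
      have h' := congrArg Fin.val h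
      simp only [Fin.val_zero, Fin.val_one] at h'
      omega
    by_cases hv : v = 0
    · subst hv
      rw [if_pos rfl, if_neg h01]
      omega
    · rw [if_neg hv]
      split_ifs <;> omega
  · intro v; split_ifs <;> omega
  · have h1 : (∑ v : Fin (t-2+3), (if v = 0 then (1:ℕ) else 0)) = 1 := by
      simp [Finset.sum_ite_eq']
    have h2 : (∑ v : Fin (t-2+3), (if v - 1 = 0 then (1:ℕ) else 0)) = 1 := by
      simp_rw [sub_eq_zero]
      simp [Finset.sum_ite_eq']
    rw [Finset.sum_add_distrib, h1, h2]
    omega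

lemma exists_alternating {a b k : ℕ} (hk : 2 ≤ k) (ha : 1 ≤ a) (hb : 1 ≤ b) :
    ∃ (n : ℕ) (L H : SimpleGraph (Fin n)), IsWCycle n L H a b (3*k) := by
  have hm : 2*k - 3 + 3 = 2*k := by omega
  refine ⟨2*k - 3 + 3, subCycle (2*k-3) (fun v => v.val % 2 = 0),
    subCycle (2*k-3) (fun v => ¬ (v.val % 2 = 0)), myConstruct _ ?_ ?_ ?_⟩
  case _ =>
    intro v
    have hsub : (v - (1 : Fin (2*k-3+3))).val = if v = 0 then (2*k-3+2) else v.val - 1 :=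
      Fin.coe_sub_one v
    rw [hsub]
    by_cases hv : v = 0
    · subst hv
      rw [if_pos rfl]
      have h1 : ((0 : Fin (2*k-3+3))).val = 0 := rfl
      have h2 : (2*k-3+2) % 2 = 1 := by omega
      simp [h1, h2]
      omega
    · rw [if_neg hv]
      have hv' : v.val ≠ 0 := fun h => hv (Fin.ext h)
      split_ifs <;> omega
  case _ =>
    intro v
    have hsub : (v - (1 : Fin (2*k-3+3))).val = if v = 0 then (2*k-3+2) else v.val - 1 :=
      Fin.coe_sub_one v
    rw [hsub]
    by_cases hv : v = 0
    · subst hv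
      rw [if_pos rfl]
      have h1 : ((0 : Fin (2*k-3+3))).val = 0 := rfl
      have h2 : (2*k-3+2) % 2 = 1 := by omega
      simp [h1, h2]
      omega
    · rw [if_neg hv]
      have hv' : v.val ≠ 0 := fun h => hv (Fin.ext h)
      split_ifs <;> omega
  case _ =>
    have key : ∀ v : Fin (2*k-3+3),
        ((if v.val % 2 = 0 then (1:ℕ) else 0) + (if (v-1).val % 2 = 0 then 1 else 0)) = 1 := by
      intro v
      have hsub : (v - (1 : Fin (2*k-3+3))).val = if v = 0 then (2*k-3+2) else v.val - 1 :=
        Fin.coe_sub_one v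
      rw [hsub]
      by_cases hv : v = 0
      · subst hv
        rw [if_pos rfl]
        have h1 : ((0 : Fin (2*k-3+3))).val = 0 := rfl
        have h2 : (2*k-3+2) % 2 = 1 := by omega
        simp [h1, h2]
      · rw [if_neg hv]
        have hv' : v.val ≠ 0 := fun h => hv (Fin.ext h)
        split_ifs <;> omega
    rw [Finset.sum_congr rfl (fun v _ => key v)]
    simp
    omega

theorem stmt_5' (a b g : ℕ) (hg : 3 ≤ g) :
    (∃ (n : ℕ) (L H : SimpleGraph (Fin n)), IsWCycle n L H a b g) ↔
      (2 ≤ a ∨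
       (a = 1 ∧ 2 ≤ b ∧ 5 ≤ g) ∨
       (a = 1 ∧ b = 1 ∧ 6 ≤ g ∧ g % 3 = 0) ∨
       (a = 0 ∧ 2 ≤ b ∧ 6 ≤ g ∧ g % 2 = 0)) := by
  constructor
  · rintro ⟨n, L, H, h⟩
    exact myForward h
  · rintro (ha | ⟨ha, hb, hg5⟩ | ⟨ha, hb, hg6, h3⟩ | ⟨ha, hb, hg6, h2⟩)
    · exact exists_allLight hg ha
    · rcases Nat.even_or_odd g with ⟨t, ht⟩ | ⟨t, ht⟩
      · have h3t : 3 ≤ t := by omega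
        have : g = 2 * t := by omega
        subst this
        exact exists_allHeavy h3t hb
      · have h2t : 2 ≤ t := by omega
        have : g = 2 * t + 1 := by omega
        subst this
        exact exists_oneLight h2t (by omega) hb
    · have : g = 3 * (g / 3) := by omega
      rw [this]
      exact exists_alternating (by omega) (by omega) (by omega)
    · have : g = 2 * (g / 2) := by omega
      rw [this]
      exact exists_allHeavy (by omega) hb

end Main

/-- Characterization of the existence of `(a,b,g)`-wcycles. -/
theorem stmt_5 (a b g : ℕ) (hg : 3 ≤ g) :
    (∃ (n : ℕ) (L H : SimpleGraph (Fin n)), IsWCycle n L H a b g) ↔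
      (2 ≤ a ∨
       (a = 1 ∧ 2 ≤ b ∧ 5 ≤ g) ∨
       (a = 1 ∧ b = 1 ∧ 6 ≤ g ∧ g % 3 = 0) ∨
       (a = 0 ∧ 2 ≤ b ∧ 6 ≤ g ∧ g % 2 = 0)) :=
  stmt_5' a b g hg
end

section
/- For g ≥ 3, a (1,1)-regular weighted graph of girth g exists if and only if g ≥ 6 and g ≡ 0 mod 3, and in that case the minimum number of vertices of such a weighted graph is 2g/3. -/
open Classical in
/-- Weight of a walk in `L ⊔ H`: light edges (in `L`) weigh 1, heavy edges weigh 2. -/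
noncomputable def wWeight {V : Type*} (L H : SimpleGraph V) {u : V}
    (w : (L ⊔ H).Walk u u) : ℕ :=
  (w.edges.map fun e => if e ∈ L.edgeSet then 1 else 2).sum

/-- `(L,H)` is an `(a,b)`-regular weighted graph of girth `g`. -/
def IsWGraph {V : Type*} (L H : SimpleGraph V) (a b g : ℕ) : Prop :=
  Disjoint L H ∧
  (∀ v, (L.neighborSet v).ncard = a) ∧
  (∀ v, (H.neighborSet v).ncard = b) ∧
  (∃ (u : V) (w : (L ⊔ H).Walk u u), w.IsCycle ∧ wWeight L H w = g) ∧
  (∀ (u : V) (w : (L ⊔ H).Walk u u), w.IsCycle → g ≤ wWeight L H w)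


open SimpleGraph

private lemma altsum : ∀ (l : List ℕ),
    (∀ x ∈ l, x = 1 ∨ x = 2) → l.Chain' (· ≠ ·) → l.getLast? ≠ l.head? →
    l.length % 2 = 0 ∧ 2 * l.sum = 3 * l.length
  | [] => fun _ _ _ => by simp
  | [_] => fun _ _ h => by simp at h
  | a :: b :: t => fun hmem hchain hlast => by
    have ha := hmem a (by simp)
    have hb := hmem b (by simp)
    have h1 := List.isChain_cons_cons.mp hchain
    have hab := h1.1
    cases t with
    | nil =>
      have hba : b ≠ a := by
        intro h; apply hlast
        rw [List.getLast?_cons_cons, h]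
        rfl
      refine ⟨by simp, ?_⟩
      simp only [List.sum_cons, List.sum_nil, List.length_cons, List.length_nil]
      rcases ha with rfl | rfl <;> rcases hb with h | h <;> omega
    | cons c t' =>
      have h2 := List.isChain_cons_cons.mp h1.2
      have hc := hmem c (by simp)
      have hca : c = a := by have hbc := h2.1; omega
      have hlast' : (c :: t').getLast? ≠ (c :: t').head? := by
        intro h
        apply hlast
        rw [List.getLast?_cons_cons, List.getLast?_cons_cons, h, List.head?_cons,
          List.head?_cons, hca]
      have IH := altsum (c :: t')
        (fun x hx => hmem x (by
          rcases List.mem_cons.mp hx with rfl | h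
          · simp
          · simp [h]))
        h2.2 hlast'
      simp only [List.length_cons, List.sum_cons] at IH ⊢
      rcases ha with rfl | rfl <;> rcases hb with h | h <;> omega
  termination_by l => l.length


private lemma getLast?_ne_head? {α : Type*} (l : List α) (hn : l.Nodup) (hl : 2 ≤ l.length) :
    l.getLast? ≠ l.head? := by
  match l, hl with
  | a :: b :: t, _ =>
    rw [List.getLast?_cons_cons, List.head?_cons]
    intro h
    have : a ∈ b :: t := by
      rcases List.mem_getLast?_eq_getLast h with ⟨h', h₂⟩
      rw [h₂]; exact List.getLast_mem h'
    exact (List.nodup_cons.mp hn).1 this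

private lemma head?_edges_mem {V : Type*} {G : SimpleGraph V} {u v : V} (w : G.Walk u v)
    {e : Sym2 V} (h : w.edges.head? = some e) : u ∈ e := by
  cases w with
  | nil => simp at h
  | cons ha p =>
    rw [SimpleGraph.Walk.edges_cons, List.head?_cons, Option.some.injEq] at h
    rw [← h]; exact Sym2.mem_mk_left _ _

private lemma getLast?_edges_mem {V : Type*} {G : SimpleGraph V} {u v : V} (w : G.Walk u v)
    {e : Sym2 V} (h : w.edges.getLast? = some e) : v ∈ e := by
  apply head?_edges_mem w.reverse
  rw [SimpleGraph.Walk.edges_reverse, List.head?_reverse]; exact h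

private lemma edge_eq_of_mem {V : Type*} {G : SimpleGraph V}
    (hG : ∀ v, (G.neighborSet v).ncard = 1)
    {v : V} {e1 e2 : Sym2 V} (h1 : e1 ∈ G.edgeSet) (h2 : e2 ∈ G.edgeSet)
    (hv1 : v ∈ e1) (hv2 : v ∈ e2) : e1 = e2 := by
  obtain ⟨a, ha⟩ := Set.ncard_eq_one.mp (hG v)
  have key : ∀ e : Sym2 V, e ∈ G.edgeSet → v ∈ e → e = s(v, a) := by
    intro e he hv
    induction e with
    | _ x y =>
      rw [SimpleGraph.mem_edgeSet] at he
      rcases Sym2.mem_iff.mp hv with rfl | rfl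
      · have hy : y ∈ G.neighborSet v := he
        rw [ha, Set.mem_singleton_iff] at hy
        rw [hy]
      · have hx : x ∈ G.neighborSet v := he.symm
        rw [ha, Set.mem_singleton_iff] at hx
        rw [hx]; exact Sym2.eq_swap
  rw [key e1 h1 hv1, key e2 h2 hv2]

private lemma edge_mem_or {V : Type*} {L H : SimpleGraph V} {e : Sym2 V}
    (he : e ∈ (L ⊔ H).edgeSet) : e ∈ L.edgeSet ∨ e ∈ H.edgeSet := by
  rw [SimpleGraph.edgeSet_sup] at he
  exact he

private lemma alt_edges {V : Type*} {L H : SimpleGraph V} (hd : Disjoint L H)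
    (hL : ∀ v, (L.neighborSet v).ncard = 1) (hH : ∀ v, (H.neighborSet v).ncard = 1)
    {v : V} {e1 e2 : Sym2 V} (h1 : e1 ∈ (L ⊔ H).edgeSet) (h2 : e2 ∈ (L ⊔ H).edgeSet)
    (hv1 : v ∈ e1) (hv2 : v ∈ e2) (hne : e1 ≠ e2) : e1 ∈ L.edgeSet ↔ e2 ∉ L.edgeSet := by
  have hdis : Disjoint L.edgeSet H.edgeSet := SimpleGraph.disjoint_edgeSet.mpr hd
  rcases edge_mem_or h1 with m1 | m1 <;> rcases edge_mem_or h2 with m2 | m2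
  · exact absurd (edge_eq_of_mem hL m1 m2 hv1 hv2) hne
  · simp only [m1, true_iff]; exact fun hc => Set.disjoint_left.mp hdis hc m2
  · constructor
    · intro hc; exact absurd hc (Set.disjoint_right.mp hdis m1)
    · intro hc; exact absurd m2 hc
  · exact absurd (edge_eq_of_mem hH m1 m2 hv1 hv2) hne

private lemma chain'_and_of_chain'_of_pairwise {α : Type*} {R S : α → α → Prop} :
    ∀ {l : List α}, l.Chain' R → l.Pairwise S → l.Chain' (fun a b => R a b ∧ S a b)
  | [], _, _ => List.isChain_nil
  | [a], _, _ => List.isChain_singleton a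
  | a :: b :: t, hc, hp => by
    simp only [List.Chain', List.isChain_cons_cons] at hc ⊢
    rw [List.pairwise_cons] at hp
    exact ⟨⟨hc.1, hp.1 b (by simp)⟩, chain'_and_of_chain'_of_pairwise hc.2 hp.2⟩

open Classical in
private lemma cycle_weight {V : Type*} {L H : SimpleGraph V} (hd : Disjoint L H)
    (hL : ∀ v, (L.neighborSet v).ncard = 1) (hH : ∀ v, (H.neighborSet v).ncard = 1)
    {u : V} (w : (L ⊔ H).Walk u u) (hw : w.IsCycle) :
    w.length % 2 = 0 ∧ 2 * wWeight L H w = 3 * w.length := by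
  have hE : w.edges = w.darts.map SimpleGraph.Dart.edge := rfl
  have hnodupE : w.edges.Nodup := hw.isTrail.edges_nodup
  have hpw : w.darts.Pairwise (fun d d' => d.edge ≠ d'.edge) := by
    rw [hE] at hnodupE
    exact List.pairwise_map.mp hnodupE
  have hnodupE : w.edges.Nodup := hw.isTrail.edges_nodup
  have hchainD := w.isChain_dartAdj_darts
  have hchain2 := chain'_and_of_chain'_of_pairwise hchainD hpw
  set fc : Sym2 V → ℕ := fun e => if e ∈ L.edgeSet then 1 else 2 with hfc
  have hne_of : ∀ (e1 e2 : Sym2 V), e1 ∈ (L ⊔ H).edgeSet → e2 ∈ (L ⊔ H).edgeSet →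
      (∃ v, v ∈ e1 ∧ v ∈ e2) → e1 ≠ e2 → fc e1 ≠ fc e2 := by
    rintro e1 e2 h1 h2 ⟨v, hv1, hv2⟩ hne
    have hiff := alt_edges hd hL hH h1 h2 hv1 hv2 hne
    simp only [hfc]
    by_cases h : e1 ∈ L.edgeSet
    · rw [if_pos h, if_neg (hiff.mp h)]; omega
    · rw [if_neg h, if_pos (by by_contra hc; exact h (hiff.mpr hc))]; omega
  have hchain : (w.edges.map fc).Chain' (· ≠ ·) := by
    rw [hE, List.map_map]; unfold List.Chain'; rw [List.isChain_map]
    refine hchain2.imp ?_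
    rintro d d' ⟨hadj, hne⟩
    refine hne_of _ _ d.edge_mem d'.edge_mem ⟨d.snd, ?_, ?_⟩ hne
    · exact Sym2.mem_mk_right _ _
    · rw [hadj]; exact Sym2.mem_mk_left _ _
  have hlen3 := hw.three_le_length
  have hlenE : w.edges.length = w.length := w.length_edges
  have hneE : w.edges ≠ [] := by
    intro h; rw [h] at hlenE; simp at hlenE; omega
  obtain ⟨e0, t0, hcons⟩ := List.exists_cons_of_ne_nil hneE
  have hhead : w.edges.head? = some e0 := by rw [hcons]; rfl
  have hgl : w.edges.getLast? = some (w.edges.getLast hneE) := List.getLast?_eq_getLast hneE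
  have hu0 : u ∈ e0 := head?_edges_mem w hhead
  have hu1 : u ∈ w.edges.getLast hneE := getLast?_edges_mem w hgl
  have hglh := getLast?_ne_head? w.edges hnodupE (by omega)
  have hne01 : w.edges.getLast hneE ≠ e0 := by
    intro h; apply hglh; rw [hgl, hhead, h]
  have hcyc : (w.edges.map fc).getLast? ≠ (w.edges.map fc).head? := by
    rw [List.getLast?_map, List.head?_map, hgl, hhead]
    simp only [Option.map_some, ne_eq, Option.some.injEq]
    exact hne_of _ _ (w.edges_subset_edgeSet (List.getLast_mem hneE))
      (w.edges_subset_edgeSet (by rw [hcons]; simp)) ⟨u, hu1, hu0⟩ hne01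
  have hmem : ∀ x ∈ w.edges.map fc, x = 1 ∨ x = 2 := by
    intro x hx
    obtain ⟨e, _, rfl⟩ := List.mem_map.mp hx
    simp only [hfc]
    split
    · exact Or.inl rfl
    · exact Or.inr rfl
  have halt := altsum (w.edges.map fc) hmem hchain hcyc
  rw [List.length_map, hlenE] at halt
  refine ⟨halt.1, ?_⟩
  have hww : wWeight L H w = (w.edges.map fc).sum := rfl
  rw [hww]; exact halt.2

private lemma support_closed {V : Type*} [DecidableEq V] {L H : SimpleGraph V}
    (hd : Disjoint L H)
    (hL : ∀ v, (L.neighborSet v).ncard = 1) (hH : ∀ v, (H.neighborSet v).ncard = 1)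
    {u : V} (w : (L ⊔ H).Walk u u) (hw : w.IsCycle) {v x : V} (hv : v ∈ w.support)
    (hadj : (L ⊔ H).Adj v x) : x ∈ w.support := by
  set c := w.rotate v hv with hc
  have hcyc : c.IsCycle := hw.rotate hv
  have hlen3 := hcyc.three_le_length
  have hlenE : c.edges.length = c.length := c.length_edges
  have hneE : c.edges ≠ [] := by
    intro h; rw [h] at hlenE; simp at hlenE; omega
  obtain ⟨e0, t0, hcons⟩ := List.exists_cons_of_ne_nil hneE
  have hhead : c.edges.head? = some e0 := by rw [hcons]; rfl
  have hgl : c.edges.getLast? = some (c.edges.getLast hneE) := List.getLast?_eq_getLast hneE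
  set e1 := c.edges.getLast hneE with he1
  have hv0 : v ∈ e0 := head?_edges_mem c hhead
  have hv1 : v ∈ e1 := getLast?_edges_mem c hgl
  have hnodupE : c.edges.Nodup := hcyc.isTrail.edges_nodup
  have hglh := getLast?_ne_head? c.edges hnodupE (by omega)
  have hne01 : e1 ≠ e0 := fun h => hglh (by rw [hgl, hhead, h])
  have he0m : e0 ∈ c.edges := by rw [hcons]; simp
  have he1m : e1 ∈ c.edges := List.getLast_mem hneE
  have h0 := c.edges_subset_edgeSet he0m
  have h1 := c.edges_subset_edgeSet he1m
  have hse : s(v, x) ∈ (L ⊔ H).edgeSet := hadj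
  have hvm : v ∈ s(v, x) := Sym2.mem_mk_left _ _
  have key : s(v, x) = e0 ∨ s(v, x) = e1 := by
    have hiff := alt_edges hd hL hH h1 h0 hv1 hv0 hne01
    have hdis := SimpleGraph.disjoint_edgeSet.mpr hd
    rcases edge_mem_or hse with hsx | hsx
    · rcases edge_mem_or h0 with h0' | h0'
      · exact Or.inl (edge_eq_of_mem hL hsx h0' hvm hv0)
      · have he0L : e0 ∉ L.edgeSet := fun hc' => Set.disjoint_left.mp hdis hc' h0'
        have he1L : e1 ∈ L.edgeSet := hiff.mpr he0L
        exact Or.inr (edge_eq_of_mem hL hsx he1L hvm hv1)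
    · rcases edge_mem_or h0 with h0' | h0'
      · have he1L : e1 ∉ L.edgeSet := fun hc' => (hiff.mp hc') h0'
        have he1H : e1 ∈ H.edgeSet := (edge_mem_or h1).resolve_left he1L
        exact Or.inr (edge_eq_of_mem hH hsx he1H hvm hv1)
      · exact Or.inl (edge_eq_of_mem hH hsx h0' hvm hv0)
  have hxc : x ∈ c.support := by
    rcases key with h | h
    · exact SimpleGraph.Walk.snd_mem_support_of_mem_edges c (h ▸ he0m)
    · exact SimpleGraph.Walk.snd_mem_support_of_mem_edges c (h ▸ he1m)
  have hxt : x ∈ c.support.tail := by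
    rcases (SimpleGraph.Walk.mem_support_iff c).mp hxc with rfl | h
    · exact absurd hadj ((L ⊔ H).loopless.irrefl _)
    · exact h
  have hrot := SimpleGraph.Walk.support_rotate w v hv
  exact (SimpleGraph.Walk.mem_support_iff w).mpr (Or.inr (hrot.mem_iff.mp hxt))

private lemma all_mem_support {V : Type*} [DecidableEq V] {L H : SimpleGraph V}
    (hd : Disjoint L H)
    (hL : ∀ v, (L.neighborSet v).ncard = 1) (hH : ∀ v, (H.neighborSet v).ncard = 1)
    (hpc : (L ⊔ H).Preconnected)
    {u : V} (w : (L ⊔ H).Walk u u) (hw : w.IsCycle) (v : V) : v ∈ w.support := by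
  have main : ∀ (a b : V) (p : (L ⊔ H).Walk a b), a ∈ w.support → b ∈ w.support := by
    intro a b p
    induction p with
    | nil => exact id
    | cons h q ih => exact fun ha => ih (support_closed hd hL hH w hw ha h)
  obtain ⟨p⟩ := hpc u v
  exact main u v p w.start_mem_support

private lemma end_mem_tail {V : Type*} {G : SimpleGraph V} {u : V} (w : G.Walk u u)
    (hne : w.support.tail ≠ []) : u ∈ w.support.tail := by
  have h2 := SimpleGraph.Walk.support_eq_cons w
  obtain ⟨b, t, ht⟩ := List.exists_cons_of_ne_nil hne
  have h1 : w.support.getLast? = some u := by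
    rw [List.getLast?_eq_getLast (by rw [h2]; exact List.cons_ne_nil _ _),
      SimpleGraph.Walk.getLast_support]
  have h3 : w.support = u :: b :: t := by rw [h2, ht]
  rw [h3, List.getLast?_cons_cons] at h1
  have h4 : u ∈ (b :: t).getLast? := by rw [h1]; rfl
  obtain ⟨h5, h6⟩ := List.mem_getLast?_eq_getLast h4
  rw [ht, h6]
  exact List.getLast_mem h5

private lemma card_le_length {V : Type*} [Fintype V] {G : SimpleGraph V}
    {u : V} (w : G.Walk u u) (hw : w.IsCycle) (hall : ∀ v, v ∈ w.support) :
    Fintype.card V ≤ w.length := by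
  classical
  have hnd : w.support.tail.Nodup := ((SimpleGraph.Walk.isCycle_def w).mp hw).2.2
  have hls := SimpleGraph.Walk.length_support w
  have hlt : w.support.tail.length = w.support.length - 1 := List.length_tail
  have hlen3 := hw.three_le_length
  have htne : w.support.tail ≠ [] := by
    intro h
    rw [h] at hlt
    simp at hlt
    omega
  have hmemtail : ∀ v, v ∈ w.support.tail := by
    intro v
    rcases (SimpleGraph.Walk.mem_support_iff w).mp (hall v) with rfl | h
    · exact end_mem_tail w htne
    · exact h
  have hsub : (Finset.univ : Finset V) ⊆ w.support.tail.toFinset :=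
    fun v _ => List.mem_toFinset.mpr (hmemtail v)
  have hcard : Fintype.card V ≤ w.support.tail.length := by
    calc Fintype.card V = (Finset.univ : Finset V).card := rfl
      _ ≤ w.support.tail.toFinset.card := Finset.card_le_card hsub
      _ = w.support.tail.length := List.toFinset_card_of_nodup hnd
  omega
private def consL (k : ℕ) : SimpleGraph (Fin (2 * k)) :=
  SimpleGraph.fromRel (fun i j => j.val = i.val + 1 ∧ i.val % 2 = 0)

private def consH (k : ℕ) : SimpleGraph (Fin (2 * k)) :=
  SimpleGraph.fromRel (fun i j =>
    (j.val = i.val + 1 ∧ i.val % 2 = 1) ∨ (i.val = 2 * k - 1 ∧ j.val = 0))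

private lemma consL_adj {k : ℕ} {i j : Fin (2 * k)} : (consL k).Adj i j ↔
    (j.val = i.val + 1 ∧ i.val % 2 = 0) ∨ (i.val = j.val + 1 ∧ j.val % 2 = 0) := by
  rw [consL, SimpleGraph.fromRel_adj]
  constructor
  · rintro ⟨_, h⟩; exact h
  · intro h
    refine ⟨?_, h⟩
    rintro rfl
    omega

private lemma consH_adj {k : ℕ} {i j : Fin (2 * k)} : (consH k).Adj i j ↔
    ((j.val = i.val + 1 ∧ i.val % 2 = 1) ∨ (i.val = 2 * k - 1 ∧ j.val = 0)) ∨
    ((i.val = j.val + 1 ∧ j.val % 2 = 1) ∨ (j.val = 2 * k - 1 ∧ i.val = 0)) := by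
  rw [consH, SimpleGraph.fromRel_adj]
  constructor
  · rintro ⟨_, h⟩; exact h
  · intro h
    refine ⟨?_, h⟩
    rintro rfl
    have hi := i.isLt
    omega

private lemma cons_disjoint {k : ℕ} (hk : 2 ≤ k) : Disjoint (consL k) (consH k) := by
  rw [disjoint_iff]
  ext i j
  have hi := i.isLt
  have hj := j.isLt
  simp only [SimpleGraph.inf_adj, SimpleGraph.bot_adj, iff_false, not_and]
  rw [consL_adj, consH_adj]
  intro h1 h2
  omega

private lemma consL_nbr {k : ℕ} (hk : 2 ≤ k) (v : Fin (2 * k)) :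
    ((consL k).neighborSet v).ncard = 1 := by
  have hv := v.isLt
  by_cases hpar : v.val % 2 = 0
  · have hlt : v.val + 1 < 2 * k := by omega
    have hset : (consL k).neighborSet v = {⟨v.val + 1, hlt⟩} := by
      ext j
      have hj := j.isLt
      simp only [SimpleGraph.mem_neighborSet, Set.mem_singleton_iff, consL_adj, Fin.ext_iff]
      omega
    rw [hset, Set.ncard_singleton]
  · have hlt : v.val - 1 < 2 * k := by omega
    have hset : (consL k).neighborSet v = {⟨v.val - 1, hlt⟩} := by
      ext j
      have hj := j.isLt
      simp only [SimpleGraph.mem_neighborSet, Set.mem_singleton_iff, consL_adj, Fin.ext_iff]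
      omega
    rw [hset, Set.ncard_singleton]

private lemma consH_nbr {k : ℕ} (hk : 2 ≤ k) (v : Fin (2 * k)) :
    ((consH k).neighborSet v).ncard = 1 := by
  have hv := v.isLt
  by_cases hpar : v.val % 2 = 1
  · by_cases hlast : v.val = 2 * k - 1
    · have hlt : (0 : ℕ) < 2 * k := by omega
      have hset : (consH k).neighborSet v = {⟨0, hlt⟩} := by
        ext j
        have hj := j.isLt
        simp only [SimpleGraph.mem_neighborSet, Set.mem_singleton_iff, consH_adj, Fin.ext_iff]
        omega
      rw [hset, Set.ncard_singleton]
    · have hlt : v.val + 1 < 2 * k := by omega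
      have hset : (consH k).neighborSet v = {⟨v.val + 1, hlt⟩} := by
        ext j
        have hj := j.isLt
        simp only [SimpleGraph.mem_neighborSet, Set.mem_singleton_iff, consH_adj, Fin.ext_iff]
        omega
      rw [hset, Set.ncard_singleton]
  · by_cases hzero : v.val = 0
    · have hlt : 2 * k - 1 < 2 * k := by omega
      have hset : (consH k).neighborSet v = {⟨2 * k - 1, hlt⟩} := by
        ext j
        have hj := j.isLt
        simp only [SimpleGraph.mem_neighborSet, Set.mem_singleton_iff, consH_adj, Fin.ext_iff]
        omega
      rw [hset, Set.ncard_singleton]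
    · have hlt : v.val - 1 < 2 * k := by omega
      have hset : (consH k).neighborSet v = {⟨v.val - 1, hlt⟩} := by
        ext j
        have hj := j.isLt
        simp only [SimpleGraph.mem_neighborSet, Set.mem_singleton_iff, consH_adj, Fin.ext_iff]
        omega
      rw [hset, Set.ncard_singleton]

private lemma cons_adj_succ {k : ℕ} {j : ℕ} (hj : j + 1 < 2 * k) :
    (consL k ⊔ consH k).Adj ⟨j, by omega⟩ ⟨j + 1, hj⟩ := by
  rw [SimpleGraph.sup_adj, consL_adj, consH_adj]
  simp only [Fin.val_mk, true_and, and_true]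
  omega

private lemma cons_adj_last {k : ℕ} (hk : 2 ≤ k) {j : ℕ} (hj : j < 2 * k)
    (hlast : j = 2 * k - 1) :
    (consL k ⊔ consH k).Adj ⟨j, hj⟩ ⟨0, by omega⟩ := by
  rw [SimpleGraph.sup_adj, consL_adj, consH_adj]
  simp only [Fin.val_mk, true_and, and_true]
  omega

private lemma cons_reach {k : ℕ} (hk : 2 ≤ k) (m : ℕ) :
    ∀ (hm : m < 2 * k), (consL k ⊔ consH k).Reachable ⟨0, by omega⟩ ⟨m, hm⟩ := by
  induction m with
  | zero => intro hm; exact SimpleGraph.Reachable.refl _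
  | succ m ih =>
    intro hm
    have hm' : m < 2 * k := by omega
    exact (ih hm').trans (cons_adj_succ hm).reachable

private lemma cons_preconn {k : ℕ} (hk : 2 ≤ k) : (consL k ⊔ consH k).Preconnected := by
  intro u v
  have hu := cons_reach hk u.val u.isLt
  have hv := cons_reach hk v.val v.isLt
  exact hu.symm.trans hv
private def wAux (k : ℕ) (hk : 2 ≤ k) : (m : ℕ) → (j : ℕ) → (h : j + m = 2 * k - 1) →
    (consL k ⊔ consH k).Walk ⟨j, by omega⟩ ⟨0, by omega⟩
  | 0, j, h => SimpleGraph.Walk.cons (cons_adj_last hk (by omega) (by omega)) SimpleGraph.Walk.nil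
  | m + 1, j, h =>
    SimpleGraph.Walk.cons (cons_adj_succ (by omega)) (wAux k hk m (j + 1) (by omega))

private lemma wAux_length (k : ℕ) (hk : 2 ≤ k) : ∀ (m j : ℕ) (h : j + m = 2 * k - 1),
    (wAux k hk m j h).length = m + 1
  | 0, j, h => rfl
  | m + 1, j, h => by
    rw [wAux, SimpleGraph.Walk.length_cons, wAux_length k hk m (j + 1) (by omega)]

private lemma wAux_support (k : ℕ) (hk : 2 ≤ k) : ∀ (m j : ℕ) (h : j + m = 2 * k - 1)
    (x : Fin (2 * k)), x ∈ (wAux k hk m j h).support ↔ (j ≤ x.val ∨ x.val = 0)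
  | 0, j, h, x => by
    have hx := x.isLt
    rw [wAux]
    simp only [SimpleGraph.Walk.support_cons, SimpleGraph.Walk.support_nil,
      List.mem_cons, List.mem_singleton, Fin.ext_iff, Fin.val_mk, List.not_mem_nil, or_false]
    omega
  | m + 1, j, h, x => by
    have hx := x.isLt
    rw [wAux]
    simp only [SimpleGraph.Walk.support_cons, List.mem_cons, Fin.ext_iff, Fin.val_mk]
    rw [wAux_support k hk m (j + 1) (by omega) x]
    omega

private lemma wAux_nodup (k : ℕ) (hk : 2 ≤ k) : ∀ (m j : ℕ) (h : j + m = 2 * k - 1)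
    (hj1 : 1 ≤ j), (wAux k hk m j h).support.Nodup
  | 0, j, h, hj1 => by
    rw [wAux]
    simp only [SimpleGraph.Walk.support_cons, SimpleGraph.Walk.support_nil]
    simp only [List.nodup_cons, List.mem_singleton, List.not_mem_nil, not_false_iff,
      List.nodup_nil, and_true, Fin.ext_iff, Fin.val_mk]
    omega
  | m + 1, j, h, hj1 => by
    rw [wAux]
    simp only [SimpleGraph.Walk.support_cons, List.nodup_cons]
    constructor
    · intro hmem
      rw [wAux_support k hk m (j + 1) (by omega)] at hmem
      simp only [Fin.val_mk] at hmem
      omega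
    · exact wAux_nodup k hk m (j + 1) (by omega) (by omega)

private lemma wAux_edges (k : ℕ) (hk : 2 ≤ k) : ∀ (m j : ℕ) (h : j + m = 2 * k - 1)
    {e : Sym2 (Fin (2 * k))}, e ∈ (wAux k hk m j h).edges →
    ∃ a b : Fin (2 * k), e = s(a, b) ∧
      ((j ≤ a.val ∧ b.val = a.val + 1) ∨ (a.val = 2 * k - 1 ∧ b.val = 0))
  | 0, j, h, e, he => by
    rw [wAux] at he
    simp only [SimpleGraph.Walk.edges_cons, SimpleGraph.Walk.edges_nil,
      List.mem_singleton] at he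
    exact ⟨⟨j, by omega⟩, ⟨0, by omega⟩, he, Or.inr (by simp only [Fin.val_mk, true_and, and_true]; omega)⟩
  | m + 1, j, h, e, he => by
    rw [wAux] at he
    simp only [SimpleGraph.Walk.edges_cons, List.mem_cons] at he
    rcases he with rfl | he
    · exact ⟨⟨j, by omega⟩, ⟨j + 1, by omega⟩, rfl,
        Or.inl (by simp only [Fin.val_mk, true_and, and_true]; omega)⟩
    · obtain ⟨a, b, heq, hcond⟩ := wAux_edges k hk m (j + 1) (by omega) he
      exact ⟨a, b, heq, by omega⟩

open Classical in
private lemma wAux_weight (k : ℕ) (hk : 2 ≤ k) : ∀ (m j : ℕ) (h : j + m = 2 * k - 1),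
    ((wAux k hk m j h).edges.map fun e => if e ∈ (consL k).edgeSet then 1 else 2).sum
      = 2 + 3 * m / 2
  | 0, j, h => by
    rw [wAux]
    simp only [SimpleGraph.Walk.edges_cons, SimpleGraph.Walk.edges_nil, List.map_cons,
      List.map_nil, List.sum_cons, List.sum_nil]
    rw [if_neg]
    · omega
    · rw [SimpleGraph.mem_edgeSet, consL_adj]
      simp only [Fin.val_mk]
      omega
  | m + 1, j, h => by
    rw [wAux]
    simp only [SimpleGraph.Walk.edges_cons, List.map_cons, List.sum_cons]
    rw [wAux_weight k hk m (j + 1) (by omega)]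
    by_cases hp : j % 2 = 0
    · rw [if_pos]
      · omega
      · rw [SimpleGraph.mem_edgeSet, consL_adj]
        simp only [Fin.val_mk, true_and, and_true]
        omega
    · rw [if_neg]
      · omega
      · rw [SimpleGraph.mem_edgeSet, consL_adj]
        simp only [Fin.val_mk, true_and, and_true]
        omega

open Classical in
private lemma construction (k : ℕ) (hk : 2 ≤ k) :
    ∃ L H : SimpleGraph (Fin (2 * k)), IsWGraph L H 1 1 (3 * k) := by
  refine ⟨consL k, consH k, cons_disjoint hk, fun v => consL_nbr hk v,
    fun v => consH_nbr hk v, ?_, ?_⟩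
  · have h1 : (0 : ℕ) + 1 < 2 * k := by omega
    have hp0 : (1 : ℕ) + (2 * k - 2) = 2 * k - 1 := by omega
    refine ⟨⟨0, by omega⟩,
      SimpleGraph.Walk.cons (cons_adj_succ h1) (wAux k hk (2 * k - 2) 1 hp0), ?_, ?_⟩
    · rw [SimpleGraph.Walk.cons_isCycle_iff]
      constructor
      · rw [SimpleGraph.Walk.isPath_def]
        exact wAux_nodup k hk (2 * k - 2) 1 hp0 le_rfl
      · intro hmem
        obtain ⟨a, b, heq, hcond⟩ := wAux_edges k hk (2 * k - 2) 1 hp0 hmem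
        have ha := a.isLt
        have hb := b.isLt
        rw [Sym2.eq_iff] at heq
        rcases heq with ⟨h1', h2'⟩ | ⟨h1', h2'⟩ <;>
          rw [Fin.ext_iff] at h1' h2' <;> simp only [Fin.val_mk] at h1' h2' <;> omega
    · have hrfl : wWeight (consL k) (consH k)
          (SimpleGraph.Walk.cons (cons_adj_succ h1) (wAux k hk (2 * k - 2) 1 hp0)) =
          (((SimpleGraph.Walk.cons (cons_adj_succ h1)
            (wAux k hk (2 * k - 2) 1 hp0)).edges).map
              fun e => if e ∈ (consL k).edgeSet then 1 else 2).sum := rfl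
      rw [hrfl, SimpleGraph.Walk.edges_cons, List.map_cons, List.sum_cons,
        wAux_weight k hk (2 * k - 2) 1 hp0]
      rw [if_pos]
      · omega
      · rw [SimpleGraph.mem_edgeSet, consL_adj]
        exact Or.inl ⟨rfl, rfl⟩
  · intro u w hw
    have hreg1 : ∀ v, ((consL k).neighborSet v).ncard = 1 := fun v => consL_nbr hk v
    have hreg2 : ∀ v, ((consH k).neighborSet v).ncard = 1 := fun v => consH_nbr hk v
    have hall := all_mem_support (cons_disjoint hk) hreg1 hreg2 (cons_preconn hk) w hw
    have hcard := card_le_length w hw hall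
    rw [Fintype.card_fin] at hcard
    have hcw := cycle_weight (cons_disjoint hk) hreg1 hreg2 w hw
    omega

/-- A `(1,1)`-regular weighted graph of girth `g` exists iff `g ≥ 6` and
`3 ∣ g`, in which case the minimum order is `2g/3`. -/
theorem stmt_6 (g : ℕ) (hg : 3 ≤ g) :
    ((∃ (n : ℕ) (L H : SimpleGraph (Fin n)), IsWGraph L H 1 1 g) ↔
      (6 ≤ g ∧ g % 3 = 0)) ∧
    (6 ≤ g → g % 3 = 0 →
      IsLeast {n : ℕ | ∃ L H : SimpleGraph (Fin n), IsWGraph L H 1 1 g}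
        (2 * g / 3)) := by
  have hlb : ∀ n ∈ {n : ℕ | ∃ L H : SimpleGraph (Fin n), IsWGraph L H 1 1 g},
      2 * g / 3 ≤ n := by
    rintro n ⟨L, H, hd, hL, hH, ⟨u, w, hw, hweight⟩, -⟩
    have hcw := cycle_weight hd hL hH w hw
    have hnd : w.support.tail.Nodup := ((SimpleGraph.Walk.isCycle_def w).mp hw).2.2
    have hle : w.support.tail.length ≤ Fintype.card (Fin n) := hnd.length_le_card
    rw [Fintype.card_fin] at hle
    have hls := SimpleGraph.Walk.length_support w
    have hlt : w.support.tail.length = w.support.length - 1 := List.length_tail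
    omega
  constructor
  · constructor
    · rintro ⟨n, L, H, hd, hL, hH, ⟨u, w, hw, hweight⟩, -⟩
      have hcw := cycle_weight hd hL hH w hw
      have h3 := hw.three_le_length
      omega
    · rintro ⟨h6, h3⟩
      obtain ⟨k, rfl⟩ : ∃ k, g = 3 * k := ⟨g / 3, by omega⟩
      obtain ⟨L, H, hLH⟩ := construction k (by omega)
      exact ⟨2 * k, L, H, hLH⟩
  · intro h6 h3
    refine ⟨?_, fun n hn => hlb n hn⟩
    obtain ⟨k, rfl⟩ : ∃ k, g = 3 * k := ⟨g / 3, by omega⟩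
    have h23 : 2 * (3 * k) / 3 = 2 * k := by omega
    simp only [Set.mem_setOf_eq]
    rw [h23]
    exact construction k (by omega)
end

section
/- Let a ≥ 3 and b ≥ 0 be integers with a·b even. Then there exists a weighted graph G = (L,H) on exactly a+b+1 vertices such that L is a-regular, H is b-regular, E(L) and E(H) are disjoint, and the minimum weight of a cycle in G (where L-edges weigh 1 and H-edges weigh 2) is 3. -/
open Fin.NatCast Fin.CommRing

section Aux

lemma list_len_le_sum' (l : List ℕ) (h : ∀ x ∈ l, 1 ≤ x) : l.length ≤ l.sum := by
  induction l with
  | nil => simp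
  | cons x xs ih =>
    simp only [List.length_cons, List.sum_cons]
    have := h x (by simp)
    have := ih (fun y hy => h y (by simp [hy]))
    omega

def circ {n : ℕ} (S : Finset (Fin (n+1))) (h0 : (0:Fin (n+1)) ∉ S)
    (hneg : ∀ s ∈ S, -s ∈ S) : SimpleGraph (Fin (n+1)) where
  Adj u v := v - u ∈ S
  symm := by constructor; intro u v h; simpa [neg_sub] using hneg _ h
  loopless := by constructor; intro u h; simp only [sub_self] at h; exact h0 h

lemma circ_neighborSet {n : ℕ} (S : Finset (Fin (n+1))) (h0 : (0:Fin (n+1)) ∉ S)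
    (hneg : ∀ s ∈ S, -s ∈ S) (v : Fin (n+1)) :
    (circ S h0 hneg).neighborSet v = (fun s => v + s) '' (S : Set (Fin (n+1))) := by
  ext w
  simp only [SimpleGraph.mem_neighborSet, circ, Set.mem_image, Finset.mem_coe]
  constructor
  · intro h; exact ⟨w - v, h, by ring⟩
  · rintro ⟨s, hs, rfl⟩; simpa using hs

lemma circ_reg {n : ℕ} (S : Finset (Fin (n+1))) (h0 : (0:Fin (n+1)) ∉ S)
    (hneg : ∀ s ∈ S, -s ∈ S) (v : Fin (n+1)) :
    ((circ S h0 hneg).neighborSet v).ncard = S.card := by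
  rw [circ_neighborSet, Set.ncard_image_of_injective _ (add_right_injective v),
    Set.ncard_coe_finset]

lemma cast_injOn {n : ℕ} (T : Finset ℕ) (hT : ∀ i ∈ T, i ≤ n) :
    Set.InjOn (fun i : ℕ => (i : Fin (n+1))) T := by
  intro i hi j hj h
  have hi' : ((i : Fin (n+1)) : ℕ) = i := Fin.val_cast_of_lt (by have := hT i hi; omega)
  have hj' : ((j : Fin (n+1)) : ℕ) = j := Fin.val_cast_of_lt (by have := hT j hj; omega)
  have := congrArg Fin.val h
  simp only [hi', hj'] at this
  exact this

lemma natset_card {n : ℕ} (T : Finset ℕ) (hT : ∀ i ∈ T, i ≤ n) :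
    (T.image (fun i : ℕ => (i : Fin (n+1)))).card = T.card :=
  Finset.card_image_of_injOn (cast_injOn T hT)

lemma natset_zero {n : ℕ} (T : Finset ℕ) (hT : ∀ i ∈ T, 1 ≤ i ∧ i ≤ n) :
    (0 : Fin (n+1)) ∉ T.image (fun i : ℕ => (i : Fin (n+1))) := by
  simp only [Finset.mem_image, not_exists, not_and]
  intro i hi h
  have := hT i hi
  have : ((i : Fin (n+1)) : ℕ) = i := Fin.val_cast_of_lt (by omega)
  rw [h] at this
  simp at this
  omega

lemma natset_neg {n : ℕ} (T : Finset ℕ) (hT : ∀ i ∈ T, 1 ≤ i ∧ i ≤ n)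
    (hsym : ∀ i ∈ T, n+1-i ∈ T) :
    ∀ s ∈ T.image (fun i : ℕ => (i : Fin (n+1))),
      -s ∈ T.image (fun i : ℕ => (i : Fin (n+1))) := by
  intro s hs
  simp only [Finset.mem_image] at hs ⊢
  obtain ⟨i, hi, rfl⟩ := hs
  refine ⟨n+1-i, hsym i hi, ?_⟩
  have h1 := hT i hi
  have : ((n+1-i : ℕ) : Fin (n+1)) + (i : Fin (n+1)) = 0 := by
    rw [← Nat.cast_add]
    have : n + 1 - i + i = n + 1 := by omega
    rw [this]
    simp [Fin.natCast_self]
  linear_combination (norm := ring_nf) this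

end Aux

section Master

open Classical in
lemma weight_lower {V : Type*} (L H : SimpleGraph V) (u : V) (w : (L ⊔ H).Walk u u)
    (hc : w.IsCycle) : 3 ≤ wWeight L H w := by
  have h1 : w.edges.length ≤ wWeight L H w := by
    unfold wWeight
    have := list_len_le_sum' (w.edges.map fun e => if e ∈ L.edgeSet then 1 else 2)
      (by intro x hx
          simp only [List.mem_map] at hx
          obtain ⟨e, _, he⟩ := hx
          split at he <;> omega)
    simpa using this
  have := hc.three_le_length
  rw [w.length_edges] at h1
  omega

lemma tri_cycle {V : Type*} (G : SimpleGraph V) (x y z : V)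
    (hxy : G.Adj x y) (hyz : G.Adj y z) (hxz : G.Adj x z) :
    ((SimpleGraph.Walk.cons hxy (SimpleGraph.Walk.cons hyz
      (SimpleGraph.Walk.cons hxz.symm SimpleGraph.Walk.nil))) : G.Walk x x).IsCycle := by
  have h1 := hxy.ne
  have h2 := hyz.ne
  have h3 := hxz.ne
  simp [SimpleGraph.Walk.isCycle_def, SimpleGraph.Walk.isTrail_def, List.Nodup, Sym2.eq_iff]
  aesop

open Classical in
lemma tri_weight {V : Type*} (L H : SimpleGraph V) (x y z : V)
    (hxy : L.Adj x y) (hyz : L.Adj y z) (hxz : L.Adj x z) :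
    wWeight L H ((SimpleGraph.Walk.cons (G := L ⊔ H) (by exact Or.inl hxy)
      (SimpleGraph.Walk.cons (by exact Or.inl hyz)
      (SimpleGraph.Walk.cons (by exact Or.inl hxz.symm) SimpleGraph.Walk.nil))) :
        (L⊔H).Walk x x) = 3 := by
  unfold wWeight
  simp [SimpleGraph.Walk.edges, hxy, hyz, hxz.symm]

lemma master {a b : ℕ} (L : SimpleGraph (Fin (a+b+1)))
    (hreg : ∀ v, (L.neighborSet v).ncard = a)
    (htri : ∃ x y z, L.Adj x y ∧ L.Adj y z ∧ L.Adj x z) :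
    IsWGraph L Lᶜ a b 3 := by
  refine ⟨disjoint_compl_right, hreg, ?_, ?_, fun u w hc => weight_lower L Lᶜ u w hc⟩
  · intro v
    have hset : Lᶜ.neighborSet v = Set.univ \ insert v (L.neighborSet v) := by
      ext w
      simp [SimpleGraph.compl_adj, SimpleGraph.mem_neighborSet, eq_comm, not_or]
    rw [hset, Set.ncard_diff (Set.subset_univ _) (Set.toFinite _),
      Set.ncard_univ, Set.ncard_insert_of_notMem (by simp) (Set.toFinite _),
      hreg v, Nat.card_eq_fintype_card, Fintype.card_fin]
    omega
  · obtain ⟨x, y, z, hxy, hyz, hxz⟩ := htri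
    exact ⟨x, _, tri_cycle _ x y z (Or.inl hxy) (Or.inl hyz) (Or.inl hxz),
      tri_weight L Lᶜ x y z hxy hyz hxz⟩

/-- Build from a symmetric set of `ℕ` differences containing 1 and 2. -/
lemma build {a b : ℕ} (T : Finset ℕ) (hT : ∀ i ∈ T, 1 ≤ i ∧ i ≤ a+b)
    (hsym : ∀ i ∈ T, a+b+1-i ∈ T) (hcard : T.card = a) (h1 : 1 ∈ T) (h2 : 2 ∈ T) :
    ∃ L H : SimpleGraph (Fin (a + b + 1)), IsWGraph L H a b 3 := by
  set n := a + b with hn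
  have h0 := natset_zero (n := n) T hT
  have hneg := natset_neg (n := n) T hT hsym
  refine ⟨circ _ h0 hneg, _, master _ ?_ ?_⟩
  · intro v
    rw [circ_reg, natset_card T (fun i hi => (hT i hi).2), hcard]
  · refine ⟨0, 1, 2, ?_, ?_, ?_⟩
    · show _ ∈ Finset.image _ _
      rw [Finset.mem_image]
      exact ⟨1, h1, by norm_num⟩
    · show _ ∈ Finset.image _ _
      rw [Finset.mem_image]
      exact ⟨1, h1, by norm_num⟩
    · show _ ∈ Finset.image _ _
      rw [Finset.mem_image]
      exact ⟨2, h2, by norm_num⟩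

end Master

section Cases

/-- Case a even (a ≥ 4). -/
lemma case_even {a b : ℕ} (ha : 4 ≤ a) (hae : a % 2 = 0) :
    ∃ L H : SimpleGraph (Fin (a + b + 1)), IsWGraph L H a b 3 := by
  set k := a / 2 with hk
  have hk2 : 2 ≤ k := by omega
  have hkk : 2 * k = a := by omega
  set n := a + b with hn
  refine build (Finset.Icc 1 k ∪ Finset.Icc (n+1-k) n) ?_ ?_ ?_ ?_ ?_
  · intro i hi
    simp only [Finset.mem_union, Finset.mem_Icc] at hi
    omega
  · intro i hi
    simp only [Finset.mem_union, Finset.mem_Icc] at hi ⊢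
    omega
  · rw [Finset.card_union_of_disjoint, Nat.card_Icc, Nat.card_Icc]
    · omega
    · rw [Finset.disjoint_left]
      intro i hi hi'
      simp only [Finset.mem_Icc] at hi hi'
      omega
  · simp only [Finset.mem_union, Finset.mem_Icc]; omega
  · simp only [Finset.mem_union, Finset.mem_Icc]; omega

/-- Case a odd, a ≥ 5 (then b even). -/
lemma case_odd {a b : ℕ} (ha : 5 ≤ a) (hao : a % 2 = 1) (hbe : b % 2 = 0) :
    ∃ L H : SimpleGraph (Fin (a + b + 1)), IsWGraph L H a b 3 := by
  set k := (a - 1) / 2 with hk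
  have hk2 : 2 ≤ k := by omega
  have hkk : 2 * k = a - 1 := by omega
  set n := a + b with hn
  set m := (n + 1) / 2 with hm
  have hmm : 2 * m = n + 1 := by omega
  have hkm : k < m := by omega
  refine build (Finset.Icc 1 k ∪ {m} ∪ Finset.Icc (n+1-k) n) ?_ ?_ ?_ ?_ ?_
  · intro i hi
    simp only [Finset.mem_union, Finset.mem_Icc, Finset.mem_singleton] at hi
    omega
  · intro i hi
    simp only [Finset.mem_union, Finset.mem_Icc, Finset.mem_singleton] at hi ⊢
    omega
  · rw [Finset.card_union_of_disjoint, Finset.card_union_of_disjoint,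
      Nat.card_Icc, Nat.card_Icc, Finset.card_singleton]
    · omega
    · rw [Finset.disjoint_left]
      intro i hi hi'
      simp only [Finset.mem_Icc, Finset.mem_singleton] at hi hi'
      omega
    · rw [Finset.disjoint_left]
      intro i hi hi'
      simp only [Finset.mem_union, Finset.mem_Icc, Finset.mem_singleton] at hi hi'
      omega
  · simp only [Finset.mem_union, Finset.mem_Icc, Finset.mem_singleton]; omega
  · simp only [Finset.mem_union, Finset.mem_Icc, Finset.mem_singleton]; omega

end Cases


lemma mod_two_cases (y N : ℕ) (hy : y < 2*N) : y % N = y ∨ (N ≤ y ∧ y % N = y - N) := by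
  rcases Nat.lt_or_ge y N with h | h
  · exact Or.inl (Nat.mod_eq_of_lt h)
  · right
    refine ⟨h, ?_⟩
    rw [Nat.mod_eq_sub_mod h, Nat.mod_eq_of_lt (by omega)]

lemma ncard3 {α : Type*} (x y z : α) (hxy : x ≠ y) (hxz : x ≠ z) (hyz : y ≠ z) :
    ({x, y, z} : Set α).ncard = 3 := by
  rw [Set.ncard_insert_of_notMem (by simp [hxy, hxz]) (Set.toFinite _), Set.ncard_pair hyz]

section Three
variable {c : ℕ}

local notation "F" => Fin (3 + 2*c + 1)

def mu (c : ℕ) : Fin (3 + 2*c + 1) := ((c + 3 : ℕ) : Fin (3 + 2*c + 1))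

lemma val_cast (k : ℕ) (h : k < 2*c+4) : (((k : ℕ) : F) : ℕ) = k :=
  Fin.val_cast_of_lt (by omega)

lemma mu_val : ((mu c : F) : ℕ) = c + 3 := val_cast _ (by omega)

lemma N_cast : ((2*c+4 : ℕ) : F) = 0 := by
  have : (2*c+4 : ℕ) = 3 + 2*c + 1 := by omega
  rw [this, Fin.natCast_self]

lemma one_val : ((1 : F) : ℕ) = 1 := by
  have h : ((1:ℕ) : F) = 1 := Nat.cast_one
  rw [← h]; exact val_cast 1 (by omega)

lemma two_val : ((2 : F) : ℕ) = 2 := by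
  have h : ((2:ℕ) : F) = 2 := by norm_num
  rw [← h]; exact val_cast 2 (by omega)

lemma three_val : ((3 : F) : ℕ) = 3 := by
  have h : ((3:ℕ) : F) = 3 := by norm_num
  rw [← h]; exact val_cast 3 (by omega)

lemma ftwo_ne_zero : (2 : F) ≠ 0 := by
  intro h
  have := congrArg Fin.val h
  rw [two_val] at this
  simp at this

lemma fone_ne_zero : (1 : F) ≠ 0 := by
  intro h
  have := congrArg Fin.val h
  rw [one_val] at this
  simp at this

lemma fone_ne_two : (1 : F) ≠ 2 := by
  intro h
  have := congrArg Fin.val h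
  rw [one_val, two_val] at this
  omega

lemma mu_add_mu : (mu c : F) + mu c = 2 := by
  unfold mu
  rw [← Nat.cast_add]
  have h2 : ((2:ℕ) : F) = 2 := by norm_num
  have : ((c+3) + (c+3) : ℕ) = (2*c+4) + 2 := by omega
  rw [this, Nat.cast_add, N_cast, h2, zero_add]

lemma double_val (v : F) : ((v + v : F) : ℕ) = (v.val + v.val) % (2*c+4) := by
  rw [Fin.val_add]
  congr 1
  omega

lemma double_eq_two (v : F) (h : v + v = 2) : v = 1 ∨ v = mu c := by
  have hv := congrArg Fin.val h
  rw [double_val, two_val] at hv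
  have hlt : v.val < 2*c+4 := by have := v.isLt; omega
  rcases mod_two_cases (v.val + v.val) (2*c+4) (by omega) with h' | ⟨h1, h'⟩ <;>
    rw [h'] at hv
  · left
    apply Fin.ext
    rw [one_val]; omega
  · right
    apply Fin.ext
    rw [mu_val]; omega

lemma double_ne_one (v : F) : v + v ≠ 1 := by
  intro h
  have hv := congrArg Fin.val h
  rw [double_val, one_val] at hv
  have hlt : v.val < 2*c+4 := by have := v.isLt; omega
  rcases mod_two_cases (v.val + v.val) (2*c+4) (by omega) with h' | ⟨h1, h'⟩ <;>
    rw [h'] at hv <;> omega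

lemma double_ne_three (v : F) : v + v ≠ 3 := by
  intro h
  have hv := congrArg Fin.val h
  rw [double_val, three_val] at hv
  have hlt : v.val < 2*c+4 := by have := v.isLt; omega
  rcases mod_two_cases (v.val + v.val) (2*c+4) (by omega) with h' | ⟨h1, h'⟩ <;>
    rw [h'] at hv <;> omega

lemma mu_ne_one : (mu c : F) ≠ 1 := by
  intro h
  have := congrArg Fin.val h
  rw [mu_val, one_val] at this
  omega

lemma mu_ne_zero : (mu c : F) ≠ 0 := by
  intro h
  have := congrArg Fin.val h
  rw [mu_val] at this
  simp at this

lemma mu_ne_two : (mu c : F) ≠ 2 := by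
  intro h
  have := congrArg Fin.val h
  rw [mu_val, two_val] at this
  omega

/-- Reflection graph: cycle plus the matching `u ↔ 2 - u` patched at its fixed points. -/
def refl3 (c : ℕ) : SimpleGraph (Fin (3 + 2*c + 1)) where
  Adj u v := u ≠ v ∧ (v - u = 1 ∨ u - v = 1 ∨ u + v = 2 ∨
    (u = 1 ∧ v = mu c) ∨ (v = 1 ∧ u = mu c))
  symm := by
    constructor
    rintro u v ⟨hne, h | h | h | ⟨h, h'⟩ | ⟨h, h'⟩⟩
    · exact ⟨hne.symm, Or.inr (Or.inl h)⟩
    · exact ⟨hne.symm, Or.inl h⟩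
    · exact ⟨hne.symm, Or.inr (Or.inr (Or.inl (by linear_combination h)))⟩
    · exact ⟨hne.symm, Or.inr (Or.inr (Or.inr (Or.inr ⟨h, h'⟩)))⟩
    · exact ⟨hne.symm, Or.inr (Or.inr (Or.inr (Or.inl ⟨h, h'⟩)))⟩
  loopless := by constructor; rintro u ⟨hne, _⟩; exact hne rfl

lemma refl3_adj (u v : F) : (refl3 c).Adj u v ↔ u ≠ v ∧ (v - u = 1 ∨ u - v = 1 ∨ u + v = 2 ∨
    (u = 1 ∧ v = mu c) ∨ (v = 1 ∧ u = mu c)) := Iff.rfl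

lemma refl3_nb_generic (v : F) (h1 : v ≠ 1) (h2 : v ≠ mu c) :
    (refl3 c).neighborSet v = {v - 1, v + 1, 2 - v} := by
  ext u
  simp only [SimpleGraph.mem_neighborSet, refl3_adj, Set.mem_insert_iff, Set.mem_singleton_iff]
  constructor
  · rintro ⟨hne, h | h | h | ⟨h, h'⟩ | ⟨h, h'⟩⟩
    · right; left; linear_combination h
    · left; linear_combination -h
    · right; right; linear_combination h
    · exact absurd h h1
    · exact absurd h' h2
  · rintro (rfl | rfl | rfl)
    · refine ⟨?_, Or.inr (Or.inl (by ring))⟩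
      intro h
      exact fone_ne_zero (by linear_combination h)
    · refine ⟨?_, Or.inl (by ring)⟩
      intro h
      exact fone_ne_zero (by linear_combination -h)
    · refine ⟨?_, Or.inr (Or.inr (Or.inl (by ring)))⟩
      intro h
      have : v + v = 2 := by linear_combination h
      rcases double_eq_two v this with h' | h'
      · exact h1 h'
      · exact h2 h'

lemma refl3_nb_one :
    (refl3 c).neighborSet 1 = {0, 2, mu c} := by
  ext u
  simp only [SimpleGraph.mem_neighborSet, refl3_adj, Set.mem_insert_iff, Set.mem_singleton_iff]
  constructor
  · rintro ⟨hne, h | h | h | ⟨h, h'⟩ | ⟨h, h'⟩⟩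
    · right; left; linear_combination h
    · left; linear_combination -h
    · exact absurd (by linear_combination h : u = (1:F)) (Ne.symm hne)
    · exact Or.inr (Or.inr h')
    · exact absurd h'.symm mu_ne_one
  · rintro (rfl | rfl | rfl)
    · exact ⟨fone_ne_zero, Or.inr (Or.inl (by ring))⟩
    · exact ⟨fone_ne_two, Or.inl (by ring)⟩
    · refine ⟨mu_ne_one.symm, Or.inr (Or.inr (Or.inr (Or.inl ⟨?_, ?_⟩)))⟩ <;> trivial

lemma refl3_nb_mu :
    (refl3 c).neighborSet (mu c) = {mu c - 1, mu c + 1, 1} := by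
  ext u
  simp only [SimpleGraph.mem_neighborSet, refl3_adj, Set.mem_insert_iff, Set.mem_singleton_iff]
  constructor
  · rintro ⟨hne, h | h | h | ⟨h, h'⟩ | ⟨h, h'⟩⟩
    · right; left; linear_combination h
    · left; linear_combination -h
    · exact absurd (by linear_combination h - mu_add_mu : u = mu c) (Ne.symm hne)
    · exact absurd h mu_ne_one
    · exact Or.inr (Or.inr h)
  · rintro (rfl | rfl | rfl)
    · refine ⟨?_, Or.inr (Or.inl (by ring))⟩
      intro h
      exact fone_ne_zero (by linear_combination h)
    · refine ⟨?_, Or.inl (by ring)⟩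
      intro h
      exact fone_ne_zero (by linear_combination -h)
    · refine ⟨mu_ne_one, Or.inr (Or.inr (Or.inr (Or.inr ⟨?_, ?_⟩)))⟩ <;> trivial

lemma refl3_reg (v : F) : ((refl3 c).neighborSet v).ncard = 3 := by
  by_cases h1 : v = 1
  · subst h1
    rw [refl3_nb_one]
    exact ncard3 _ _ _ (Ne.symm ftwo_ne_zero) (Ne.symm mu_ne_zero) (Ne.symm mu_ne_two)
  by_cases h2 : v = mu c
  · subst h2
    rw [refl3_nb_mu]
    refine ncard3 _ _ _ ?_ ?_ ?_
    · intro h; exact ftwo_ne_zero (by linear_combination -h)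
    · intro h; exact mu_ne_two (by linear_combination h)
    · intro h; exact mu_ne_zero (by linear_combination h)
  · rw [refl3_nb_generic v h1 h2]
    refine ncard3 _ _ _ ?_ ?_ ?_
    · intro h; exact ftwo_ne_zero (by linear_combination -h)
    · intro h; exact double_ne_three v (by linear_combination h)
    · intro h; exact double_ne_one v (by linear_combination h)

lemma refl3_tri : ∃ x y z : F, (refl3 c).Adj x y ∧ (refl3 c).Adj y z ∧ (refl3 c).Adj x z := by
  refine ⟨0, 1, 2, ⟨Ne.symm fone_ne_zero, Or.inl (by ring)⟩,
    ⟨fone_ne_two, Or.inl (by ring)⟩, ⟨?_, Or.inr (Or.inr (Or.inl (by ring)))⟩⟩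
  intro h
  exact ftwo_ne_zero h.symm

end Three

/-- Case a = 3 (b even): reflection construction. -/
lemma case_three {b : ℕ} (hbe : b % 2 = 0) :
    ∃ L H : SimpleGraph (Fin (3 + b + 1)), IsWGraph L H 3 b 3 := by
  obtain ⟨c, rfl⟩ : ∃ c, b = 2*c := ⟨b/2, by omega⟩
  exact ⟨refl3 c, _, master (a := 3) (b := 2*c) (refl3 c) refl3_reg refl3_tri⟩


/-- For `a ≥ 3` and `a·b` even, there is an `(a,b)`-regular weighted graph of
girth 3 on exactly `a+b+1` vertices. -/
theorem stmt_7 (a b : ℕ) (ha : 3 ≤ a) (hab : (a * b) % 2 = 0) :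
    ∃ L H : SimpleGraph (Fin (a + b + 1)), IsWGraph L H a b 3 := by
  rcases Nat.even_or_odd a with hae | hao
  · have hae' := Nat.even_iff.mp hae
    exact case_even (by omega) hae'
  · have hao' : a % 2 = 1 := Nat.odd_iff.mp hao
    have hbe : b % 2 = 0 := by
      rcases Nat.even_or_odd b with h | h
      · exact Nat.even_iff.mp h
      · exfalso; rw [Nat.mul_mod, hao', Nat.odd_iff.mp h] at hab; simp at hab
    rcases Nat.lt_or_ge a 5 with h5 | h5
    · have : a = 3 := by omega
      subst this
      exact case_three hbe
    · exact case_odd h5 hao' hbe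
end

section
/- Let a ≥ 3 and b ≥ 0 be integers with both a and b odd. Then there is no (a,b)-regular weighted graph of girth 3 on a+b+1 vertices, but there exists one on a+b+2 vertices. Hence the minimum order n(a,b,3) equals a+b+2. -/
open SimpleGraph

/-- matching graph from a function -/
def matchG {V : Type*} (f : V → V) : SimpleGraph V where
  Adj x y := x ≠ y ∧ y = f x ∧ x = f y
  symm := ⟨by intro x y ⟨h1,h2,h3⟩; exact ⟨h1.symm, h3, h2⟩⟩
  loopless := ⟨by intro x ⟨h1,_⟩; exact h1 rfl⟩

lemma matchG_adj {V : Type*} (f : V → V) (hf : Function.Involutive f)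
    (hne : ∀ x, f x ≠ x) (x y : V) : (matchG f).Adj x y ↔ y = f x := by
  constructor
  · rintro ⟨-, h, -⟩; exact h
  · rintro rfl; exact ⟨(hne x).symm, rfl, (hf x).symm⟩

lemma matchG_nbr {V : Type*} (f : V → V) (hf : Function.Involutive f)
    (hne : ∀ x, f x ≠ x) (v : V) : (matchG f).neighborSet v = {f v} := by
  ext y; simp [neighborSet, matchG_adj f hf hne]

/-- circulant graph -/
def circG {N : ℕ} (D : Finset (ZMod N)) : SimpleGraph (ZMod N) where
  Adj x y := x ≠ y ∧ (y - x ∈ D ∨ x - y ∈ D)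
  symm := ⟨by intro x y ⟨h1,h2⟩; exact ⟨h1.symm, h2.symm⟩⟩
  loopless := ⟨by intro x ⟨h1,_⟩; exact h1 rfl⟩

lemma circG_adj {N : ℕ} (D : Finset (ZMod N)) (hsym : ∀ d ∈ D, -d ∈ D)
    (h0 : (0 : ZMod N) ∉ D) (x y : ZMod N) : (circG D).Adj x y ↔ y - x ∈ D := by
  constructor
  · rintro ⟨h1, h2 | h2⟩
    · exact h2
    · simpa using hsym _ h2
  · intro h
    refine ⟨fun hxy => ?_, Or.inl h⟩
    subst hxy; simp at h; exact h0 h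

lemma circG_nbr {N : ℕ} (D : Finset (ZMod N)) (hsym : ∀ d ∈ D, -d ∈ D)
    (h0 : (0 : ZMod N) ∉ D) (v : ZMod N) :
    (circG D).neighborSet v = (fun d => v + d) '' (D : Set (ZMod N)) := by
  ext y
  simp only [mem_neighborSet, circG_adj D hsym h0, Set.mem_image, Finset.mem_coe]
  constructor
  · intro h; exact ⟨y - v, h, by ring⟩
  · rintro ⟨d, hd, rfl⟩; simpa using hd

lemma circG_nbr_ncard {N : ℕ} (D : Finset (ZMod N)) (hsym : ∀ d ∈ D, -d ∈ D)
    (h0 : (0 : ZMod N) ∉ D) (v : ZMod N) :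
    ((circG D).neighborSet v).ncard = D.card := by
  rw [circG_nbr D hsym h0, Set.ncard_image_of_injective _ (add_right_injective v),
    Set.ncard_coe_finset]

-- cast helpers
lemma cast_inj_lt {N i j : ℕ} [NeZero N] (hi : i < N) (hj : j < N)
    (h : (i : ZMod N) = (j : ZMod N)) : i = j := by
  have := congrArg ZMod.val h
  rwa [ZMod.val_cast_of_lt hi, ZMod.val_cast_of_lt hj] at this

lemma cast_ne_neg_cast {N i j : ℕ} [NeZero N] (h0 : 0 < i + j) (hij : i + j < N) :
    (i : ZMod N) ≠ -(j : ZMod N) := by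
  intro h
  have h2 : ((i + j : ℕ) : ZMod N) = 0 := by push_cast; rw [h]; ring
  rw [ZMod.natCast_eq_zero_iff] at h2
  exact absurd (Nat.le_of_dvd h0 h2) (by omega)

lemma neg_cast_eq {N i j : ℕ} [NeZero N] (h : i + j = N) :
    -(i : ZMod N) = (j : ZMod N) := by
  have : ((i + j : ℕ) : ZMod N) = 0 := by rw [h]; simp
  push_cast at this
  linear_combination -this

lemma cast_val_eq {N : ℕ} [NeZero N] (x : ZMod N) : ((x.val : ℕ) : ZMod N) = x := by
  rw [ZMod.natCast_val, ZMod.cast_id]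

lemma parity_flip {N : ℕ} [NeZero N] (hN : Even N) (hN2 : 2 ≤ N) (x : ZMod N) :
    (Even ((x + 1).val) ↔ ¬ Even x.val) := by
  haveI : Fact (1 < N) := ⟨by omega⟩
  have val1 : (1 : ZMod N).val = 1 := ZMod.val_one N
  rcases Nat.lt_or_ge (x.val + 1) N with h | h
  · have h1 : (x + 1).val = x.val + 1 := by
      rw [ZMod.val_add_of_lt (by omega)]; omega
    rw [h1]; simp [Nat.even_add_one]
  · have hxv : x.val = N - 1 := by have := ZMod.val_lt x; omega
    have h1 : x + 1 = 0 := by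
      have hx := cast_val_eq x
      rw [← hx, hxv]
      have : ((N - 1 : ℕ) : ZMod N) + ((1:ℕ) : ZMod N) = ((N : ℕ) : ZMod N) := by
        rw [← Nat.cast_add]; congr 1; omega
      simpa using this
    rw [h1]
    have : ¬ Even (N - 1) := by
      rcases hN with ⟨t, ht⟩; rintro ⟨s, hs⟩; omega
    simp [hxv, ZMod.val_zero, this]

lemma sub_one_val {N : ℕ} [NeZero N] (x : ZMod N) (hx : x ≠ 0) :
    (x - 1).val = x.val - 1 := by
  have hpos : 0 < x.val := by
    rcases Nat.eq_zero_or_pos x.val with h | h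
    · exfalso; apply hx; rw [← cast_val_eq x, h]; simp
    · exact h
  have h2 : ((x.val - 1 : ℕ) : ZMod N) = x - 1 := by
    have : ((x.val - 1 : ℕ) : ZMod N) + 1 = x := by
      rw [show (1 : ZMod N) = ((1:ℕ) : ZMod N) by simp, ← Nat.cast_add,
        show x.val - 1 + 1 = x.val by omega, cast_val_eq]
    linear_combination this
  rw [← h2, ZMod.val_cast_of_lt (by have := ZMod.val_lt x; omega)]

lemma add_one_val {N : ℕ} [NeZero N] (x : ZMod N) (hx : x.val + 1 < N) :
    (x + 1).val = x.val + 1 := by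
  haveI : Fact (1 < N) := ⟨by omega⟩
  rw [ZMod.val_add_of_lt (by rw [ZMod.val_one]; omega), ZMod.val_one]


lemma triangle_cycle {V : Type*} {G : SimpleGraph V} {x y z : V}
    (hxy : G.Adj x y) (hyz : G.Adj y z) (hzx : G.Adj z x) :
    ((Walk.cons hxy (Walk.cons hyz (Walk.cons hzx Walk.nil))) : G.Walk x x).IsCycle := by
  have hxz : x ≠ z := hzx.ne'
  have hxy' : x ≠ y := hxy.ne
  have hyz' : y ≠ z := hyz.ne
  constructor
  · constructor
    · simp [Walk.isTrail_def, Sym2.eq, Sym2.rel_iff', hxy', hyz', hxz, hxz.symm,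
        hxy'.symm, hyz'.symm]
    · simp
  · simp [hxy', hyz', hxz, hxy'.symm, hyz'.symm, hxz.symm]

open Classical in
lemma wWeight_ge {V : Type*} (L H : SimpleGraph V) {u : V}
    (w : (L ⊔ H).Walk u u) (hc : w.IsCycle) : 3 ≤ wWeight L H w := by
  have h3 : 3 ≤ w.length := hc.three_le_length
  have hlen : w.edges.length = w.length := w.length_edges
  calc 3 ≤ w.edges.length := by omega
    _ = (w.edges.map fun e => (1:ℕ)).sum := by simp
    _ ≤ _ := by
        apply List.sum_le_sum
        intro e he
        split <;> omega

open Classical in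
lemma wWeight_triangle {V : Type*} (L H : SimpleGraph V) {x y z : V}
    (hxy : L.Adj x y) (hyz : L.Adj y z) (hzx : L.Adj z x) :
    wWeight L H (Walk.cons ((sup_adj L H x y).mpr (Or.inl hxy))
      (Walk.cons ((sup_adj L H y z).mpr (Or.inl hyz))
      (Walk.cons ((sup_adj L H z x).mpr (Or.inl hzx)) Walk.nil))) = 3 := by
  simp [wWeight, Walk.edges, hxy, hyz, hzx]


lemma ncard_nbr_eq_degree {V : Type*} [Fintype V] (G : SimpleGraph V) [DecidableRel G.Adj]
    (v : V) : (G.neighborSet v).ncard = G.degree v := by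
  rw [Set.ncard_eq_toFinset_card', Set.toFinset_card, card_neighborSet_eq_degree]

lemma neighborSet_sup' {V : Type*} (G G' : SimpleGraph V) (v : V) :
    (G ⊔ G').neighborSet v = G.neighborSet v ∪ G'.neighborSet v := by
  ext w; simp [mem_neighborSet]

lemma compl_nbr_ncard {V : Type*} [Fintype V] (G : SimpleGraph V) (v : V) :
    (Gᶜ.neighborSet v).ncard = Fintype.card V - 1 - (G.neighborSet v).ncard := by
  classical
  rw [ncard_nbr_eq_degree, ncard_nbr_eq_degree, degree_compl]

lemma lower_bound_core {n a b : ℕ} (hao : Odd a)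
    (L H : SimpleGraph (Fin n)) (hd : Disjoint L H)
    (hL : ∀ v, (L.neighborSet v).ncard = a) (hH : ∀ v, (H.neighborSet v).ncard = b)
    (u : Fin n) : Even n ∧ a + b + 1 ≤ n := by
  classical
  have hdeg : ∀ v, L.degree v = a := by
    intro v; rw [← hL v, ncard_nbr_eq_degree]
  constructor
  · have heven := SimpleGraph.even_card_odd_degree_vertices L
    rw [Finset.filter_true_of_mem (fun v _ => by rw [hdeg]; exact hao)] at heven
    simpa using heven
  · have hdisj : Disjoint (L.neighborSet u) (H.neighborSet u) := by
      rw [Set.disjoint_left]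
      intro x hx1 hx2
      have hbot : (L ⊓ H).Adj u x := ⟨hx1, hx2⟩
      rw [disjoint_iff.mp hd] at hbot
      simpa using hbot
    have hsub : L.neighborSet u ∪ H.neighborSet u ⊆ {u}ᶜ := by
      rintro x (hx | hx) <;> simp [(Adj.ne' hx)]
    have hcard : (L.neighborSet u ∪ H.neighborSet u).ncard = a + b := by
      rw [Set.ncard_union_eq hdisj (Set.toFinite _) (Set.toFinite _), hL, hH]
    have hle : a + b ≤ ({u}ᶜ : Set (Fin n)).ncard := by
      rw [← hcard]
      exact Set.ncard_le_ncard hsub (Set.toFinite _)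
    have hcompl : ({u}ᶜ : Set (Fin n)).ncard + ({u} : Set (Fin n)).ncard = n := by
      rw [add_comm]
      rw [Set.ncard_add_ncard_compl]
      simp [Nat.card_eq_fintype_card]
    have h1 : ({u} : Set (Fin n)).ncard = 1 := Set.ncard_singleton u
    have := Fin.pos u
    omega

section Bge3
variable (k l : ℕ)

local notation "NN" => 2*k+2*l+4

noncomputable def DL : Finset (ZMod NN) :=
  (Finset.Icc (l+2) (k+l+1)).image (fun j : ℕ => (j : ZMod NN)) ∪
  (Finset.Icc (l+2) (k+l+1)).image (fun j : ℕ => -(j : ZMod NN))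

lemma mem_DL {d : ZMod NN} :
    d ∈ DL k l ↔ ∃ j, l+2 ≤ j ∧ j ≤ k+l+1 ∧ ((j : ZMod NN) = d ∨ -(j : ZMod NN) = d) := by
  simp only [DL, Finset.mem_union, Finset.mem_image, Finset.mem_Icc]
  constructor
  · rintro (⟨j, ⟨h1, h2⟩, h3⟩ | ⟨j, ⟨h1, h2⟩, h3⟩)
    · exact ⟨j, h1, h2, Or.inl h3⟩
    · exact ⟨j, h1, h2, Or.inr h3⟩
  · rintro ⟨j, h1, h2, h3 | h3⟩
    · exact Or.inl ⟨j, ⟨h1, h2⟩, h3⟩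
    · exact Or.inr ⟨j, ⟨h1, h2⟩, h3⟩

lemma DL_sym : ∀ d ∈ DL k l, -d ∈ DL k l := by
  intro d hd
  rw [mem_DL] at hd ⊢
  obtain ⟨j, h1, h2, h3 | h3⟩ := hd
  · exact ⟨j, h1, h2, Or.inr (by rw [h3])⟩
  · exact ⟨j, h1, h2, Or.inl (by rw [← h3, neg_neg])⟩

lemma NN_pos : NeZero NN := ⟨by omega⟩

lemma DL_zero_not_mem : (0 : ZMod NN) ∉ DL k l := by
  haveI : NeZero NN := NN_pos k l
  rw [mem_DL]
  rintro ⟨j, h1, h2, h3 | h3⟩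
  · have : j = 0 := by
      have := cast_inj_lt (N := NN) (i := j) (j := 0) (by omega) (by omega) (by simpa using h3)
      omega
    omega
  · have : (j : ZMod NN) = 0 := by rw [← neg_neg (j : ZMod NN), h3]; simp
    have : j = 0 := by
      have := cast_inj_lt (N := NN) (i := j) (j := 0) (by omega) (by omega) (by simpa using this)
      omega
    omega

lemma DL_card : (DL k l).card = 2 * k := by
  haveI : NeZero NN := NN_pos k l
  have hinj1 : Set.InjOn (fun j : ℕ => (j : ZMod NN)) (Finset.Icc (l+2) (k+l+1)) := by
    intro i hi j hj h
    simp only [Finset.coe_Icc, Set.mem_Icc] at hi hj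
    exact cast_inj_lt (by omega) (by omega) h
  have hinj2 : Set.InjOn (fun j : ℕ => -(j : ZMod NN)) (Finset.Icc (l+2) (k+l+1)) := by
    intro i hi j hj h
    simp only [Finset.coe_Icc, Set.mem_Icc] at hi hj
    exact cast_inj_lt (by omega) (by omega) (neg_injective h)
  have hdisj : Disjoint ((Finset.Icc (l+2) (k+l+1)).image (fun j : ℕ => (j : ZMod NN)))
      ((Finset.Icc (l+2) (k+l+1)).image (fun j : ℕ => -(j : ZMod NN))) := by
    rw [Finset.disjoint_left]
    rintro x hx1 hx2
    simp only [Finset.mem_image, Finset.mem_Icc] at hx1 hx2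
    obtain ⟨i, hi, rfl⟩ := hx1
    obtain ⟨j, hj, hij⟩ := hx2
    exact cast_ne_neg_cast (by omega) (by omega) hij.symm
  rw [DL, Finset.card_union_of_disjoint hdisj, Finset.card_image_of_injOn hinj1,
    Finset.card_image_of_injOn hinj2, Nat.card_Icc]
  omega

/-- the special matching for `L` -/
def fL (x : ZMod NN) : ZMod NN :=
  if x = 0 then 2 else if x = 1 then 3 else if x = 2 then 0 else if x = 3 then 1
  else if Even x.val then x + 1 else x - 1

/-- the extra matching `M₀` -/
def f0 (x : ZMod NN) : ZMod NN := if Even x.val then x - 1 else x + 1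

section kl1
variable (hk : 1 ≤ k) (hl : 1 ≤ l)
include hk hl

lemma numeral_ne {i j : ℕ} (hi : i < NN) (hj : j < NN) (hij : i ≠ j) :
    (i : ZMod NN) ≠ (j : ZMod NN) := by
  haveI : NeZero NN := NN_pos k l
  exact fun h => hij (cast_inj_lt hi hj h)

lemma val_numeral {c : ℕ} (hc : c < NN) : ((c : ZMod NN)).val = c := by
  haveI : NeZero NN := NN_pos k l
  exact ZMod.val_cast_of_lt hc

lemma NN_even : Even NN := ⟨k + l + 2, by ring⟩

lemma flip1 (x : ZMod NN) : Even ((x + 1).val) ↔ ¬ Even x.val := by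
  haveI : NeZero NN := NN_pos k l
  exact parity_flip (NN_even k l hk hl) (by omega) x

lemma flip2 (x : ZMod NN) : Even x.val ↔ ¬ Even ((x - 1).val) := by
  have h := flip1 k l hk hl (x - 1)
  rw [show x - 1 + 1 = x by ring] at h
  exact h

lemma not_mem_DL_small {c : ℕ} (hc1 : 1 ≤ c) (hc2 : c ≤ 2) : (c : ZMod NN) ∉ DL k l := by
  haveI : NeZero NN := NN_pos k l
  rw [mem_DL]
  rintro ⟨j, h1, h2, h3 | h3⟩
  · have := cast_inj_lt (N := NN) (i := j) (j := c) (by omega) (by omega) h3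
    omega
  · exact cast_ne_neg_cast (N := NN) (i := c) (j := j) (by omega) (by omega) h3.symm

lemma not_mem_DL_small_neg {c : ℕ} (hc1 : 1 ≤ c) (hc2 : c ≤ 2) :
    -(c : ZMod NN) ∉ DL k l := by
  intro h
  have := DL_sym k l _ h
  rw [neg_neg] at this
  exact not_mem_DL_small k l hk hl hc1 hc2 this

lemma fL_invol : Function.Involutive (fL k l) := by
  haveI : NeZero NN := NN_pos k l
  have h20 : (2 : ZMod NN) ≠ 0 := by
    exact_mod_cast numeral_ne k l hk hl (i := 2) (j := 0) (by omega) (by omega) (by omega)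
  have h21 : (2 : ZMod NN) ≠ 1 := by
    exact_mod_cast numeral_ne k l hk hl (i := 2) (j := 1) (by omega) (by omega) (by omega)
  have h30 : (3 : ZMod NN) ≠ 0 := by
    exact_mod_cast numeral_ne k l hk hl (i := 3) (j := 0) (by omega) (by omega) (by omega)
  have h31 : (3 : ZMod NN) ≠ 1 := by
    exact_mod_cast numeral_ne k l hk hl (i := 3) (j := 1) (by omega) (by omega) (by omega)
  have h32 : (3 : ZMod NN) ≠ 2 := by
    exact_mod_cast numeral_ne k l hk hl (i := 3) (j := 2) (by omega) (by omega) (by omega)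
  have h10 : (1 : ZMod NN) ≠ 0 := by
    exact_mod_cast numeral_ne k l hk hl (i := 1) (j := 0) (by omega) (by omega) (by omega)
  intro x
  by_cases h0 : x = 0
  · subst h0; simp [fL, h20, h21, h10.symm, h30.symm]
  by_cases h1 : x = 1
  · subst h1; simp [fL, h30, h31, h32, h10, h20.symm]
  by_cases h2 : x = 2
  · subst h2; simp [fL, h20, h21, h10.symm, h20.symm, h30.symm]
  by_cases h3 : x = 3
  · subst h3; simp [fL, h30, h31, h32, h10, h20.symm, h31.symm]
  have hbranch : fL k l x = if Even x.val then x + 1 else x - 1 := by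
    simp [fL, h0, h1, h2, h3]
  by_cases hev : Even x.val
  · rw [hbranch, if_pos hev]
    have hA : ¬ Even ((x + 1).val) := by
      rw [flip1 k l hk hl]; exact fun h => h hev
    have e0 : x + 1 ≠ 0 := by
      intro h; rw [h] at hA; simp at hA
    have e1 : x + 1 ≠ 1 := by
      intro h; exact h0 (by linear_combination h)
    have e2 : x + 1 ≠ 2 := by
      intro h; exact h1 (by linear_combination h)
    have e3 : x + 1 ≠ 3 := by
      intro h; exact h2 (by linear_combination h)
    rw [show fL k l (x+1) = if Even (x+1).val then (x+1) + 1 else (x+1) - 1 by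
      simp [fL, e0, e1, e2, e3], if_neg hA]
    ring
  · rw [hbranch, if_neg hev]
    have hA : Even ((x - 1).val) := by
      by_contra hc
      exact hev ((flip2 k l hk hl x).mpr hc)
    have e0 : x - 1 ≠ 0 := by
      intro h; exact h1 (by linear_combination h)
    have e1 : x - 1 ≠ 1 := by
      intro h; exact h2 (by linear_combination h)
    have e2 : x - 1 ≠ 2 := by
      intro h; exact h3 (by linear_combination h)
    have e3 : x - 1 ≠ 3 := by
      intro h
      have hx4 : x = ((4 : ℕ) : ZMod NN) := by push_cast; linear_combination h
      apply hev
      rw [hx4, val_numeral k l hk hl (by omega)]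
      decide
    rw [show fL k l (x-1) = if Even (x-1).val then (x-1) + 1 else (x-1) - 1 by
      simp [fL, e0, e1, e2, e3], if_pos hA]
    ring

lemma fL_ne : ∀ x, fL k l x ≠ x := by
  haveI : NeZero NN := NN_pos k l
  have h10 : (1 : ZMod NN) ≠ 0 := by
    exact_mod_cast numeral_ne k l hk hl (i := 1) (j := 0) (by omega) (by omega) (by omega)
  have h20 : (2 : ZMod NN) ≠ 0 := by
    exact_mod_cast numeral_ne k l hk hl (i := 2) (j := 0) (by omega) (by omega) (by omega)
  have h31 : (3 : ZMod NN) ≠ 1 := by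
    exact_mod_cast numeral_ne k l hk hl (i := 3) (j := 1) (by omega) (by omega) (by omega)
  intro x
  by_cases h0 : x = 0
  · subst h0; simp [fL, h20]
  by_cases h1 : x = 1
  · subst h1; simp [fL, h10, h31]
  by_cases h2 : x = 2
  · subst h2
    have h21 : (2 : ZMod NN) ≠ 1 := by
      exact_mod_cast numeral_ne k l hk hl (i := 2) (j := 1) (by omega) (by omega) (by omega)
    simp [fL, h20, h21, h20.symm]
  by_cases h3 : x = 3
  · subst h3
    have h30 : (3 : ZMod NN) ≠ 0 := by
      exact_mod_cast numeral_ne k l hk hl (i := 3) (j := 0) (by omega) (by omega) (by omega)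
    have h32 : (3 : ZMod NN) ≠ 2 := by
      exact_mod_cast numeral_ne k l hk hl (i := 3) (j := 2) (by omega) (by omega) (by omega)
    simp [fL, h30, h31, h32, h31.symm]
  rw [show fL k l x = if Even x.val then x + 1 else x - 1 by simp [fL, h0, h1, h2, h3]]
  by_cases hev : Even x.val
  · rw [if_pos hev]; intro h; exact h10 (by linear_combination h)
  · rw [if_neg hev]; intro h; exact h10 (by linear_combination -h)

lemma fL_sub_not_mem : ∀ x, fL k l x - x ∉ DL k l := by
  haveI : NeZero NN := NN_pos k l
  intro x
  by_cases h0 : x = 0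
  · subst h0
    rw [show fL k l 0 = 2 by simp [fL], show (2 : ZMod NN) - 0 = ((2:ℕ) : ZMod NN) by
      push_cast; ring]
    exact not_mem_DL_small k l hk hl (by omega) (by omega)
  by_cases h1 : x = 1
  · subst h1
    rw [show fL k l 1 - 1 = ((2:ℕ) : ZMod NN) by
      rw [show fL k l 1 = 3 by
        simp [fL, show (1 : ZMod NN) ≠ 0 from
          by exact_mod_cast numeral_ne k l hk hl (i:=1) (j:=0) (by omega) (by omega) (by omega)]]
      push_cast; ring]
    exact not_mem_DL_small k l hk hl (by omega) (by omega)
  by_cases h2 : x = 2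
  · subst h2
    rw [show fL k l 2 - 2 = -((2:ℕ) : ZMod NN) by
      rw [show fL k l 2 = 0 by
        simp [fL, show (2 : ZMod NN) ≠ 0 from
          by exact_mod_cast numeral_ne k l hk hl (i:=2) (j:=0) (by omega) (by omega) (by omega),
          show (2 : ZMod NN) ≠ 1 from
          by exact_mod_cast numeral_ne k l hk hl (i:=2) (j:=1) (by omega) (by omega) (by omega)]]
      push_cast; ring]
    exact not_mem_DL_small_neg k l hk hl (by omega) (by omega)
  by_cases h3 : x = 3
  · subst h3
    rw [show fL k l 3 - 3 = -((2:ℕ) : ZMod NN) by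
      rw [show fL k l 3 = 1 by
        simp [fL, show (3 : ZMod NN) ≠ 0 from
          by exact_mod_cast numeral_ne k l hk hl (i:=3) (j:=0) (by omega) (by omega) (by omega),
          show (3 : ZMod NN) ≠ 1 from
          by exact_mod_cast numeral_ne k l hk hl (i:=3) (j:=1) (by omega) (by omega) (by omega),
          show (3 : ZMod NN) ≠ 2 from
          by exact_mod_cast numeral_ne k l hk hl (i:=3) (j:=2) (by omega) (by omega) (by omega)]]
      push_cast; ring]
    exact not_mem_DL_small_neg k l hk hl (by omega) (by omega)
  rw [show fL k l x = if Even x.val then x + 1 else x - 1 by simp [fL, h0, h1, h2, h3]]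
  by_cases hev : Even x.val
  · rw [if_pos hev, show x + 1 - x = ((1:ℕ) : ZMod NN) by push_cast; ring]
    exact not_mem_DL_small k l hk hl (by omega) (by omega)
  · rw [if_neg hev, show x - 1 - x = -((1:ℕ) : ZMod NN) by push_cast; ring]
    exact not_mem_DL_small_neg k l hk hl (by omega) (by omega)

lemma f0_invol : Function.Involutive (f0 k l) := by
  haveI : NeZero NN := NN_pos k l
  intro x
  by_cases hev : Even x.val
  · rw [show f0 k l x = x - 1 by simp [f0, hev]]
    have hA : ¬ Even ((x - 1).val) := (flip2 k l hk hl x).mp hev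
    rw [show f0 k l (x - 1) = (x - 1) + 1 by simp [f0, hA]]
    ring
  · rw [show f0 k l x = x + 1 by simp [f0, hev]]
    have hA : Even ((x + 1).val) := (flip1 k l hk hl x).mpr hev
    rw [show f0 k l (x + 1) = (x + 1) - 1 by simp [f0, hA]]
    ring

lemma f0_ne : ∀ x, f0 k l x ≠ x := by
  haveI : NeZero NN := NN_pos k l
  have h10 : (1 : ZMod NN) ≠ 0 := by
    exact_mod_cast numeral_ne k l hk hl (i := 1) (j := 0) (by omega) (by omega) (by omega)
  intro x
  by_cases hev : Even x.val
  · rw [show f0 k l x = x - 1 by simp [f0, hev]]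
    intro h; exact h10 (by linear_combination -h)
  · rw [show f0 k l x = x + 1 by simp [f0, hev]]
    intro h; exact h10 (by linear_combination h)

lemma f0_sub_not_mem : ∀ x, f0 k l x - x ∉ DL k l := by
  haveI : NeZero NN := NN_pos k l
  intro x
  by_cases hev : Even x.val
  · rw [show f0 k l x = x - 1 by simp [f0, hev],
      show x - 1 - x = -((1:ℕ) : ZMod NN) by push_cast; ring]
    exact not_mem_DL_small_neg k l hk hl (by omega) (by omega)
  · rw [show f0 k l x = x + 1 by simp [f0, hev],
      show x + 1 - x = ((1:ℕ) : ZMod NN) by push_cast; ring]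
    exact not_mem_DL_small k l hk hl (by omega) (by omega)

lemma f0_ne_fL : ∀ x, f0 k l x ≠ fL k l x := by
  haveI : NeZero NN := NN_pos k l
  have hval : ∀ c : ℕ, c < NN → ((c : ZMod NN)).val = c := fun c hc => val_numeral k l hk hl hc
  have hv0 : ((0 : ZMod NN)).val = 0 := by simpa using hval 0 (by omega)
  have hv1 : ((1 : ZMod NN)).val = 1 := by
    have := hval 1 (by omega); rwa [Nat.cast_one] at this
  have hv2 : ((2 : ZMod NN)).val = 2 := by
    have := hval 2 (by omega); rwa [Nat.cast_two] at this
  have hv3 : ((3 : ZMod NN)).val = 3 := by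
    have := hval 3 (by omega); norm_cast at this
  intro x
  by_cases h0 : x = 0
  · subst h0
    rw [show fL k l 0 = 2 by simp [fL], show f0 k l 0 = 0 - 1 by simp [f0, hv0]]
    rw [show (0 : ZMod NN) - 1 = -((1:ℕ) : ZMod NN) by push_cast; ring,
      show (2 : ZMod NN) = ((2:ℕ) : ZMod NN) by push_cast; ring]
    intro h
    exact cast_ne_neg_cast (N := NN) (i := 2) (j := 1) (by omega) (by omega) h.symm
  by_cases h1 : x = 1
  · subst h1
    rw [show fL k l 1 = 3 by
        simp [fL, show (1 : ZMod NN) ≠ 0 from by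
          rw [show (1 : ZMod NN) = ((1:ℕ):ZMod NN) by push_cast; ring]
          exact_mod_cast numeral_ne k l hk hl (i:=1) (j:=0) (by omega) (by omega) (by omega)],
      show f0 k l 1 = 1 + 1 by simp [f0, hv1]]
    intro h
    have : (1 : ZMod NN) = 0 := by linear_combination -h
    exact (by exact_mod_cast numeral_ne k l hk hl (i:=1) (j:=0) (by omega) (by omega) (by omega) :
      (1 : ZMod NN) ≠ 0) this
  by_cases h2 : x = 2
  · subst h2
    have hne20 : (2 : ZMod NN) ≠ 0 := by
      exact_mod_cast numeral_ne k l hk hl (i:=2) (j:=0) (by omega) (by omega) (by omega)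
    have hne21 : (2 : ZMod NN) ≠ 1 := by
      exact_mod_cast numeral_ne k l hk hl (i:=2) (j:=1) (by omega) (by omega) (by omega)
    rw [show fL k l 2 = 0 by simp [fL, hne20, hne21], show f0 k l 2 = 2 - 1 by simp [f0, hv2]]
    intro h
    have : (1 : ZMod NN) = 0 := by linear_combination h
    exact (by exact_mod_cast numeral_ne k l hk hl (i:=1) (j:=0) (by omega) (by omega) (by omega) :
      (1 : ZMod NN) ≠ 0) this
  by_cases h3 : x = 3
  · subst h3
    have hne30 : (3 : ZMod NN) ≠ 0 := by
      exact_mod_cast numeral_ne k l hk hl (i:=3) (j:=0) (by omega) (by omega) (by omega)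
    have hne31 : (3 : ZMod NN) ≠ 1 := by
      exact_mod_cast numeral_ne k l hk hl (i:=3) (j:=1) (by omega) (by omega) (by omega)
    have hne32 : (3 : ZMod NN) ≠ 2 := by
      exact_mod_cast numeral_ne k l hk hl (i:=3) (j:=2) (by omega) (by omega) (by omega)
    rw [show fL k l 3 = 1 by simp [fL, hne30, hne31, hne32],
      show f0 k l 3 = 3 + 1 by simp [f0, hv3, Nat.even_iff]]
    intro h
    have h41 : ((4:ℕ) : ZMod NN) = ((1:ℕ) : ZMod NN) := by push_cast; linear_combination h
    have := cast_inj_lt (N := NN) (i := 4) (j := 1) (by omega) (by omega) h41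
    omega
  have hbr : fL k l x = if Even x.val then x + 1 else x - 1 := by simp [fL, h0, h1, h2, h3]
  by_cases hev : Even x.val
  · rw [hbr, if_pos hev, show f0 k l x = x - 1 by simp [f0, hev]]
    intro h
    have h20 : ((2:ℕ) : ZMod NN) = ((0:ℕ) : ZMod NN) := by push_cast; linear_combination -h
    have := cast_inj_lt (N := NN) (i := 2) (j := 0) (by omega) (by omega) h20
    omega
  · rw [hbr, if_neg hev, show f0 k l x = x + 1 by simp [f0, hev]]
    intro h
    have h20 : ((2:ℕ) : ZMod NN) = ((0:ℕ) : ZMod NN) := by push_cast; linear_combination h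
    have := cast_inj_lt (N := NN) (i := 2) (j := 0) (by omega) (by omega) h20
    omega

noncomputable def Lg : SimpleGraph (ZMod NN) := circG (DL k l) ⊔ matchG (fL k l)
noncomputable def Gg : SimpleGraph (ZMod NN) := Lg k l ⊔ matchG (f0 k l)
noncomputable def Hg : SimpleGraph (ZMod NN) := (Gg k l)ᶜ

lemma Lg_nbr (v : ZMod NN) :
    (Lg k l).neighborSet v = (fun d => v + d) '' (DL k l : Set (ZMod NN)) ∪ {fL k l v} := by
  rw [Lg, neighborSet_sup', circG_nbr _ (DL_sym k l) (DL_zero_not_mem k l),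
    matchG_nbr _ (fL_invol k l hk hl) (fL_ne k l hk hl)]

lemma Lg_nbr_ncard (v : ZMod NN) : ((Lg k l).neighborSet v).ncard = 2*k+1 := by
  rw [Lg_nbr k l hk hl v, Set.ncard_union_eq ?disj (Set.toFinite _) (Set.toFinite _),
    Set.ncard_image_of_injective _ (add_right_injective v), Set.ncard_coe_finset,
    DL_card, Set.ncard_singleton]
  case disj =>
    rw [Set.disjoint_left]
    rintro x ⟨d, hd, rfl⟩ hx
    rw [Set.mem_singleton_iff] at hx
    apply fL_sub_not_mem k l hk hl v
    rw [← hx, show v + d - v = d by ring]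
    exact hd

lemma Gg_nbr_ncard (v : ZMod NN) : ((Gg k l).neighborSet v).ncard = 2*k+2 := by
  rw [Gg, neighborSet_sup', matchG_nbr _ (f0_invol k l hk hl) (f0_ne k l hk hl),
    Set.ncard_union_eq ?disj (Set.toFinite _) (Set.toFinite _),
    Lg_nbr_ncard k l hk hl v, Set.ncard_singleton]
  case disj =>
    rw [Set.disjoint_left, Lg_nbr k l hk hl v]
    rintro x (⟨d, hd, rfl⟩ | hx) hmem
    · rw [Set.mem_singleton_iff] at hmem
      apply f0_sub_not_mem k l hk hl v
      rw [← hmem, show v + d - v = d by ring]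
      exact hd
    · rw [Set.mem_singleton_iff] at hx hmem
      rw [hx] at hmem
      exact f0_ne_fL k l hk hl v hmem.symm

lemma Hg_nbr_ncard (v : ZMod NN) : ((Hg k l).neighborSet v).ncard = 2*l+1 := by
  haveI : NeZero NN := NN_pos k l
  rw [Hg, compl_nbr_ncard, Gg_nbr_ncard k l hk hl v, ZMod.card]
  omega

lemma tri1 : (Lg k l).Adj 0 2 := by
  apply (sup_adj _ _ _ _).mpr
  right
  exact (matchG_adj _ (fL_invol k l hk hl) (fL_ne k l hk hl) _ _).mpr (by simp [fL])

lemma tri2 : (Lg k l).Adj 2 ((k+l+3 : ℕ) : ZMod NN) := by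
  apply (sup_adj _ _ _ _).mpr
  left
  apply (circG_adj _ (DL_sym k l) (DL_zero_not_mem k l) _ _).mpr
  rw [show ((k+l+3 : ℕ) : ZMod NN) - 2 = ((k+l+1 : ℕ) : ZMod NN) by push_cast; ring]
  exact (mem_DL k l).mpr ⟨k+l+1, by omega, by omega, Or.inl rfl⟩

lemma tri3 : (Lg k l).Adj ((k+l+3 : ℕ) : ZMod NN) 0 := by
  haveI : NeZero NN := NN_pos k l
  apply (sup_adj _ _ _ _).mpr
  left
  apply (circG_adj _ (DL_sym k l) (DL_zero_not_mem k l) _ _).mpr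
  rw [show (0 : ZMod NN) - ((k+l+3 : ℕ) : ZMod NN) = -((k+l+3 : ℕ) : ZMod NN) by ring,
    neg_cast_eq (i := k+l+3) (j := k+l+1) (by omega)]
  exact (mem_DL k l).mpr ⟨k+l+1, by omega, by omega, Or.inl rfl⟩

lemma exists_b3 : ∃ L H : SimpleGraph (ZMod NN), IsWGraph L H (2*k+1) (2*l+1) 3 := by
  refine ⟨Lg k l, Hg k l, ?_, Lg_nbr_ncard k l hk hl, Hg_nbr_ncard k l hk hl, ?_, ?_⟩
  · rw [disjoint_iff_inf_le]
    intro v w h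
    obtain ⟨h1, h2⟩ := h
    rw [Hg, compl_adj] at h2
    exact absurd ((sup_adj _ _ _ _).mpr (Or.inl h1)) h2.2
  · refine ⟨0, Walk.cons ((sup_adj _ _ _ _).mpr (Or.inl (tri1 k l hk hl)))
      (Walk.cons ((sup_adj _ _ _ _).mpr (Or.inl (tri2 k l hk hl)))
      (Walk.cons ((sup_adj _ _ _ _).mpr (Or.inl (tri3 k l hk hl))) Walk.nil)), ?_, ?_⟩
    · exact triangle_cycle _ _ _
    · exact wWeight_triangle _ _ (tri1 k l hk hl) (tri2 k l hk hl) (tri3 k l hk hl)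
  · intro u w hc
    exact wWeight_ge _ _ w hc

end kl1

end Bge3

section B1
variable (k : ℕ)

local notation "N1" => 2*k+4

lemma N1_pos : NeZero N1 := ⟨by omega⟩

noncomputable def D1 : Finset (ZMod N1) :=
  ((Finset.Icc 2 (k+1)).image (fun j : ℕ => (j : ZMod N1)) ∪
  (Finset.Icc 2 (k+1)).image (fun j : ℕ => -(j : ZMod N1))) ∪ {((k+2 : ℕ) : ZMod N1)}

lemma mem_D1 {d : ZMod N1} :
    d ∈ D1 k ↔ (∃ j, 2 ≤ j ∧ j ≤ k+1 ∧ ((j : ZMod N1) = d ∨ -(j : ZMod N1) = d)) ∨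
      ((k+2 : ℕ) : ZMod N1) = d := by
  simp only [D1, Finset.mem_union, Finset.mem_image, Finset.mem_Icc, Finset.mem_singleton]
  constructor
  · rintro ((⟨j, ⟨h1, h2⟩, h3⟩ | ⟨j, ⟨h1, h2⟩, h3⟩) | h)
    · exact Or.inl ⟨j, h1, h2, Or.inl h3⟩
    · exact Or.inl ⟨j, h1, h2, Or.inr h3⟩
    · exact Or.inr h.symm
  · rintro (⟨j, h1, h2, h3 | h3⟩ | h)
    · exact Or.inl (Or.inl ⟨j, ⟨h1, h2⟩, h3⟩)
    · exact Or.inl (Or.inr ⟨j, ⟨h1, h2⟩, h3⟩)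
    · exact Or.inr h.symm

lemma D1_sym : ∀ d ∈ D1 k, -d ∈ D1 k := by
  haveI : NeZero N1 := N1_pos k
  intro d hd
  rw [mem_D1] at hd ⊢
  obtain ⟨j, h1, h2, h3 | h3⟩ | h := hd
  · exact Or.inl ⟨j, h1, h2, Or.inr (by rw [h3])⟩
  · exact Or.inl ⟨j, h1, h2, Or.inl (by rw [← h3, neg_neg])⟩
  · refine Or.inr ?_
    rw [← h, neg_cast_eq (i := k+2) (j := k+2) (by omega)]

lemma D1_zero_not_mem : (0 : ZMod N1) ∉ D1 k := by
  haveI : NeZero N1 := N1_pos k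
  rw [mem_D1]
  rintro (⟨j, h1, h2, h3 | h3⟩ | h)
  · have := cast_inj_lt (N := N1) (i := j) (j := 0) (by omega) (by omega) (by simpa using h3)
    omega
  · have hj : (j : ZMod N1) = 0 := by rw [← neg_neg (j : ZMod N1), h3]; simp
    have := cast_inj_lt (N := N1) (i := j) (j := 0) (by omega) (by omega) (by simpa using hj)
    omega
  · have := cast_inj_lt (N := N1) (i := k+2) (j := 0) (by omega) (by omega) (by simpa using h)
    omega

lemma not_mem_D1_one : ((1:ℕ) : ZMod N1) ∉ D1 k := by
  haveI : NeZero N1 := N1_pos k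
  rw [mem_D1]
  rintro (⟨j, h1, h2, h3 | h3⟩ | h)
  · have := cast_inj_lt (N := N1) (i := j) (j := 1) (by omega) (by omega) h3
    omega
  · exact cast_ne_neg_cast (N := N1) (i := 1) (j := j) (by omega) (by omega) h3.symm
  · have := cast_inj_lt (N := N1) (i := k+2) (j := 1) (by omega) (by omega) h
    omega

lemma not_mem_D1_neg_one : -((1:ℕ) : ZMod N1) ∉ D1 k := by
  intro h
  have := D1_sym k _ h
  rw [neg_neg] at this
  exact not_mem_D1_one k this

lemma D1_card (hk : 1 ≤ k) : (D1 k).card = 2*k+1 := by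
  haveI : NeZero N1 := N1_pos k
  have hinj1 : Set.InjOn (fun j : ℕ => (j : ZMod N1)) (Finset.Icc 2 (k+1)) := by
    intro i hi j hj h
    simp only [Finset.coe_Icc, Set.mem_Icc] at hi hj
    exact cast_inj_lt (by omega) (by omega) h
  have hinj2 : Set.InjOn (fun j : ℕ => -(j : ZMod N1)) (Finset.Icc 2 (k+1)) := by
    intro i hi j hj h
    simp only [Finset.coe_Icc, Set.mem_Icc] at hi hj
    exact cast_inj_lt (by omega) (by omega) (neg_injective h)
  have hdisj : Disjoint ((Finset.Icc 2 (k+1)).image (fun j : ℕ => (j : ZMod N1)))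
      ((Finset.Icc 2 (k+1)).image (fun j : ℕ => -(j : ZMod N1))) := by
    rw [Finset.disjoint_left]
    rintro x hx1 hx2
    simp only [Finset.mem_image, Finset.mem_Icc] at hx1 hx2
    obtain ⟨i, hi, rfl⟩ := hx1
    obtain ⟨j, hj, hij⟩ := hx2
    exact cast_ne_neg_cast (by omega) (by omega) hij.symm
  have hdisj2 : Disjoint ((Finset.Icc 2 (k+1)).image (fun j : ℕ => (j : ZMod N1)) ∪
      (Finset.Icc 2 (k+1)).image (fun j : ℕ => -(j : ZMod N1)))
      ({((k+2 : ℕ) : ZMod N1)} : Finset (ZMod N1)) := by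
    rw [Finset.disjoint_right]
    intro x hx1 hx2
    rw [Finset.mem_singleton] at hx1
    subst hx1
    rw [Finset.mem_union] at hx2
    rcases hx2 with hx | hx <;> simp only [Finset.mem_image, Finset.mem_Icc] at hx
    · obtain ⟨j, hj, hjx⟩ := hx
      have := cast_inj_lt (N := N1) (i := j) (j := k+2) (by omega) (by omega) hjx
      omega
    · obtain ⟨j, hj, hjx⟩ := hx
      exact cast_ne_neg_cast (N := N1) (i := k+2) (j := j) (by omega) (by omega) hjx.symm
  rw [D1, Finset.card_union_of_disjoint hdisj2, Finset.card_union_of_disjoint hdisj,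
    Finset.card_image_of_injOn hinj1, Finset.card_image_of_injOn hinj2, Nat.card_Icc,
    Finset.card_singleton]
  omega

/-- the matching `H` for `b = 1` -/
def f1 (x : ZMod N1) : ZMod N1 := if Even x.val then x + 1 else x - 1

lemma N1_even : Even N1 := ⟨k + 2, by ring⟩

lemma flip1' (x : ZMod N1) : Even ((x + 1).val) ↔ ¬ Even x.val := by
  haveI : NeZero N1 := N1_pos k
  exact parity_flip (N1_even k) (by omega) x

lemma flip2' (x : ZMod N1) : Even x.val ↔ ¬ Even ((x - 1).val) := by
  have h := flip1' k (x - 1)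
  rw [show x - 1 + 1 = x by ring] at h
  exact h

lemma f1_invol : Function.Involutive (f1 k) := by
  haveI : NeZero N1 := N1_pos k
  intro x
  by_cases hev : Even x.val
  · rw [show f1 k x = x + 1 by simp [f1, hev]]
    have hA : ¬ Even ((x + 1).val) := by rw [flip1' k]; exact fun h => h hev
    rw [show f1 k (x + 1) = (x + 1) - 1 by simp [f1, hA]]
    ring
  · rw [show f1 k x = x - 1 by simp [f1, hev]]
    have hA : Even ((x - 1).val) := by
      by_contra hc
      exact hev ((flip2' k x).mpr hc)
    rw [show f1 k (x - 1) = (x - 1) + 1 by simp [f1, hA]]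
    ring

lemma f1_ne : ∀ x, f1 k x ≠ x := by
  haveI : NeZero N1 := N1_pos k
  have h10 : ((1:ℕ) : ZMod N1) ≠ ((0:ℕ) : ZMod N1) := by
    intro h
    have := cast_inj_lt (N := N1) (i := 1) (j := 0) (by omega) (by omega) h
    omega
  have h10' : (1 : ZMod N1) ≠ 0 := by exact_mod_cast h10
  intro x
  by_cases hev : Even x.val
  · rw [show f1 k x = x + 1 by simp [f1, hev]]
    intro h; exact h10' (by linear_combination h)
  · rw [show f1 k x = x - 1 by simp [f1, hev]]
    intro h; exact h10' (by linear_combination -h)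

noncomputable def L1 : SimpleGraph (ZMod N1) := circG (D1 k)
noncomputable def H1 : SimpleGraph (ZMod N1) := matchG (f1 k)

lemma L1_nbr_ncard (hk : 1 ≤ k) (v : ZMod N1) :
    ((L1 k).neighborSet v).ncard = 2*k+1 := by
  rw [L1, circG_nbr_ncard _ (D1_sym k) (D1_zero_not_mem k), D1_card k hk]

lemma H1_nbr_ncard (v : ZMod N1) : ((H1 k).neighborSet v).ncard = 1 := by
  rw [H1, matchG_nbr _ (f1_invol k) (f1_ne k), Set.ncard_singleton]

lemma disj_L1_H1 : Disjoint (L1 k) (H1 k) := by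
  haveI : NeZero N1 := N1_pos k
  rw [disjoint_iff_inf_le]
  intro v w h
  obtain ⟨h1, h2⟩ := h
  rw [L1, circG_adj _ (D1_sym k) (D1_zero_not_mem k)] at h1
  rw [H1, matchG_adj _ (f1_invol k) (f1_ne k)] at h2
  subst h2
  by_cases hev : Even v.val
  · rw [show f1 k v = v + 1 by simp [f1, hev],
      show v + 1 - v = ((1:ℕ) : ZMod N1) by push_cast; ring] at h1
    exact not_mem_D1_one k h1
  · rw [show f1 k v = v - 1 by simp [f1, hev],
      show v - 1 - v = -((1:ℕ) : ZMod N1) by push_cast; ring] at h1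
    exact not_mem_D1_neg_one k h1

lemma L1_tri (hk : 1 ≤ k) : ∃ x y z : ZMod N1,
    (L1 k).Adj x y ∧ (L1 k).Adj y z ∧ (L1 k).Adj z x := by
  haveI : NeZero N1 := N1_pos k
  have hadj : ∀ x y : ZMod N1, y - x ∈ D1 k → (L1 k).Adj x y := fun x y h =>
    (circG_adj _ (D1_sym k) (D1_zero_not_mem k) x y).mpr h
  have h2mem : ((2:ℕ) : ZMod N1) ∈ D1 k :=
    (mem_D1 k).mpr (Or.inl ⟨2, by omega, by omega, Or.inl rfl⟩)
  rcases Nat.lt_or_ge k 2 with hk2 | hk2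
  · -- k = 1, N1 = 6 : triangle 0, 2, 4
    refine ⟨0, ((2:ℕ) : ZMod N1), ((4:ℕ) : ZMod N1), ?_, ?_, ?_⟩
    · exact hadj _ _ (by simpa using h2mem)
    · exact hadj _ _ (by
        rw [show ((4:ℕ) : ZMod N1) - ((2:ℕ) : ZMod N1) = ((2:ℕ) : ZMod N1) by
          push_cast; ring]
        exact h2mem)
    · exact hadj _ _ (by
        rw [show (0 : ZMod N1) - ((4:ℕ) : ZMod N1) = -((4:ℕ) : ZMod N1) by ring,
          neg_cast_eq (i := 4) (j := 2) (by omega)]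
        exact h2mem)
  · -- k ≥ 2 : triangle 0, 2, k+4
    refine ⟨0, ((2:ℕ) : ZMod N1), ((k+4:ℕ) : ZMod N1), ?_, ?_, ?_⟩
    · exact hadj _ _ (by simpa using h2mem)
    · exact hadj _ _ (by
        rw [show ((k+4:ℕ) : ZMod N1) - ((2:ℕ) : ZMod N1) = ((k+2:ℕ) : ZMod N1) by
          push_cast; ring]
        exact (mem_D1 k).mpr (Or.inr rfl))
    · exact hadj _ _ (by
        rw [show (0 : ZMod N1) - ((k+4:ℕ) : ZMod N1) = -((k+4:ℕ) : ZMod N1) by ring,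
          neg_cast_eq (i := k+4) (j := k) (by omega)]
        exact (mem_D1 k).mpr (Or.inl ⟨k, by omega, by omega, Or.inl rfl⟩))

lemma exists_b1 (hk : 1 ≤ k) : ∃ L H : SimpleGraph (ZMod N1), IsWGraph L H (2*k+1) 1 3 := by
  obtain ⟨x, y, z, h1, h2, h3⟩ := L1_tri k hk
  refine ⟨L1 k, H1 k, disj_L1_H1 k, L1_nbr_ncard k hk, H1_nbr_ncard k, ?_, ?_⟩
  · refine ⟨x, Walk.cons ((sup_adj _ _ _ _).mpr (Or.inl h1))
      (Walk.cons ((sup_adj _ _ _ _).mpr (Or.inl h2))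
      (Walk.cons ((sup_adj _ _ _ _).mpr (Or.inl h3)) Walk.nil)), ?_, ?_⟩
    · exact triangle_cycle _ _ _
    · exact wWeight_triangle _ _ h1 h2 h3
  · intro u w hc
    exact wWeight_ge _ _ w hc

end B1


/-- For `a ≥ 3` with `a` and `b` odd, there is no `(a,b)`-regular weighted
graph of girth 3 on `a+b+1` vertices, but there is one on `a+b+2` vertices;
hence `n(a,b,3) = a+b+2`. -/
theorem stmt_8 (a b : ℕ) (ha : 3 ≤ a) (hao : Odd a) (hbo : Odd b) :
    (¬ ∃ L H : SimpleGraph (Fin (a + b + 1)), IsWGraph L H a b 3) ∧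
    (∃ L H : SimpleGraph (Fin (a + b + 2)), IsWGraph L H a b 3) ∧
    IsLeast {n : ℕ | ∃ L H : SimpleGraph (Fin n), IsWGraph L H a b 3}
      (a + b + 2) := by
  obtain ⟨k, hk⟩ := hao
  obtain ⟨l, hl⟩ := hbo
  have hk1 : 1 ≤ k := by omega
  subst hk; subst hl
  have hex : ∃ L H : SimpleGraph (Fin ((2*k+1) + (2*l+1) + 2)),
      IsWGraph L H (2*k+1) (2*l+1) 3 := by
    rcases Nat.eq_zero_or_pos l with hl0 | hl1
    · subst hl0
      rw [show (2*k+1) + (2*0+1) + 2 = 2*k+4 by ring, show 2*0+1 = 1 by ring]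
      exact exists_b1 k hk1
    · rw [show (2*k+1) + (2*l+1) + 2 = 2*k+2*l+4 by ring]
      exact exists_b3 k l hk1 hl1
  have hlb : ∀ n : ℕ, (∃ L H : SimpleGraph (Fin n), IsWGraph L H (2*k+1) (2*l+1) 3) →
      (2*k+1) + (2*l+1) + 2 ≤ n := by
    rintro n ⟨L, H, hdisj, hL, hH, ⟨u, w, hc, hw⟩, hmin⟩
    obtain ⟨heven, hge⟩ := lower_bound_core (a := 2*k+1) (b := 2*l+1)
      ⟨k, by ring⟩ L H hdisj hL hH u
    obtain ⟨t, ht⟩ := heven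
    omega
  refine ⟨?_, hex, hex, hlb⟩
  · rintro ⟨L, H, hw⟩
    have := hlb ((2*k+1) + (2*l+1) + 1) ⟨L, H, hw⟩
    omega
end

section
/- Let a and n be integers with a even, n odd, and 2a < n < 5a/2. Then every a-regular graph on n vertices contains a triangle. -/
open Finset SimpleGraph

private lemma chain_walk {V : Type*} {G : SimpleGraph V} (c : ℕ → V) (p : ℕ) :
    ∀ m : ℕ, (∀ t, t < m → G.Adj (c (p + t)) (c (p + t + 1))) →
      ∃ w : G.Walk (c p) (c (p + m)), w.length = m := by
  intro m
  induction m with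
  | zero => exact fun _ => ⟨SimpleGraph.Walk.nil, rfl⟩
  | succ m ih =>
    intro h
    obtain ⟨w, hw⟩ := ih (fun t ht => h t (by omega))
    exact ⟨w.concat (h m (by omega)), by rw [SimpleGraph.Walk.length_concat, hw]⟩

/-- If `a` is even, `n` is odd and `2a < n < 5a/2`, then every `a`-regular
graph on `n` vertices contains a triangle. -/
theorem stmt_10 (a n : ℕ) (ha : a % 2 = 0) (hn : n % 2 = 1)
    (h1 : 2 * a < n) (h2 : 2 * n < 5 * a)
    (G : SimpleGraph (Fin n)) (hreg : ∀ v, (G.neighborSet v).ncard = a) :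
    ∃ x y z : Fin n, G.Adj x y ∧ G.Adj y z ∧ G.Adj x z := by
  classical
  by_contra hfree
  push_neg at hfree
  -- hfree : ∀ x y z, G.Adj x y → G.Adj y z → ¬ G.Adj x z
  have hn0 : 1 ≤ n := by omega
  have ha0 : 1 ≤ a := by omega
  have hdeg : ∀ v, (G.neighborFinset v).card = a := by
    intro v
    rw [← hreg v, SimpleGraph.neighborFinset_def, ← Set.ncard_eq_toFinset_card']
  by_cases hodd : ∃ L, Odd L ∧ ∃ (v : Fin n) (w : G.Walk v v), w.length = L
  · -- there is an odd closed walk; take a minimal one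
    set L := Nat.find hodd with hLdef
    obtain ⟨hLodd, v, w, hwL⟩ := Nat.find_spec hodd
    set c : ℕ → Fin n := w.getVert with hc
    have hc0 : c 0 = v := w.getVert_zero
    have hcL : c L = v := by rw [hc, hLdef, ← hwL]; exact w.getVert_length
    have hadj : ∀ i, i < L → G.Adj (c i) (c (i + 1)) := by
      intro i hi
      exact w.adj_getVert_succ (by omega)
    have hL3 : 3 ≤ L := by
      rcases hLodd with ⟨t, ht⟩
      by_contra hlt
      have hL1 : L = 1 := by omega
      have := hadj 0 (by omega)
      rw [hc0, show (0:ℕ)+1 = L from hL1.symm, hcL] at this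
      exact G.irrefl this
    -- every vertex has at most two "neighbors" among the positions of the walk
    have hbound : ∀ u : Fin n,
        ((Finset.range L).filter (fun i => G.Adj u (c i))).card ≤ 2 := by
      intro u
      by_contra hgt
      push_neg at hgt
      set S := (Finset.range L).filter (fun i => G.Adj u (c i)) with hS
      have hS1 : S.Nonempty := Finset.card_pos.mp (by omega)
      set i := S.min' hS1 with hi
      have hiS : i ∈ S := S.min'_mem hS1
      have hS2 : (S.erase i).Nonempty := by
        apply Finset.card_pos.mp
        rw [Finset.card_erase_of_mem hiS]; omega
      set j := (S.erase i).min' hS2 with hj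
      have hjS' : j ∈ S.erase i := (S.erase i).min'_mem hS2
      have hS3 : ((S.erase i).erase j).Nonempty := by
        apply Finset.card_pos.mp
        rw [Finset.card_erase_of_mem hjS', Finset.card_erase_of_mem hiS]; omega
      set k := ((S.erase i).erase j).min' hS3 with hk
      have hkS'' : k ∈ (S.erase i).erase j := ((S.erase i).erase j).min'_mem hS3
      have hjS : j ∈ S := Finset.mem_of_mem_erase hjS'
      have hkS : k ∈ S := Finset.mem_of_mem_erase (Finset.mem_of_mem_erase hkS'')
      have hij : i < j := lt_of_le_of_ne (S.min'_le j hjS) (Ne.symm (Finset.ne_of_mem_erase hjS'))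
      have hjk : j < k := lt_of_le_of_ne ((S.erase i).min'_le k (Finset.mem_of_mem_erase hkS''))
        (Ne.symm (Finset.ne_of_mem_erase hkS''))
      have hiL : i < L := (Finset.mem_filter.mp hiS).1 |> Finset.mem_range.mp
      have hjL : j < L := (Finset.mem_filter.mp hjS).1 |> Finset.mem_range.mp
      have hkL : k < L := (Finset.mem_filter.mp hkS).1 |> Finset.mem_range.mp
      have hui : G.Adj u (c i) := (Finset.mem_filter.mp hiS).2
      have huj : G.Adj u (c j) := (Finset.mem_filter.mp hjS).2
      have huk : G.Adj u (c k) := (Finset.mem_filter.mp hkS).2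
      -- any arc of the walk gives a walk of the corresponding length
      have harc : ∀ p q : ℕ, p ≤ q → q ≤ L → ∃ w' : G.Walk (c p) (c q), w'.length = q - p := by
        intro p q hpq hqL
        have h := chain_walk (G := G) c p (q - p) (fun t ht => hadj (p + t) (by omega))
        rw [show p + (q - p) = q from by omega] at h
        exact h
      -- key gap fact
      have gapfact : ∀ (x y : Fin n) (m : ℕ), 1 ≤ m → G.Adj u x → G.Adj u y →
          (∃ w' : G.Walk x y, w'.length = m) →
          2 ≤ m ∧ (m % 2 = 1 → L ≤ m + 2) := by
        rintro x y m hm h1' h2' ⟨w', hw'⟩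
        constructor
        · by_contra hlt
          have hm1 : m = 1 := by omega
          have hxy : G.Adj x y := by
            have h := w'.adj_getVert_succ (i := 0) (by omega)
            rw [w'.getVert_zero, show (0:ℕ)+1 = w'.length from by omega,
              w'.getVert_length] at h
            exact h
          exact hfree u x y h1' hxy h2'
        · intro hmo
          by_contra hlt
          push_neg at hlt
          refine Nat.find_min hodd (show m + 2 < L from by omega)
            ⟨Nat.odd_iff.mpr (by omega), u, SimpleGraph.Walk.cons h1' (w'.concat h2'.symm), ?_⟩
          simp [SimpleGraph.Walk.length_cons, SimpleGraph.Walk.length_concat, hw']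
      -- the wrap-around walk from c k to c i
      have hwrap : ∃ w' : G.Walk (c k) (c i), w'.length = L - k + i := by
        obtain ⟨w1, hw1⟩ := harc k L (le_of_lt hkL) le_rfl
        obtain ⟨w2, hw2⟩ := harc 0 i (Nat.zero_le i) (le_of_lt hiL)
        have hLe : c 0 = c L := by rw [hc0, hcL]
        refine ⟨w1.append (w2.copy hLe rfl), ?_⟩
        rw [SimpleGraph.Walk.length_append, SimpleGraph.Walk.length_copy, hw1, hw2]
        omega
      obtain ⟨hg1a, hg1b⟩ := gapfact (c i) (c j) (j - i) (by omega) hui huj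
        (harc i j (le_of_lt hij) (le_of_lt hjL))
      obtain ⟨hg2a, hg2b⟩ := gapfact (c j) (c k) (k - j) (by omega) huj huk
        (harc j k (le_of_lt hjk) (le_of_lt hkL))
      obtain ⟨hg3a, hg3b⟩ := gapfact (c k) (c i) (L - k + i) (by omega) huk hui hwrap
      have hLmod : L % 2 = 1 := Nat.odd_iff.mp hLodd
      have hcases : (j - i) % 2 = 1 ∨ (k - j) % 2 = 1 ∨ (L - k + i) % 2 = 1 := by omega
      rcases hcases with h | h | h
      · have := hg1b h; omega
      · have := hg2b h; omega
      · have := hg3b h; omega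
    -- double counting
    have hsum : L * a ≤ 2 * n := by
      calc L * a = ∑ _i ∈ Finset.range L, a := by
            rw [Finset.sum_const, Finset.card_range, smul_eq_mul]
        _ = ∑ i ∈ Finset.range L, (Finset.univ.filter (fun u => G.Adj u (c i))).card := by
            refine Finset.sum_congr rfl fun i _ => ?_
            rw [← hdeg (c i)]
            congr 1
            ext u
            simp [SimpleGraph.mem_neighborFinset, adj_comm]
        _ = ∑ i ∈ Finset.range L, ∑ u : Fin n, if G.Adj u (c i) then 1 else 0 :=
            Finset.sum_congr rfl fun i _ => Finset.card_filter _ _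
        _ = ∑ u : Fin n, ∑ i ∈ Finset.range L, if G.Adj u (c i) then 1 else 0 :=
            Finset.sum_comm
        _ = ∑ u : Fin n, ((Finset.range L).filter (fun i => G.Adj u (c i))).card :=
            Finset.sum_congr rfl fun u _ => (Finset.card_filter _ _).symm
        _ ≤ ∑ _u : Fin n, 2 := Finset.sum_le_sum fun u _ => hbound u
        _ = 2 * n := by simp [Finset.card_univ, mul_comm]
    have hL5 : L < 5 := by
      by_contra hge
      push_neg at hge
      have : 5 * a ≤ L * a := Nat.mul_le_mul_right a hge
      omega
    have hLmod : L % 2 = 1 := Nat.odd_iff.mp hLodd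
    have hL3' : L = 3 := by omega
    have h01 : G.Adj (c 0) (c 1) := hadj 0 (by omega)
    have h12 : G.Adj (c 1) (c 2) := hadj 1 (by omega)
    have h20 : G.Adj (c 2) (c 0) := by
      have h := hadj 2 (by omega)
      rw [show (2:ℕ)+1 = L from by omega, hcL, ← hc0] at h
      exact h
    exact hfree (c 0) (c 1) (c 2) h01 h12 h20.symm
  · -- no odd closed walk: the graph is "bipartite", contradiction with n odd
    push_neg at hodd
    have heven : ∀ (v : Fin n) (w : G.Walk v v), w.length % 2 = 0 := by
      intro v w
      by_contra hne
      exact hodd w.length (Nat.odd_iff.mpr (by omega)) v w rfl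
    have reach : ∀ v : Fin n, G.Reachable (Quot.out (G.connectedComponentMk v)) v :=
      fun v => SimpleGraph.ConnectedComponent.exact (Quot.out_eq _)
    have hex : ∀ v : Fin n,
        ∃ w : G.Walk (Quot.out (G.connectedComponentMk v)) v, True :=
      fun v => (reach v).elim fun w => ⟨w, trivial⟩
    choose wv _ using hex
    have hflip : ∀ x y : Fin n, G.Adj x y →
        (wv x).length % 2 ≠ (wv y).length % 2 := by
      intro x y hxy heq
      have hroot : Quot.out (G.connectedComponentMk y) = Quot.out (G.connectedComponentMk x) := by
        rw [SimpleGraph.ConnectedComponent.sound hxy.reachable]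
      have hwc : ∃ w : G.Walk (Quot.out (G.connectedComponentMk x))
          (Quot.out (G.connectedComponentMk x)),
          w.length = (wv x).length + (wv y).length + 1 := by
        refine ⟨(wv x).append ((SimpleGraph.Walk.cons hxy (wv y).reverse).copy rfl hroot), ?_⟩
        rw [SimpleGraph.Walk.length_append, SimpleGraph.Walk.length_copy,
          SimpleGraph.Walk.length_cons, SimpleGraph.Walk.length_reverse]
        omega
      obtain ⟨wc, hwcl⟩ := hwc
      have h0 := heven _ wc
      rw [hwcl] at h0
      omega
    -- count edges between the two parity classes
    set A := Finset.univ.filter (fun v : Fin n => (wv v).length % 2 = 0) with hA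
    set B := Finset.univ.filter (fun v : Fin n => (wv v).length % 2 = 1) with hB
    have hABcard : A.card + B.card = n := by
      rw [hA, hB]
      have hBB : Finset.univ.filter (fun v : Fin n => (wv v).length % 2 = 1)
          = Finset.univ.filter (fun v : Fin n => ¬ (wv v).length % 2 = 0) := by
        ext v
        simp only [Finset.mem_filter, Finset.mem_univ, true_and]
        omega
      rw [hBB, Finset.card_filter_add_card_filter_not, Finset.card_univ,
        Fintype.card_fin]
    have hfiber : ∀ y : Fin n, (A.filter (fun x => G.Adj x y)).card
        = if (wv y).length % 2 = 1 then a else 0 := by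
      intro y
      split_ifs with hy
      · rw [← hdeg y]
        congr 1
        ext x
        simp only [hA, Finset.mem_filter, Finset.mem_univ, true_and,
          SimpleGraph.mem_neighborFinset]
        constructor
        · rintro ⟨_, hadj'⟩; exact hadj'.symm
        · intro hadj'
          refine ⟨?_, hadj'.symm⟩
          have h := hflip x y hadj'.symm
          omega
      · rw [Finset.card_eq_zero, Finset.filter_eq_empty_iff]
        rintro x hx hadj'
        rw [hA, Finset.mem_filter] at hx
        have h := hflip x y hadj'
        obtain ⟨-, hx0⟩ := hx
        omega
    have hcountA : a * A.card = a * B.card := by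
      calc a * A.card = ∑ _x ∈ A, a := by rw [Finset.sum_const, smul_eq_mul, mul_comm]
        _ = ∑ x ∈ A, (Finset.univ.filter (fun y => G.Adj x y)).card := by
            refine Finset.sum_congr rfl fun x _ => ?_
            rw [← hdeg x]
            congr 1
            ext u
            simp [SimpleGraph.mem_neighborFinset]
        _ = ∑ x ∈ A, ∑ y : Fin n, if G.Adj x y then 1 else 0 :=
            Finset.sum_congr rfl fun x _ => Finset.card_filter _ _
        _ = ∑ y : Fin n, ∑ x ∈ A, if G.Adj x y then 1 else 0 := Finset.sum_comm
        _ = ∑ y : Fin n, (A.filter (fun x => G.Adj x y)).card :=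
            Finset.sum_congr rfl fun y _ => (Finset.card_filter _ _).symm
        _ = ∑ y : Fin n, if (wv y).length % 2 = 1 then a else 0 :=
            Finset.sum_congr rfl fun y _ => hfiber y
        _ = a * B.card := by
            rw [← Finset.sum_filter, ← hB, Finset.sum_const, smul_eq_mul, mul_comm]
    have hABeq : A.card = B.card := Nat.eq_of_mul_eq_mul_left ha0 hcountA
    omega
end

section
/- Let 3 ≤ a ≤ b with a ≡ b mod 2. Then there exists a weighted graph G = (L,H) on a+b+2 vertices with L a-regular, H b-regular, disjoint edge sets, and girth 4 (minimum cycle weight 4, L-edges weighing 1 and H-edges weighing 2). -/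
open Classical in
lemma list_length_le_sum {V : Type*} (L : SimpleGraph V) (l : List (Sym2 V)) :
    l.length ≤ (l.map fun e => if e ∈ L.edgeSet then 1 else 2).sum := by
  induction l with
  | nil => simp
  | cons e t ih =>
    simp only [List.map_cons, List.sum_cons, List.length_cons]
    have : 1 ≤ if e ∈ L.edgeSet then 1 else 2 := by split <;> omega
    omega

open Classical in
lemma list_length_lt_sum {V : Type*} (L : SimpleGraph V) (l : List (Sym2 V))
    (h : ∃ e ∈ l, e ∉ L.edgeSet) :
    l.length + 1 ≤ (l.map fun e => if e ∈ L.edgeSet then 1 else 2).sum := by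
  induction l with
  | nil => simp at h
  | cons e t ih =>
    simp only [List.map_cons, List.sum_cons, List.length_cons]
    obtain ⟨f, hf, hfL⟩ := h
    rcases List.mem_cons.1 hf with rfl | hft
    · rw [if_neg hfL]
      have := list_length_le_sum L t
      omega
    · have h1 : 1 ≤ if e ∈ L.edgeSet then 1 else 2 := by split <;> omega
      have := ih ⟨f, hft, hfL⟩
      omega

open Classical in
lemma isWGraph_comap {V V' : Type*} (σ : V ≃ V') (L H : SimpleGraph V') {a b g : ℕ}
    (h : IsWGraph L H a b g) :
    IsWGraph (L.comap σ.toEmbedding) (H.comap σ.toEmbedding) a b g := by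
  obtain ⟨hdisj, hL, hH, ⟨u₀, w₀, hw₀, hww₀⟩, hlb⟩ := h
  have hsup : (L.comap σ.toEmbedding) ⊔ (H.comap σ.toEmbedding)
      = (L ⊔ H).comap σ.toEmbedding := by
    ext x y; rfl
  have hedge : ∀ e : Sym2 V, (Sym2.map σ e ∈ L.edgeSet) ↔
      (e ∈ (L.comap σ.toEmbedding).edgeSet) := by
    intro e
    induction e using Sym2.ind with
    | _ x y => simp [SimpleGraph.comap]
  -- iso between the sups
  let φ : ((L.comap σ.toEmbedding) ⊔ (H.comap σ.toEmbedding)) ≃g (L ⊔ H) :=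
    ⟨σ, Iff.rfl⟩
  have hφ : ∀ x, φ x = σ x := fun _ => rfl
  have hφs : ∀ x, φ.symm x = σ.symm x := fun _ => rfl
  have hedge' : ∀ f : Sym2 V', (Sym2.map σ.symm f ∈ (L.comap σ.toEmbedding).edgeSet)
      ↔ f ∈ L.edgeSet := by
    intro f
    induction f using Sym2.ind with
    | _ x y => simp [SimpleGraph.comap]
  have hwt : ∀ (u : V) (w : ((L.comap σ.toEmbedding) ⊔ (H.comap σ.toEmbedding)).Walk u u),
      wWeight L H (w.map φ.toHom) = wWeight (L.comap σ.toEmbedding) (H.comap σ.toEmbedding) w := by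
    intro u w
    unfold wWeight
    rw [SimpleGraph.Walk.edges_map, List.map_map]
    congr 1
    refine List.map_congr_left fun e _ => ?_
    induction e using Sym2.ind with
    | _ x y =>
      simp only [Function.comp_apply, Sym2.map_pair_eq, SimpleGraph.mem_edgeSet]
      have : L.Adj (φ.toHom x) (φ.toHom y) ↔ (L.comap σ.toEmbedding).Adj x y := Iff.rfl
      rw [if_congr this rfl rfl]
  have hwt' : ∀ (u : V') (w : (L ⊔ H).Walk u u),
      wWeight (L.comap σ.toEmbedding) (H.comap σ.toEmbedding) (w.map φ.symm.toHom)
        = wWeight L H w := by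
    intro u w
    unfold wWeight
    rw [SimpleGraph.Walk.edges_map, List.map_map]
    congr 1
    refine List.map_congr_left fun e _ => ?_
    induction e using Sym2.ind with
    | _ x y =>
      simp only [Function.comp_apply, Sym2.map_pair_eq, SimpleGraph.mem_edgeSet]
      have : (L.comap σ.toEmbedding).Adj (φ.symm.toHom x) (φ.symm.toHom y) ↔ L.Adj x y := by
        show L.Adj (σ (σ.symm x)) (σ (σ.symm y)) ↔ L.Adj x y
        simp
      rw [if_congr this rfl rfl]
  refine ⟨?_, ?_, ?_, ?_, ?_⟩
  · rw [disjoint_iff] at hdisj ⊢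
    ext x y
    have := SimpleGraph.ext_iff.1 hdisj
    constructor
    · rintro ⟨h1, h2⟩
      have : (L ⊓ H).Adj (σ x) (σ y) := ⟨h1, h2⟩
      rw [hdisj] at this
      exact this.elim
    · intro h; exact h.elim
  · intro v
    have h1 : (L.comap σ.toEmbedding).neighborSet v = σ.symm '' (L.neighborSet (σ v)) := by
      ext y
      simp only [SimpleGraph.mem_neighborSet, Set.mem_image]
      constructor
      · intro hy; exact ⟨σ y, hy, by simp⟩
      · rintro ⟨z, hz, rfl⟩; simpa [SimpleGraph.comap] using hz
    rw [h1, Set.ncard_image_of_injective _ σ.symm.injective, hL]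
  · intro v
    have h1 : (H.comap σ.toEmbedding).neighborSet v = σ.symm '' (H.neighborSet (σ v)) := by
      ext y
      simp only [SimpleGraph.mem_neighborSet, Set.mem_image]
      constructor
      · intro hy; exact ⟨σ y, hy, by simp⟩
      · rintro ⟨z, hz, rfl⟩; simpa [SimpleGraph.comap] using hz
    rw [h1, Set.ncard_image_of_injective _ σ.symm.injective, hH]
  · refine ⟨σ.symm u₀, w₀.map φ.symm.toHom, ?_, ?_⟩
    · exact hw₀.map φ.symm.injective
    · exact (hwt' u₀ w₀).trans hww₀
  · intro u w hw
    have := hlb (σ u) (w.map φ.toHom) (hw.map φ.injective)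
    rwa [hwt] at this

section Construction

open DihedralGroup

/-- The light difference set: `a` reflections. -/
def SLd (a m : ℕ) : Finset (DihedralGroup m) :=
  (Finset.range a).image (fun i : ℕ => sr (i : ZMod m))

/-- The heavy difference set: everything except `1`, one more reflection, and `SLd`. -/
def SHd (a m : ℕ) [NeZero m] : Finset (DihedralGroup m) :=
  Finset.univ \ (insert 1 (insert (sr (a : ZMod m)) (SLd a m)))

/-- Cayley graph on the dihedral group with connection set `S`. -/
def cay (m : ℕ) (S : Finset (DihedralGroup m)) : SimpleGraph (DihedralGroup m) where
  Adj x y := x ≠ y ∧ (x⁻¹ * y ∈ S ∨ y⁻¹ * x ∈ S)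
  symm := ⟨by rintro x y ⟨h1, h2⟩; exact ⟨h1.symm, h2.symm⟩⟩
  loopless := ⟨by rintro x ⟨h1, _⟩; exact h1 rfl⟩

open Classical in
lemma isWGraph_cay (a m : ℕ) [NeZero m] (ha : 3 ≤ a) (ham : a + 1 ≤ m) :
    IsWGraph (cay m (SLd a m)) (cay m (SHd a m)) a (2 * m - a - 2) 4 := by
  have hinv_sr : ∀ i : ZMod m, (sr i : DihedralGroup m)⁻¹ = sr i := fun i => rfl
  have castinj : ∀ i j : ℕ, i < m → j < m → (i : ZMod m) = (j : ZMod m) → i = j := by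
    intro i j hi hj h
    have := congrArg ZMod.val h
    rwa [ZMod.val_cast_of_lt hi, ZMod.val_cast_of_lt hj] at this
  have hSL : ∀ p : DihedralGroup m, p ∈ SLd a m ↔ ∃ i : ℕ, i < a ∧ p = sr (i : ZMod m) := by
    intro p
    rw [SLd, Finset.mem_image]
    constructor
    · rintro ⟨i, hi, rfl⟩
      exact ⟨i, Finset.mem_range.1 hi, rfl⟩
    · rintro ⟨i, hi, rfl⟩
      exact ⟨i, Finset.mem_range.2 hi, rfl⟩
  have hSLcard : (SLd a m).card = a := by
    rw [SLd, Finset.card_image_of_injOn, Finset.card_range]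
    intro i hi j hj h
    rw [Finset.mem_coe, Finset.mem_range] at hi hj
    exact castinj i j (by omega) (by omega) (by simpa using h)
  have hSLinv : ∀ p ∈ SLd a m, p⁻¹ ∈ SLd a m := by
    intro p hp
    obtain ⟨i, hi, rfl⟩ := (hSL p).1 hp
    rw [hinv_sr]
    exact hp
  have h1SL : (1 : DihedralGroup m) ∉ SLd a m := by
    rw [hSL]
    rintro ⟨i, hi, h⟩
    rw [one_def] at h
    exact absurd h (by intro h'; cases h')
  have heSL : (sr (a : ZMod m) : DihedralGroup m) ∉ SLd a m := by
    rw [hSL]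
    rintro ⟨i, hi, h⟩
    rw [sr.injEq] at h
    have := castinj a i (by omega) (by omega) h
    omega
  have h1e : (1 : DihedralGroup m) ≠ sr (a : ZMod m) := by
    rw [one_def]
    intro h; cases h
  have hSH : ∀ p : DihedralGroup m, p ∈ SHd a m ↔
      ¬(p = 1 ∨ p = sr (a : ZMod m) ∨ p ∈ SLd a m) := by
    intro p
    rw [SHd, Finset.mem_sdiff]
    simp only [Finset.mem_univ, true_and, Finset.mem_insert]
  have hSHcard : (SHd a m).card = 2 * m - a - 2 := by
    rw [SHd, Finset.card_sdiff_of_subset (Finset.subset_univ _), Finset.card_univ,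
      Finset.card_insert_of_notMem (by simp [h1e, h1SL]),
      Finset.card_insert_of_notMem heSL, hSLcard, DihedralGroup.card]
    omega
  have hSHinv : ∀ p ∈ SHd a m, p⁻¹ ∈ SHd a m := by
    intro p hp
    rw [hSH] at hp ⊢
    rintro (h | h | h)
    · exact hp (Or.inl (inv_eq_one.1 h))
    · refine hp (Or.inr (Or.inl ?_))
      rw [← hinv_sr, ← h, inv_inv]
    · refine hp (Or.inr (Or.inr ?_))
      have := hSLinv _ h
      rwa [inv_inv] at this
  have h1SH : (1 : DihedralGroup m) ∉ SHd a m := by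
    rw [hSH]
    intro h
    exact h (Or.inl rfl)
  -- Cayley graph generics
  have cayAdj : ∀ (S : Finset (DihedralGroup m)), (∀ x ∈ S, x⁻¹ ∈ S) →
      (1 : DihedralGroup m) ∉ S →
      ∀ x y : DihedralGroup m, (cay m S).Adj x y ↔ x⁻¹ * y ∈ S := by
    intro S hs h0 x y
    constructor
    · rintro ⟨hne, h | h⟩
      · exact h
      · have := hs _ h
        rwa [mul_inv_rev, inv_inv] at this
    · intro h
      refine ⟨?_, Or.inl h⟩
      rintro rfl
      rw [inv_mul_cancel] at h
      exact h0 h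
  have hLadj := cayAdj _ hSLinv h1SL
  have hHadj := cayAdj _ hSHinv h1SH
  have hdeg : ∀ (S : Finset (DihedralGroup m)) (hs : ∀ x ∈ S, x⁻¹ ∈ S)
      (h0 : (1 : DihedralGroup m) ∉ S) (v : DihedralGroup m),
      ((cay m S).neighborSet v).ncard = S.card := by
    intro S hs h0 v
    have himg : (cay m S).neighborSet v = (fun s => v * s) '' (S : Set (DihedralGroup m)) := by
      ext y
      simp only [SimpleGraph.mem_neighborSet, Set.mem_image, Finset.mem_coe]
      rw [cayAdj S hs h0]
      constructor
      · intro h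
        exact ⟨v⁻¹ * y, h, by rw [mul_inv_cancel_left]⟩
      · rintro ⟨s, hsS, rfl⟩
        rwa [inv_mul_cancel_left]
    rw [himg, Set.ncard_image_of_injective _ (mul_right_injective v), Set.ncard_coe_finset]
  -- parity
  set f : DihedralGroup m → ZMod 2 := fun x => match x with | r _ => 0 | sr _ => 1 with hf
  have h11Z2 : (1 + 1 : ZMod 2) = 0 := by decide
  have hLpar : ∀ x y : DihedralGroup m, (cay m (SLd a m)).Adj x y → f y = f x + 1 := by
    intro x y h
    rw [hLadj] at h
    obtain ⟨i, hi, hsr⟩ := (hSL _).1 h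
    match x, y with
    | r j, r k =>
      rw [show ((r j : DihedralGroup m))⁻¹ = r (-j) from rfl, r_mul_r] at hsr
      exact absurd hsr (by simp)
    | r j, sr k =>
      show (1 : ZMod 2) = 0 + 1
      rw [zero_add]
    | sr j, r k =>
      show (0 : ZMod 2) = 1 + 1
      rw [h11Z2]
    | sr j, sr k =>
      rw [hinv_sr, sr_mul_sr] at hsr
      exact absurd hsr (by simp)
  have hwalkpar : ∀ (u v : DihedralGroup m)
      (w : ((cay m (SLd a m)) ⊔ (cay m (SHd a m))).Walk u v),
      (∀ e ∈ w.edges, e ∈ (cay m (SLd a m)).edgeSet) →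
      f v = f u + (w.length : ZMod 2) := by
    intro u v w
    induction w with
    | nil => intro _; simp
    | @cons u' x v' h p ih =>
      intro hall
      have h1 : s(u', x) ∈ (cay m (SLd a m)).edgeSet := by
        apply hall
        rw [SimpleGraph.Walk.edges_cons]
        exact List.mem_cons_self
      have h2 := ih (fun e he => hall e (by
        rw [SimpleGraph.Walk.edges_cons]
        exact List.mem_cons_of_mem _ he))
      rw [SimpleGraph.mem_edgeSet] at h1
      have h3 := hLpar _ _ h1
      rw [SimpleGraph.Walk.length_cons, h2, h3]
      push_cast
      ring
  -- girth lower bound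
  have hlow : ∀ (u : DihedralGroup m)
      (w : ((cay m (SLd a m)) ⊔ (cay m (SHd a m))).Walk u u),
      w.IsCycle → 4 ≤ wWeight (cay m (SLd a m)) (cay m (SHd a m)) w := by
    intro u w hw
    have h3 := hw.three_le_length
    have hlen : w.edges.length = w.length := SimpleGraph.Walk.length_edges w
    unfold wWeight
    by_cases hall : ∀ e ∈ w.edges, e ∈ (cay m (SLd a m)).edgeSet
    · have hpar0 := hwalkpar u u w hall
      have hz : ((w.length : ℕ) : ZMod 2) = 0 := left_eq_add.1 hpar0
      rw [ZMod.natCast_eq_zero_iff] at hz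
      have hle := list_length_le_sum (cay m (SLd a m)) w.edges
      omega
    · push_neg at hall
      have := list_length_lt_sum (cay m (SLd a m)) w.edges hall
      omega
  -- disjointness
  have hdisjSG : Disjoint (cay m (SLd a m)) (cay m (SHd a m)) := by
    rw [disjoint_iff]
    ext x y
    simp only [SimpleGraph.inf_adj, SimpleGraph.bot_adj, iff_false, not_and]
    intro h1 h2
    rw [hLadj] at h1
    rw [hHadj, hSH] at h2
    exact h2 (Or.inr (Or.inr h1))
  -- the weight-4 cycle 1 — sr 0 — sr 1 — 1
  have h01m : (0 : ZMod m) ≠ (1 : ZMod m) := by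
    intro h
    have := castinj 0 1 (by omega) (by omega) (by simpa using h)
    omega
  have hv0SL : (sr (0 : ZMod m) : DihedralGroup m) ∈ SLd a m :=
    (hSL _).2 ⟨0, by omega, by norm_num⟩
  have hv1SL : (sr (1 : ZMod m) : DihedralGroup m) ∈ SLd a m :=
    (hSL _).2 ⟨1, by omega, by norm_num⟩
  have hadjL01 : (cay m (SLd a m)).Adj 1 (sr 0) := by
    rw [hLadj, inv_one, one_mul]
    exact hv0SL
  have hadjL20 : (cay m (SLd a m)).Adj (sr 1) 1 := by
    rw [hLadj, hinv_sr, one_def, sr_mul_r, add_zero]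
    exact hv1SL
  have hprod : (sr (0 : ZMod m) : DihedralGroup m)⁻¹ * sr 1 = r 1 := by
    rw [hinv_sr, sr_mul_sr, sub_zero]
  have hr1SH : (r (1 : ZMod m) : DihedralGroup m) ∈ SHd a m := by
    rw [hSH]
    rintro (h | h | h)
    · rw [one_def, r.injEq] at h
      exact h01m h.symm
    · exact absurd h (by simp)
    · obtain ⟨i, hi, hsr⟩ := (hSL _).1 h
      exact absurd hsr (by simp)
  have hadjH12 : (cay m (SHd a m)).Adj (sr 0) (sr 1) := by
    rw [hHadj, hprod]
    exact hr1SH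
  have hnadjL12 : ¬ (cay m (SLd a m)).Adj (sr 0) (sr 1) := by
    rw [hLadj, hprod, hSL]
    rintro ⟨i, hi, hsr⟩
    exact absurd hsr (by simp)
  have hne01 : (1 : DihedralGroup m) ≠ sr 0 := by rw [one_def]; intro h; cases h
  have hne02 : (1 : DihedralGroup m) ≠ sr 1 := by rw [one_def]; intro h; cases h
  have hne12 : (sr (0 : ZMod m) : DihedralGroup m) ≠ sr 1 := by
    rw [ne_eq, sr.injEq]
    exact h01m
  have ha01 : ((cay m (SLd a m)) ⊔ (cay m (SHd a m))).Adj 1 (sr 0) :=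
    (SimpleGraph.sup_adj _ _ _ _).2 (Or.inl hadjL01)
  have ha12 : ((cay m (SLd a m)) ⊔ (cay m (SHd a m))).Adj (sr 0) (sr 1) :=
    (SimpleGraph.sup_adj _ _ _ _).2 (Or.inr hadjH12)
  have ha20 : ((cay m (SLd a m)) ⊔ (cay m (SHd a m))).Adj (sr 1) 1 :=
    (SimpleGraph.sup_adj _ _ _ _).2 (Or.inl hadjL20)
  refine ⟨hdisjSG, fun v => by rw [hdeg _ hSLinv h1SL v, hSLcard],
    fun v => by rw [hdeg _ hSHinv h1SH v, hSHcard],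
    ⟨1, SimpleGraph.Walk.cons ha01 (SimpleGraph.Walk.cons ha12
      (SimpleGraph.Walk.cons ha20 SimpleGraph.Walk.nil)), ?_, ?_⟩, hlow⟩
  · rw [SimpleGraph.Walk.isCycle_def]
    refine ⟨?_, by simp, ?_⟩
    · rw [SimpleGraph.Walk.isTrail_def]
      simp only [SimpleGraph.Walk.edges_cons, SimpleGraph.Walk.edges_nil]
      simp [List.nodup_cons, Sym2.eq_iff, hne01, hne02, hne12, hne01.symm, hne02.symm,
        hne12.symm]
    · simp only [SimpleGraph.Walk.support_cons, SimpleGraph.Walk.support_nil, List.tail_cons]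
      simp [hne12, hne02.symm, hne01.symm]
  · unfold wWeight
    simp only [SimpleGraph.Walk.edges_cons, SimpleGraph.Walk.edges_nil, List.map_cons,
      List.map_nil, List.sum_cons, List.sum_nil]
    rw [if_pos ((SimpleGraph.mem_edgeSet _).2 hadjL01),
      if_neg (fun hc => hnadjL12 ((SimpleGraph.mem_edgeSet _).1 hc)),
      if_pos ((SimpleGraph.mem_edgeSet _).2 hadjL20)]
    norm_num

end Construction

/-- For `3 ≤ a ≤ b` with `a ≡ b (mod 2)`, there is an `(a,b)`-regular weighted
graph of girth 4 on `a+b+2` vertices. -/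
theorem stmt_12 (a b : ℕ) (ha : 3 ≤ a) (hab : a ≤ b) (hpar : a % 2 = b % 2) :
    ∃ L H : SimpleGraph (Fin (a + b + 2)), IsWGraph L H a b 4 := by
  set m := (a + b + 2) / 2 with hm
  have hm2 : 2 * m = a + b + 2 := by omega
  haveI : NeZero m := ⟨by omega⟩
  have hcon := isWGraph_cay a m ha (by omega)
  have hb : 2 * m - a - 2 = b := by omega
  rw [hb] at hcon
  have hcard : Fintype.card (Fin (a + b + 2)) = Fintype.card (DihedralGroup m) := by
    rw [Fintype.card_fin, DihedralGroup.card]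
    omega
  let σ : Fin (a + b + 2) ≃ DihedralGroup m := Fintype.equivOfCardEq hcard
  exact ⟨_, _, isWGraph_comap σ _ _ hcon⟩
end

section
/- Let 3 ≤ a ≤ b, both a and b even, and b > 3a/2 − 2. Then there exists a weighted graph G = (L,H) on exactly a+b+1 vertices with L a-regular and triangle-free (girth of L at least 4), H b-regular, and disjoint edge sets, whose girth as a weighted graph is 4. -/
open SimpleGraph

lemma wWeight_ge_length {V : Type*} (L H : SimpleGraph V) {u : V} (w : (L ⊔ H).Walk u u) :
    w.length ≤ wWeight L H w := by
  classical
  have h1 : ((w.edges.map fun _ => (1:ℕ)).sum) ≤ wWeight L H w := by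
    unfold wWeight
    apply List.sum_le_sum
    intro e _
    split <;> omega
  have h2 : (w.edges.map fun _ => (1:ℕ)).sum = w.edges.length := by
    simp [List.map_const]
  rw [h2, w.length_edges] at h1
  exact h1

lemma generic_construction {V : Type*} [Fintype V] [DecidableEq V] (a b : ℕ)
    (hV : Fintype.card V = a + b + 1)
    (ha : 3 ≤ a) (L : SimpleGraph V)
    (hreg : ∀ v, (L.neighborSet v).ncard = a) (hfree : L.CliqueFree 3) :
    IsWGraph L Lᶜ a b 4 ∧ L.CliqueFree 3 := by
  classical
  refine ⟨⟨disjoint_compl_right, hreg, ?_, ?_, ?_⟩, hfree⟩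
  · -- complement regular
    intro v
    have hset : Lᶜ.neighborSet v = (insert v (L.neighborSet v))ᶜ := by
      ext u
      simp only [mem_neighborSet, compl_adj, Set.mem_compl_iff, Set.mem_insert_iff]
      constructor
      · rintro ⟨hne, hnadj⟩ (h | h)
        · exact hne h.symm
        · exact hnadj h
      · intro h
        exact ⟨fun he => h (Or.inl he.symm), fun hadj => h (Or.inr hadj)⟩
    rw [hset]
    have h1 : (insert v (L.neighborSet v)).ncard + ((insert v (L.neighborSet v))ᶜ).ncard
        = Fintype.card V := by
      rw [← Nat.card_eq_fintype_card]
      exact Set.ncard_add_ncard_compl _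
    have h2 : (insert v (L.neighborSet v)).ncard = a + 1 := by
      rw [Set.ncard_insert_of_notMem (by simp) (Set.toFinite _), hreg]
    omega
  · -- existence of weight-4 cycle
    have hne : Nonempty V := Fintype.card_pos_iff.mp (by omega)
    obtain ⟨x⟩ := hne
    have h2 : 1 < (L.neighborSet x).ncard := by rw [hreg]; omega
    obtain ⟨u, y, hu, hy, huy⟩ := (Set.one_lt_ncard_iff (Set.toFinite _)).mp h2
    rw [mem_neighborSet] at hu hy
    have hux : L.Adj u x := hu.symm
    have hxy : L.Adj x y := hy
    have hnyu : ¬ L.Adj y u := by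
      intro hadj
      exact hfree {u, x, y} (is3Clique_triple_iff.mpr ⟨hux, hadj.symm, hxy⟩)
    have hyu : Lᶜ.Adj y u := ⟨huy.symm ∘ Eq.symm ∘ Eq.symm, hnyu⟩
    have A1 : (L ⊔ Lᶜ).Adj u x := (sup_adj _ _ _ _).mpr (Or.inl hux)
    have A2 : (L ⊔ Lᶜ).Adj x y := (sup_adj _ _ _ _).mpr (Or.inl hxy)
    have A3 : (L ⊔ Lᶜ).Adj y u := (sup_adj _ _ _ _).mpr (Or.inr hyu)
    have hne1 : u ≠ x := hux.ne
    have hne2 : x ≠ y := hxy.ne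
    have hne3 : y ≠ u := fun h => huy h.symm
    refine ⟨u, Walk.cons A1 (Walk.cons A2 (Walk.cons A3 Walk.nil)), ?_, ?_⟩
    · rw [Walk.isCycle_def]
      refine ⟨?_, by simp, ?_⟩
      · rw [Walk.isTrail_def]
        simp only [Walk.edges_cons, Walk.edges_nil, List.nodup_cons, List.mem_cons,
          List.not_mem_nil, or_false, List.mem_singleton, List.nodup_nil, and_true,
          Sym2.eq_iff]
        tauto
      · simp only [Walk.support_cons, Walk.support_nil, List.tail_cons, List.nodup_cons,
          List.mem_cons, List.not_mem_nil, or_false, List.mem_singleton, List.nodup_nil,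
          and_true]
        tauto
    · unfold wWeight
      simp only [Walk.edges_cons, Walk.edges_nil, List.map_cons, List.map_nil, List.sum_cons,
        List.sum_nil]
      rw [if_pos ((mem_edgeSet L).mpr hux), if_pos ((mem_edgeSet L).mpr hxy),
        if_neg (fun h => hnyu ((mem_edgeSet L).mp h))]
      norm_num
  · -- lower bound
    intro u w hc
    have h3 : 3 ≤ w.length := hc.three_le_length
    rcases Nat.lt_or_ge w.length 4 with h4 | h4
    · have hlen : w.length = 3 := by omega
      clear h3 h4 hc
      cases w with
      | nil => simp at hlen
      | cons A1 p =>
        cases p with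
        | nil => simp at hlen
        | cons A2 p2 =>
          cases p2 with
          | nil => simp at hlen
          | cons A3 p3 =>
            cases p3 with
            | cons A4 p4 => simp [Walk.length_cons] at hlen
            | nil =>
              unfold wWeight
              simp only [Walk.edges_cons, Walk.edges_nil, List.map_cons, List.map_nil,
                List.sum_cons, List.sum_nil]
              rename_i x y
              by_cases e1 : s(u, x) ∈ L.edgeSet
              · by_cases e2 : s(x, y) ∈ L.edgeSet
                · by_cases e3 : s(y, u) ∈ L.edgeSet
                  · exfalso
                    have h1 : L.Adj u x := (mem_edgeSet L).mp e1
                    have h2 : L.Adj x y := (mem_edgeSet L).mp e2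
                    have h3 : L.Adj y u := (mem_edgeSet L).mp e3
                    exact hfree {u, x, y} (is3Clique_triple_iff.mpr ⟨h1, h3.symm, h2⟩)
                  · rw [if_pos e1, if_pos e2, if_neg e3]; norm_num
                · rw [if_pos e1, if_neg e2]; split <;> norm_num
              · rw [if_neg e1]; split <;> split <;> norm_num
    · calc 4 ≤ w.length := h4
        _ ≤ wWeight L Lᶜ w := wWeight_ge_length L Lᶜ w


lemma int_dvd_small {n : ℕ} {σ : ℤ} (hd : (n:ℤ) ∣ σ) (h1 : -(n:ℤ) < σ) (h2 : σ < n) :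
    σ = 0 := by
  rcases hd with ⟨c, rfl⟩
  have hn0 : (0:ℤ) ≤ n := by positivity
  rcases lt_trichotomy c 0 with h | rfl | h
  · have := mul_le_mul_of_nonneg_left (by omega : c ≤ -1) hn0
    linarith
  · ring
  · have := mul_le_mul_of_nonneg_left (by omega : (1:ℤ) ≤ c) hn0
    linarith

section circulant
variable (n t : ℕ)

def oddFin (n t : ℕ) : Finset (ZMod n) :=
  ((Finset.range t).image fun k => ((2*k+1 : ℕ) : ZMod n)) ∪
  ((Finset.range t).image fun k => -((2*k+1 : ℕ) : ZMod n))

def circL (n t : ℕ) : SimpleGraph (ZMod n) :=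
  SimpleGraph.fromRel (fun x y => x - y ∈ oddFin n t)

variable {n t} (ht : 1 ≤ t) (hn : 6*t - 1 ≤ n) [NeZero n]

set_option linter.unusedSectionVars false

lemma oddFin_mem {s : ZMod n} (hs : s ∈ oddFin n t) :
    ∃ (e : ℤ) (k : ℕ), (e = 1 ∨ e = -1) ∧ k < t ∧ s = ((e * (2*k+1) : ℤ) : ZMod n) := by
  rw [oddFin, Finset.mem_union, Finset.mem_image, Finset.mem_image] at hs
  rcases hs with ⟨k, hk, hs⟩ | ⟨k, hk, hs⟩
  · exact ⟨1, k, Or.inl rfl, Finset.mem_range.mp hk, by rw [← hs]; push_cast; ring⟩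
  · exact ⟨-1, k, Or.inr rfl, Finset.mem_range.mp hk, by rw [← hs]; push_cast; ring⟩

include ht hn

lemma oddFin_zero : (0 : ZMod n) ∉ oddFin n t := by
  intro h
  obtain ⟨e, k, he, hk, h0⟩ := oddFin_mem h
  have hd : (n:ℤ) ∣ e * (2*k+1) := by
    rw [← ZMod.intCast_zmod_eq_zero_iff_dvd]
    exact h0.symm
  have hz : (e * (2*k+1) : ℤ) = 0 := by
    apply int_dvd_small hd <;> rcases he with rfl | rfl <;> push_cast <;> omega
  rcases he with rfl | rfl <;> omega

lemma oddFin_neg {s : ZMod n} (hs : s ∈ oddFin n t) : -s ∈ oddFin n t := by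
  rw [oddFin, Finset.mem_union, Finset.mem_image, Finset.mem_image] at hs ⊢
  rcases hs with ⟨k, hk, hs⟩ | ⟨k, hk, hs⟩
  · exact Or.inr ⟨k, hk, by rw [hs]⟩
  · exact Or.inl ⟨k, hk, by rw [← hs, neg_neg]⟩

lemma circL_adj {x y : ZMod n} : (circL n t).Adj x y ↔ x - y ∈ oddFin n t := by
  rw [circL, fromRel_adj]
  constructor
  · rintro ⟨hne, h | h⟩
    · exact h
    · have := oddFin_neg ht hn h
      rwa [neg_sub] at this
  · intro h
    have hne : x ≠ y := by
      rintro rfl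
      rw [sub_self] at h
      exact oddFin_zero ht hn h
    exact ⟨hne, Or.inl h⟩

lemma oddFin_card : (oddFin n t).card = 2*t := by
  rw [oddFin, Finset.card_union_of_disjoint, Finset.card_image_of_injOn,
    Finset.card_image_of_injOn, Finset.card_range]
  · ring
  · intro k1 h1 k2 h2 he
    rw [Finset.mem_coe, Finset.mem_range] at h1 h2
    replace he : -((2*k1+1 : ℕ) : ZMod n) = -((2*k2+1 : ℕ) : ZMod n) := he
    rw [neg_inj] at he
    have e1 : ((2*k1+1 : ℕ) : ZMod n).val = 2*k1+1 := ZMod.val_cast_of_lt (by omega)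
    have e2 : ((2*k2+1 : ℕ) : ZMod n).val = 2*k2+1 := ZMod.val_cast_of_lt (by omega)
    rw [he, e2] at e1
    omega
  · intro k1 h1 k2 h2 he
    rw [Finset.mem_coe, Finset.mem_range] at h1 h2
    replace he : ((2*k1+1 : ℕ) : ZMod n) = ((2*k2+1 : ℕ) : ZMod n) := he
    have e1 : ((2*k1+1 : ℕ) : ZMod n).val = 2*k1+1 := ZMod.val_cast_of_lt (by omega)
    have e2 : ((2*k2+1 : ℕ) : ZMod n).val = 2*k2+1 := ZMod.val_cast_of_lt (by omega)
    rw [he, e2] at e1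
    omega
  · rw [Finset.disjoint_left]
    intro s hs1 hs2
    rw [Finset.mem_image] at hs1 hs2
    obtain ⟨k1, hk1, he1⟩ := hs1
    obtain ⟨k2, hk2, he2⟩ := hs2
    rw [Finset.mem_range] at hk1 hk2
    have h0 : (((2*k1+1) + (2*k2+1) : ℕ) : ZMod n) = 0 := by
      push_cast at he1 he2 ⊢
      linear_combination he1 - he2
    rw [ZMod.natCast_eq_zero_iff] at h0
    have := Nat.le_of_dvd (by omega) h0
    omega

lemma circL_card (v : ZMod n) : ((circL n t).neighborSet v).ncard = 2*t := by
  have himg : (circL n t).neighborSet v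
      = (fun s => v - s) '' ((oddFin n t : Finset (ZMod n)) : Set (ZMod n)) := by
    ext y
    rw [mem_neighborSet, circL_adj ht hn]
    constructor
    · intro h
      exact ⟨v - y, h, by ring⟩
    · rintro ⟨s, hs, rfl⟩
      simpa using hs
  rw [himg, Set.ncard_image_of_injective _ (fun s1 s2 h => by simpa using h),
    Set.ncard_coe_finset]
  exact oddFin_card ht hn

lemma circL_free : (circL n t).CliqueFree 3 := by
  classical
  intro s hs
  rw [is3Clique_iff] at hs
  obtain ⟨x, y, z, hxy, hxz, hyz, -⟩ := hs
  rw [circL_adj ht hn] at hxy hxz hyz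
  obtain ⟨e1, k1, he1, hk1, h1⟩ := oddFin_mem hxy
  obtain ⟨e2, k2, he2, hk2, h2⟩ := oddFin_mem hyz
  obtain ⟨e3, k3, he3, hk3, h3⟩ := oddFin_mem hxz
  have h0 : ((e1*(2*k1+1) + e2*(2*k2+1) - e3*(2*k3+1) : ℤ) : ZMod n) = 0 := by
    push_cast at h1 h2 h3 ⊢
    linear_combination -h1 - h2 + h3
  rw [ZMod.intCast_zmod_eq_zero_iff_dvd] at h0
  have hz : (e1*(2*k1+1) + e2*(2*k2+1) - e3*(2*k3+1) : ℤ) = 0 := by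
    apply int_dvd_small h0 <;>
      rcases he1 with rfl | rfl <;> rcases he2 with rfl | rfl <;> rcases he3 with rfl | rfl <;>
      push_cast <;> omega
  rcases he1 with rfl | rfl <;> rcases he2 with rfl | rfl <;> rcases he3 with rfl | rfl <;>
    omega

end circulant


lemma ncard_union_ranges {α β γ : Type*} [Fintype α] [Fintype β]
    (f : α → γ) (g : β → γ) (hf : Function.Injective f) (hg : Function.Injective g)
    (hd : ∀ a b, f a ≠ g b) :
    (Set.range f ∪ Set.range g).ncard = Fintype.card α + Fintype.card β := by
  rw [Set.ncard_union_eq _ (Set.toFinite _) (Set.toFinite _)]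
  · rw [← Set.image_univ, ← Set.image_univ, Set.ncard_image_of_injective _ hf,
      Set.ncard_image_of_injective _ hg, Set.ncard_univ, Set.ncard_univ,
      Nat.card_eq_fintype_card, Nat.card_eq_fintype_card]
  · rw [Set.disjoint_left]
    rintro x ⟨a, rfl⟩ ⟨b, hb⟩
    exact hd a b hb.symm

section pentagon
variable (t m : ℕ)

abbrev PV (t m : ℕ) : Type := Fin (t-m) ⊕ (Fin t ⊕ (Fin (t+m) ⊕ (Fin (t+m) ⊕ Fin t)))

def em0 : Fin (t-m) → PV t m := Sum.inl
def em1 : Fin t → PV t m := fun x => Sum.inr (Sum.inl x)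
def em2 : Fin (t+m) → PV t m := fun x => Sum.inr (Sum.inr (Sum.inl x))
def em3 : Fin (t+m) → PV t m := fun x => Sum.inr (Sum.inr (Sum.inr (Sum.inl x)))
def em4 : Fin t → PV t m := fun x => Sum.inr (Sum.inr (Sum.inr (Sum.inr x)))

def circP (i j : Fin (t+m)) : Prop :=
  (i.val ≤ j.val ∧ j.val < i.val + t) ∨ (j.val < i.val ∧ j.val + (t+m) < i.val + t)

def pentR : PV t m → PV t m → Prop
  | Sum.inl _, Sum.inr (Sum.inl _) => True
  | Sum.inr (Sum.inl _), Sum.inr (Sum.inr (Sum.inl _)) => True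
  | Sum.inr (Sum.inr (Sum.inl i)), Sum.inr (Sum.inr (Sum.inr (Sum.inl j))) => circP t m i j
  | Sum.inr (Sum.inr (Sum.inr (Sum.inl _))), Sum.inr (Sum.inr (Sum.inr (Sum.inr _))) => True
  | Sum.inr (Sum.inr (Sum.inr (Sum.inr _))), Sum.inl _ => True
  | _, _ => False

def pentL : SimpleGraph (PV t m) := SimpleGraph.fromRel (pentR t m)

def gfun (i : Fin (t+m)) (k : Fin t) : Fin (t+m) :=
  if h : i.val + k.val < t+m then ⟨i.val + k.val, h⟩
  else ⟨i.val + k.val - (t+m), by have := i.isLt; have := k.isLt; omega⟩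

def hfun (j : Fin (t+m)) (k : Fin t) : Fin (t+m) :=
  if h : k.val ≤ j.val then ⟨j.val - k.val, by have := j.isLt; omega⟩
  else ⟨j.val + (t+m) - k.val, by have := j.isLt; have := k.isLt; omega⟩

variable {t m}

lemma gfun_inj (i : Fin (t+m)) : Function.Injective (gfun t m i) := by
  intro k1 k2 h
  have b1 := k1.isLt; have b2 := k2.isLt; have bi := i.isLt
  apply Fin.ext
  simp only [gfun] at h
  split_ifs at h <;> simp only [Fin.mk.injEq] at h <;> omega

lemma hfun_inj (j : Fin (t+m)) : Function.Injective (hfun t m j) := by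
  intro k1 k2 h
  have b1 := k1.isLt; have b2 := k2.isLt; have bj := j.isLt
  apply Fin.ext
  simp only [hfun] at h
  split_ifs at h <;> simp only [Fin.mk.injEq] at h <;> omega

lemma circP_gfun_iff (i j : Fin (t+m)) : circP t m i j ↔ ∃ k, gfun t m i k = j := by
  have bi := i.isLt; have bj := j.isLt
  constructor
  · rintro (⟨h1, h2⟩ | ⟨h1, h2⟩)
    · refine ⟨⟨j.val - i.val, by omega⟩, ?_⟩
      simp only [gfun]
      rw [dif_pos (by omega)]
      apply Fin.ext; simp; omega
    · refine ⟨⟨j.val + (t+m) - i.val, by omega⟩, ?_⟩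
      simp only [gfun]
      rw [dif_neg (by omega)]
      apply Fin.ext; simp; omega
  · rintro ⟨k, rfl⟩
    have bk := k.isLt
    simp only [gfun, circP]
    split_ifs with h <;> simp <;> try omega

lemma circP_hfun_iff (i j : Fin (t+m)) : circP t m i j ↔ ∃ k, hfun t m j k = i := by
  have bi := i.isLt; have bj := j.isLt
  constructor
  · rintro (⟨h1, h2⟩ | ⟨h1, h2⟩)
    · refine ⟨⟨j.val - i.val, by omega⟩, ?_⟩
      simp only [hfun]
      rw [dif_pos (by omega)]
      apply Fin.ext; simp; omega
    · refine ⟨⟨j.val + (t+m) - i.val, by omega⟩, ?_⟩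
      simp only [hfun]
      rw [dif_neg (by omega)]
      apply Fin.ext; simp; omega
  · rintro ⟨k, rfl⟩
    have bk := k.isLt
    simp only [hfun, circP]
    split_ifs with h <;> simp <;> try omega
end pentagon

section degrees
variable (t m : ℕ)

lemma nbr0 (u : Fin (t-m)) : (pentL t m).neighborSet (em0 t m u)
    = Set.range (em1 t m) ∪ Set.range (em4 t m) := by
  ext w
  rcases w with x | (x | (x | (x | x))) <;>
    simp [pentL, fromRel_adj, pentR, em0, em1, em2, em3, em4]

lemma nbr1 (u : Fin t) : (pentL t m).neighborSet (em1 t m u)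
    = Set.range (em0 t m) ∪ Set.range (em2 t m) := by
  ext w
  rcases w with x | (x | (x | (x | x))) <;>
    simp [pentL, fromRel_adj, pentR, em0, em1, em2, em3, em4]

lemma nbr4 (u : Fin t) : (pentL t m).neighborSet (em4 t m u)
    = Set.range (em3 t m) ∪ Set.range (em0 t m) := by
  ext w
  rcases w with x | (x | (x | (x | x))) <;>
    simp [pentL, fromRel_adj, pentR, em0, em1, em2, em3, em4]

lemma nbr2 (i : Fin (t+m)) : (pentL t m).neighborSet (em2 t m i)
    = Set.range (em1 t m) ∪ Set.range (em3 t m ∘ gfun t m i) := by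
  ext w
  rcases w with x | (x | (x | (x | x))) <;>
    simp [pentL, fromRel_adj, pentR, em0, em1, em2, em3, em4, Function.comp]
  exact circP_gfun_iff i x

lemma nbr3 (j : Fin (t+m)) : (pentL t m).neighborSet (em3 t m j)
    = Set.range (em4 t m) ∪ Set.range (em2 t m ∘ hfun t m j) := by
  ext w
  rcases w with x | (x | (x | (x | x))) <;>
    simp [pentL, fromRel_adj, pentR, em0, em1, em2, em3, em4, Function.comp]
  · exact circP_hfun_iff x j

variable {t m}

lemma em0_inj : Function.Injective (em0 t m) := fun x y h => by simpa [em0] using h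
lemma em1_inj : Function.Injective (em1 t m) := fun x y h => by simpa [em1] using h
lemma em2_inj : Function.Injective (em2 t m) := fun x y h => by simpa [em2] using h
lemma em3_inj : Function.Injective (em3 t m) := fun x y h => by simpa [em3] using h
lemma em4_inj : Function.Injective (em4 t m) := fun x y h => by simpa [em4] using h

lemma pent_reg (hm : m ≤ t) : ∀ v, ((pentL t m).neighborSet v).ncard = 2*t := by
  intro v
  rcases v with u | (u | (u | (u | u)))
  · show ((pentL t m).neighborSet (em0 t m u)).ncard = 2*t
    rw [nbr0, ncard_union_ranges _ _ em1_inj em4_inj (by simp [em1, em4])]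
    simp; omega
  · show ((pentL t m).neighborSet (em1 t m u)).ncard = 2*t
    rw [nbr1, ncard_union_ranges _ _ em0_inj em2_inj (by simp [em0, em2])]
    simp; omega
  · show ((pentL t m).neighborSet (em2 t m u)).ncard = 2*t
    rw [nbr2, ncard_union_ranges _ _ em1_inj (em3_inj.comp (gfun_inj u)) (by simp [em1, em3])]
    simp; omega
  · show ((pentL t m).neighborSet (em3 t m u)).ncard = 2*t
    rw [nbr3, ncard_union_ranges _ _ em4_inj (em2_inj.comp (hfun_inj u)) (by simp [em4, em2])]
    simp; omega
  · show ((pentL t m).neighborSet (em4 t m u)).ncard = 2*t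
    rw [nbr4, ncard_union_ranges _ _ em3_inj em0_inj (by simp [em3, em0])]
    simp; omega

lemma pent_free : (pentL t m).CliqueFree 3 := by
  classical
  intro s hs
  rw [is3Clique_iff] at hs
  obtain ⟨x, y, z, h1, h2, h3, -⟩ := hs
  rcases x with a | (a | (a | (a | a))) <;> rcases y with b | (b | (b | (b | b))) <;>
    rcases z with c | (c | (c | (c | c))) <;>
    simp_all [pentL, fromRel_adj, pentR]

end degrees


lemma transport_graph {α β : Type*} [Fintype α] [Fintype β] (e : α ≃ β) (G : SimpleGraph α)
    (a : ℕ) (hreg : ∀ v, (G.neighborSet v).ncard = a) (hfree : G.CliqueFree 3) :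
    ∃ L : SimpleGraph β, (∀ v, (L.neighborSet v).ncard = a) ∧ L.CliqueFree 3 := by
  refine ⟨G.comap e.symm, ?_, ?_⟩
  · intro v
    have himg : (G.comap e.symm).neighborSet v = e '' (G.neighborSet (e.symm v)) := by
      ext u
      simp only [mem_neighborSet, comap_adj, Set.mem_image]
      constructor
      · intro h
        exact ⟨e.symm u, h, by simp⟩
      · rintro ⟨w, hw, rfl⟩
        simpa using hw
    rw [himg, Set.ncard_image_of_injective _ e.injective, hreg]
  · exact SimpleGraph.CliqueFree.comap ⟨(SimpleGraph.Embedding.comap e.symm.toEmbedding G).toCopy⟩ hfree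

def pentEquiv (t m N : ℕ) (h : (t-m) + (t + ((t+m) + ((t+m) + t))) = N) : PV t m ≃ Fin N :=
  ((Equiv.sumCongr (Equiv.refl (Fin (t-m)))
    ((Equiv.sumCongr (Equiv.refl (Fin t))
      ((Equiv.sumCongr (Equiv.refl (Fin (t+m))) finSumFinEquiv).trans finSumFinEquiv)).trans
        finSumFinEquiv)).trans finSumFinEquiv).trans (finCongr h)


/-- For `3 ≤ a ≤ b` both even with `b > 3a/2 - 2`, there is an `(a,b)`-regular
weighted graph of girth 4 on exactly `a+b+1` vertices whose light subgraph is
triangle-free. -/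
theorem stmt_14 (a b : ℕ) (ha : 3 ≤ a) (hab : a ≤ b)
    (hae : a % 2 = 0) (hbe : b % 2 = 0) (hbig : 3 * a / 2 - 2 < b) :
    ∃ L H : SimpleGraph (Fin (a + b + 1)),
      IsWGraph L H a b 4 ∧ L.CliqueFree 3 := by
  haveI : NeZero (a+b+1) := ⟨by omega⟩
  have hat : a = 2*(a/2) := by omega
  set t := a/2 with htdef
  have ht : 1 ≤ t := by omega
  have hcard : Fintype.card (Fin (a+b+1)) = a + b + 1 := by simp
  by_cases hcase : 2*a - 2 ≤ b
  · -- circulant case: n ≥ 6t - 1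
    have h6 : 6*t - 1 ≤ a+b+1 := by omega
    let L : SimpleGraph (Fin (a+b+1)) := circL (a+b+1) t
    have hreg : ∀ v, (L.neighborSet v).ncard = a := by
      intro v
      exact (circL_card ht h6 v).trans (by omega)
    have hfree : L.CliqueFree 3 := circL_free ht h6
    exact ⟨L, Lᶜ, generic_construction a b hcard ha L hreg hfree⟩
  · -- pentagon case
    have hble : b ≤ 2*a - 3 := by omega
    have hb3 : 3*t - 1 ≤ b := by omega
    set m := b + 1 - 3*t with hmdef
    have hm : m ≤ t := by omega
    have hsum : (t-m) + (t + ((t+m) + ((t+m) + t))) = a+b+1 := by omega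
    obtain ⟨L, hreg, hfree⟩ := transport_graph (pentEquiv t m (a+b+1) hsum) (pentL t m) a
      (fun v => (pent_reg hm v).trans (by omega)) pent_free
    exact ⟨L, Lᶜ, generic_construction a b hcard ha L hreg hfree⟩
end
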